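/- arXiv:2102.09967 — 5 statements merged into one kernel-verified Lean document; each statement's English description precedes it below -/
import Mathlib

section
/- Let H be an inner product space and v_1, ..., v_N elements of H of norm at most 1. Then ‖(1/N) ∑_{n=1}^N v_n‖² ≤ (2/N) ∑_{m=1}^N Re((1/N) ∑_{n=1}^{N-m} ⟨v_{n+m}, v_n⟩) + 1/N. -/
open Filter

/-- **Van der Corput-type averaging inequality.** If `v 1, ..., v N` are vectors of norm
at most 1 in an inner product space, then
`‖(1/N) ∑ v n‖² ≤ (2/N) ∑_{m=1}^N Re((1/N) ∑_{n=1}^{N-m} ⟨v (n+m), v n⟩) + 1/N`. -/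
theorem stmt0 {H : Type*} [NormedAddCommGroup H] [InnerProductSpace ℂ H]
    (N : ℕ) (hN : 0 < N) (v : ℕ → H) (hv : ∀ n ∈ Finset.Icc 1 N, ‖v n‖ ≤ 1) :
    ‖(N : ℝ)⁻¹ • ∑ n ∈ Finset.Icc 1 N, v n‖ ^ 2 ≤
      2 / (N : ℝ) * ∑ m ∈ Finset.Icc 1 N,
        ((N : ℝ)⁻¹ * ∑ n ∈ Finset.Icc 1 (N - m), (inner ℂ (v (n + m)) (v n) : ℂ).re)
      + 1 / (N : ℝ) := by
  classical
  set S := ∑ n ∈ Finset.Icc 1 N, v n with hS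
  set F : ℕ × ℕ → ℝ := fun p => (inner ℂ (v p.1) (v p.2) : ℂ).re with hF
  set P := Finset.Icc 1 N ×ˢ Finset.Icc 1 N with hP
  have hsymm : ∀ i j, (inner ℂ (v i) (v j) : ℂ).re = (inner ℂ (v j) (v i) : ℂ).re :=
    fun i j => inner_re_symm (𝕜 := ℂ) (v i) (v j)
  have expand : ‖S‖ ^ 2 = ∑ p ∈ P, F p := by
    rw [norm_sq_eq_re_inner (𝕜 := ℂ), hS, sum_inner]
    rw [map_sum, hP, Finset.sum_product]
    refine Finset.sum_congr rfl fun i _ => ?_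
    rw [inner_sum, map_sum]
    rfl
  -- split P into lower, upper, diagonal
  have hsplit : ∑ p ∈ P, F p =
      (∑ p ∈ P.filter (fun p => p.2 < p.1), F p)
      + ((∑ p ∈ P.filter (fun p => ¬ p.2 < p.1 ∧ p.1 < p.2), F p)
        + ∑ p ∈ P.filter (fun p => ¬ p.2 < p.1 ∧ ¬ p.1 < p.2), F p) := by
    rw [← Finset.filter_filter, ← Finset.filter_filter,
      Finset.sum_filter_add_sum_filter_not,
      Finset.sum_filter_add_sum_filter_not]
  -- the upper sum equals the lower sum
  have hupper : ∑ p ∈ P.filter (fun p => ¬ p.2 < p.1 ∧ p.1 < p.2), F p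
      = ∑ p ∈ P.filter (fun p => p.2 < p.1), F p := by
    refine Finset.sum_nbij' (fun p => (p.2, p.1)) (fun p => (p.2, p.1)) ?_ ?_ ?_ ?_ ?_
    · intro p hp
      simp only [Finset.mem_filter, hP, Finset.mem_product, Finset.mem_Icc] at hp ⊢
      omega
    · intro p hp
      simp only [Finset.mem_filter, hP, Finset.mem_product, Finset.mem_Icc] at hp ⊢
      omega
    · intro p _; rfl
    · intro p _; rfl
    · intro p _; exact hsymm p.1 p.2
  -- diagonal: p.1 = p.2
  have hdiagset : P.filter (fun p => ¬ p.2 < p.1 ∧ ¬ p.1 < p.2)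
      = (Finset.Icc 1 N).image (fun n => (n, n)) := by
    ext ⟨a, b⟩
    simp only [Finset.mem_filter, hP, Finset.mem_product, Finset.mem_image, Finset.mem_Icc,
      Prod.ext_iff]
    constructor
    · rintro ⟨⟨h1, h2⟩, h3, h4⟩
      exact ⟨a, ⟨h1.1, h1.2⟩, rfl, by omega⟩
    · rintro ⟨n, hn, rfl, rfl⟩
      omega
  have hdiag : ∑ p ∈ P.filter (fun p => ¬ p.2 < p.1 ∧ ¬ p.1 < p.2), F p ≤ N := by
    rw [hdiagset, Finset.sum_image (by intro a _ b _ h; exact (Prod.ext_iff.mp h).1)]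
    calc ∑ n ∈ Finset.Icc 1 N, F (n, n)
        ≤ ∑ n ∈ Finset.Icc 1 N, 1 := by
          refine Finset.sum_le_sum fun n hn => ?_
          have : F (n, n) = ‖v n‖ ^ 2 := (norm_sq_eq_re_inner (𝕜 := ℂ) (v n)).symm
          rw [this]
          exact pow_le_one₀ (norm_nonneg _) (hv n hn)
      _ = N := by simp
  have hlower : ∑ m ∈ Finset.Icc 1 N, ∑ n ∈ Finset.Icc 1 (N - m),
      (inner ℂ (v (n + m)) (v n) : ℂ).re
      = ∑ p ∈ P.filter (fun p => p.2 < p.1), F p := by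
    rw [Finset.sum_sigma']
    refine Finset.sum_nbij' (fun q => (q.2 + q.1, q.2)) (fun p => ⟨p.1 - p.2, p.2⟩)
      ?_ ?_ ?_ ?_ ?_
    · intro q hq
      simp only [Finset.mem_sigma, Finset.mem_Icc] at hq
      simp only [Finset.mem_filter, hP, Finset.mem_product, Finset.mem_Icc]
      omega
    · intro p hp
      simp only [Finset.mem_filter, hP, Finset.mem_product, Finset.mem_Icc] at hp
      simp only [Finset.mem_sigma, Finset.mem_Icc]
      omega
    · intro q hq
      simp [Nat.add_sub_cancel_left]
    · intro p hp
      simp only [Finset.mem_filter, hP, Finset.mem_product, Finset.mem_Icc] at hp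
      obtain ⟨a, b⟩ := p
      simp only [Prod.ext_iff]
      constructor
      · omega
      · trivial
    · intro q _; rfl
  have hNpos : (0 : ℝ) < N := by exact_mod_cast hN
  have hnorm : ‖(N : ℝ)⁻¹ • S‖ ^ 2 = (N : ℝ)⁻¹ ^ 2 * ‖S‖ ^ 2 := by
    rw [norm_smul, mul_pow, Real.norm_eq_abs, abs_of_nonneg (by positivity)]
  rw [hnorm, expand, hsplit, hupper, ← hlower]
  rw [← Finset.mul_sum]
  set T := ∑ m ∈ Finset.Icc 1 N, ∑ n ∈ Finset.Icc 1 (N - m),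
      (inner ℂ (v (n + m)) (v n) : ℂ).re with hT
  set D := ∑ p ∈ P.filter (fun p => ¬ p.2 < p.1 ∧ ¬ p.1 < p.2), F p with hD
  have h1 : (N:ℝ)⁻¹ ^ 2 * D ≤ (N:ℝ)⁻¹ ^ 2 * N :=
    mul_le_mul_of_nonneg_left hdiag (by positivity)
  have h2 : 2 / (N:ℝ) * ((N:ℝ)⁻¹ * T) = (N:ℝ)⁻¹ ^ 2 * (2 * T) := by
    ring
  have h3 : (N:ℝ)⁻¹ ^ 2 * (N:ℝ) = 1 / N := by
    field_simp [pow_two]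
  linarith
end

section
/- Let a_1, ..., a_ℓ : [c, ∞) → ℝ be functions such that for all real t_1, ..., t_ℓ not all zero, lim_{N→∞} (1/N) ∑_{n=1}^N e(a_1(n)t_1 + ... + a_ℓ(n)t_ℓ) = 0. Then the integer part sequences [a_1(n)], ..., [a_ℓ(n)] satisfy: for all t_1, ..., t_ℓ ∈ [0,1) not all zero, lim_{N→∞} (1/N) ∑_{n=1}^N e([a_1(n)]t_1 + ... + [a_ℓ(n)]t_ℓ) = 0. -/
set_option maxHeartbeats 1000000

open Filter Complex



noncomputable def Efn (x : ℝ) : ℂ := Complex.exp ((2 * Real.pi * x : ℝ) * Complex.I)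

lemma Efn_eq (r : ℝ) : Complex.exp (2 * ↑Real.pi * Complex.I * ↑r) = Efn r := by
  rw [Efn]; congr 1; push_cast; ring

lemma Efn_zero : Efn 0 = 1 := by
  simp [Efn]

lemma Efn_add (x y : ℝ) : Efn (x + y) = Efn x * Efn y := by
  rw [Efn, Efn, Efn, ← Complex.exp_add]; congr 1; push_cast; ring

lemma Efn_norm (x : ℝ) : ‖Efn x‖ = 1 := by
  rw [Efn, Complex.norm_exp_ofReal_mul_I]

lemma Efn_int (m : ℤ) : Efn (m : ℝ) = 1 := by
  rw [Efn]
  have : ((2 * Real.pi * (m:ℝ) : ℝ) : ℂ) * Complex.I = (m : ℂ) * (2 * ↑Real.pi * Complex.I) := by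
    push_cast; ring
  rw [this, Complex.exp_int_mul_two_pi_mul_I]

lemma Efn_re (x : ℝ) : (Efn x).re = Real.cos (2 * Real.pi * x) := by
  rw [Efn, Complex.exp_ofReal_mul_I_re]

lemma Efn_conj (x : ℝ) : (starRingEnd ℂ) (Efn x) = Efn (-x) := by
  rw [Efn, Efn, ← Complex.exp_conj]
  have : (starRingEnd ℂ) (((2 * Real.pi * x : ℝ):ℂ) * Complex.I) = ((2 * Real.pi * (-x) : ℝ):ℂ) * Complex.I := by
    rw [map_mul, Complex.conj_I, Complex.conj_ofReal]
    push_cast; ring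
  rw [this]

lemma Efn_sum {ι : Type*} (s : Finset ι) (f : ι → ℝ) :
    Efn (∑ i ∈ s, f i) = ∏ i ∈ s, Efn (f i) := by
  classical
  induction s using Finset.induction with
  | empty => simp [Efn]
  | @insert i s hi ih => rw [Finset.sum_insert hi, Finset.prod_insert hi, Efn_add, ih]

noncomputable def avgC (u : ℕ → ℂ) (N : ℕ) : ℂ := (N:ℂ)⁻¹ * ∑ n ∈ Finset.Icc 1 N, u n

def AvgTo (u : ℕ → ℂ) (L : ℂ) : Prop := Tendsto (fun N => avgC u N) atTop (nhds L)

lemma avgTo_const (c : ℂ) : AvgTo (fun _ => c) c := by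
  have : ∀ᶠ N : ℕ in atTop, avgC (fun _ => c) N = c := by
    filter_upwards [eventually_ge_atTop 1] with N hN
    have hN' : (N:ℂ) ≠ 0 := by
      exact_mod_cast (Nat.one_le_iff_ne_zero.mp hN)
    simp only [avgC, Finset.sum_const, Nat.card_Icc, Nat.add_sub_cancel, nsmul_eq_mul]
    rw [← mul_assoc, inv_mul_cancel₀ hN', one_mul]
  exact Tendsto.congr' (this.mono fun N h => h.symm) tendsto_const_nhds

lemma AvgTo.congr {u v : ℕ → ℂ} {L : ℂ} (h : AvgTo u L) (he : ∀ n, 1 ≤ n → u n = v n) : AvgTo v L := by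
  have : ∀ N, avgC u N = avgC v N := by
    intro N; unfold avgC; congr 1; apply Finset.sum_congr rfl
    intro n hn; exact he n (Finset.mem_Icc.mp hn).1
  unfold AvgTo at h ⊢; simpa [← this] using h

lemma AvgTo.const_mul {u : ℕ → ℂ} {L : ℂ} (c : ℂ) (h : AvgTo u L) :
    AvgTo (fun n => c * u n) (c * L) := by
  have : ∀ N, avgC (fun n => c * u n) N = c * avgC u N := by
    intro N; unfold avgC
    rw [Finset.mul_sum, Finset.mul_sum, Finset.mul_sum]
    apply Finset.sum_congr rfl; intro n _; ring
  unfold AvgTo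
  rw [funext this]
  exact Tendsto.const_mul c h

lemma AvgTo.finset_sum {ι : Type*} (s : Finset ι) (f : ι → ℕ → ℂ) (L : ι → ℂ)
    (h : ∀ i ∈ s, AvgTo (f i) (L i)) :
    AvgTo (fun n => ∑ i ∈ s, f i n) (∑ i ∈ s, L i) := by
  have : ∀ N, avgC (fun n => ∑ i ∈ s, f i n) N = ∑ i ∈ s, avgC (f i) N := by
    intro N; unfold avgC
    rw [Finset.sum_comm, Finset.mul_sum]
  unfold AvgTo; rw [funext this]
  exact tendsto_finset_sum s h

lemma norm_prod_sub_prod_le {ι : Type*} (s : Finset ι) (g q : ι → ℂ) (B : ℝ) (hB : 1 ≤ B)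
    (hg : ∀ i ∈ s, ‖g i‖ ≤ B) (hq : ∀ i ∈ s, ‖q i‖ ≤ B) :
    ‖∏ i ∈ s, g i - ∏ i ∈ s, q i‖ ≤ B ^ s.card * ∑ i ∈ s, ‖g i - q i‖ := by
  classical
  induction s using Finset.induction with
  | empty => simp
  | @insert i s hi ih =>
    have hgs : ∀ j ∈ s, ‖g j‖ ≤ B := fun j hj => hg j (Finset.mem_insert_of_mem hj)
    have hqs : ∀ j ∈ s, ‖q j‖ ≤ B := fun j hj => hq j (Finset.mem_insert_of_mem hj)
    have hprodg : ‖∏ j ∈ s, g j‖ ≤ B ^ s.card := by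
      rw [norm_prod]
      calc ∏ j ∈ s, ‖g j‖ ≤ ∏ j ∈ s, B :=
            Finset.prod_le_prod (fun j _ => norm_nonneg _) hgs
        _ = B ^ s.card := by rw [Finset.prod_const]
    have key : ∏ j ∈ insert i s, g j - ∏ j ∈ insert i s, q j
        = (g i - q i) * ∏ j ∈ s, g j + q i * (∏ j ∈ s, g j - ∏ j ∈ s, q j) := by
      rw [Finset.prod_insert hi, Finset.prod_insert hi]; ring
    rw [key, Finset.sum_insert hi, Finset.card_insert_of_notMem hi]
    have hBpos : (0:ℝ) < B := lt_of_lt_of_le one_pos hB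
    calc ‖(g i - q i) * ∏ j ∈ s, g j + q i * (∏ j ∈ s, g j - ∏ j ∈ s, q j)‖
        ≤ ‖(g i - q i) * ∏ j ∈ s, g j‖ + ‖q i * (∏ j ∈ s, g j - ∏ j ∈ s, q j)‖ := norm_add_le _ _
      _ = ‖g i - q i‖ * ‖∏ j ∈ s, g j‖ + ‖q i‖ * ‖∏ j ∈ s, g j - ∏ j ∈ s, q j‖ := by
            rw [norm_mul, norm_mul]
      _ ≤ ‖g i - q i‖ * B ^ s.card + B * (B ^ s.card * ∑ j ∈ s, ‖g j - q j‖) := by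
            refine add_le_add ?_ ?_
            · exact mul_le_mul_of_nonneg_left hprodg (norm_nonneg _)
            · exact mul_le_mul (hq i (Finset.mem_insert_self i s)) (ih hgs hqs)
                (norm_nonneg _) (le_trans zero_le_one hB)
      _ ≤ B ^ (s.card + 1) * (‖g i - q i‖ + ∑ j ∈ s, ‖g j - q j‖) := by
            rw [pow_succ]
            nlinarith [Finset.sum_nonneg (fun j (_ : j ∈ s) => norm_nonneg (g j - q j)),
              pow_nonneg hBpos.le s.card, norm_nonneg (g i - q i),
              mul_le_mul_of_nonneg_left hB (mul_nonneg (pow_nonneg hBpos.le s.card) (norm_nonneg (g i - q i)))]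
      _ = B ^ (s.card + 1) * (‖g i - q i‖ + ∑ j ∈ s, ‖g j - q j‖) := rfl

lemma Efn_continuous : Continuous Efn := by
  apply Complex.continuous_exp.comp
  exact (Complex.continuous_ofReal.comp (by fun_prop)).mul continuous_const

noncomputable def psi (δ x : ℝ) : ℝ := x + (1/(2*δ)) * (max 0 (δ - x) - max 0 (x - (1 - δ)))

lemma psi_continuous (δ : ℝ) : Continuous (psi δ) := by
  unfold psi
  exact continuous_id.add (continuous_const.mul
    (((continuous_const.max (continuous_const.sub continuous_id)).sub
      (continuous_const.max (continuous_id.sub continuous_const)))))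

lemma psi_zero {δ : ℝ} (hδ0 : 0 < δ) (hδ1 : δ ≤ 1/2) : psi δ 0 = 1/2 := by
  unfold psi
  rw [sub_zero, zero_sub, max_eq_right hδ0.le, max_eq_left (by linarith)]
  field_simp
  ring

lemma psi_one {δ : ℝ} (hδ0 : 0 < δ) (hδ1 : δ ≤ 1/2) : psi δ 1 = 1/2 := by
  unfold psi
  rw [max_eq_left (by linarith), max_eq_right (by linarith)]
  field_simp
  ring

lemma psi_id {δ x : ℝ} (hδ0 : 0 < δ) (hx : x ∈ Set.Icc δ (1 - δ)) : psi δ x = x := by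
  obtain ⟨h1, h2⟩ := hx
  unfold psi
  rw [max_eq_left (by linarith), max_eq_left (by linarith)]
  ring

instance fact_one_pos : Fact ((0:ℝ) < 1) := ⟨one_pos⟩

lemma coe_fract (x : ℝ) : ((Int.fract x : ℝ) : AddCircle (1:ℝ)) = (x : AddCircle (1:ℝ)) := by
  have : ((Int.fract x - x : ℝ) : AddCircle (1:ℝ)) = 0 := by
    rw [AddCircle.coe_eq_zero_iff]
    exact ⟨-⌊x⌋, by rw [Int.fract]; simp⟩
  have h2 : ((Int.fract x - x : ℝ) : AddCircle (1:ℝ)) = ((Int.fract x : ℝ) : AddCircle (1:ℝ)) - ((x:ℝ) : AddCircle (1:ℝ)) := by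
    exact AddCircle.coe_sub _ _ _
  rw [h2] at this
  linear_combination (norm := abel) this

noncomputable def fapp (s δ x : ℝ) : ℂ := Efn (-(s * psi δ x))

lemma exists_Q (s δ ε : ℝ) (hδ0 : 0 < δ) (hδ1 : δ ≤ 1/2) (hε : 0 < ε) :
    ∃ Q : C(AddCircle (1:ℝ), ℂ), Q ∈ Submodule.span ℂ (Set.range (@fourier 1)) ∧
      (∀ x : ℝ, ‖Q x‖ ≤ 1 + ε) ∧
      (∀ x : ℝ, Int.fract x ∈ Set.Icc δ (1-δ) → ‖Q x - Efn (-(s * Int.fract x))‖ ≤ ε) ∧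
      (∀ x : ℝ, ‖Q x - Efn (-(s * Int.fract x))‖ ≤ 2 + ε) := by
  have hf01 : fapp s δ 0 = fapp s δ (0 + 1) := by
    unfold fapp
    rw [zero_add, psi_zero hδ0 hδ1, psi_one hδ0 hδ1]
  have hfc : Continuous (fapp s δ) := by
    unfold fapp
    exact Efn_continuous.comp ((continuous_const.mul (psi_continuous δ)).neg)
  set φ : C(AddCircle (1:ℝ), ℂ) :=
    ⟨AddCircle.liftIco 1 0 (fapp s δ),
     AddCircle.liftIco_continuous hf01 hfc.continuousOn⟩ with hφdef
  have hφeval : ∀ x : ℝ, φ x = fapp s δ (Int.fract x) := by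
    intro x
    have h1 : φ ((Int.fract x : ℝ) : AddCircle (1:ℝ)) = fapp s δ (Int.fract x) := by
      show AddCircle.liftIco 1 0 (fapp s δ) _ = _
      apply AddCircle.liftIco_coe_apply
      rw [zero_add]
      exact ⟨Int.fract_nonneg x, Int.fract_lt_one x⟩
    rw [← coe_fract x, h1]
  have hφnorm : ∀ z : AddCircle (1:ℝ), ‖φ z‖ ≤ 1 := by
    intro z
    obtain ⟨x, rfl⟩ : ∃ x : ℝ, (x : AddCircle (1:ℝ)) = z := Quotient.exists_rep z
    rw [hφeval x, fapp, Efn_norm]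
  -- Stone-Weierstrass
  have hmem : φ ∈ closure ((Submodule.span ℂ (Set.range (@fourier 1))) : Set C(AddCircle (1:ℝ), ℂ)) := by
    rw [← Submodule.topologicalClosure_coe, span_fourier_closure_eq_top]
    trivial
  obtain ⟨Q, hQmem, hQdist⟩ := Metric.mem_closure_iff.mp hmem ε hε
  refine ⟨Q, hQmem, ?_, ?_, ?_⟩
  · intro x
    calc ‖Q x‖ ≤ ‖φ (x : AddCircle (1:ℝ))‖ + ‖Q (x : AddCircle (1:ℝ)) - φ (x : AddCircle (1:ℝ))‖ := by
          have := norm_add_le (φ (x : AddCircle (1:ℝ))) (Q (x : AddCircle (1:ℝ)) - φ (x : AddCircle (1:ℝ)))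
          simpa using this
      _ ≤ 1 + ε := by
          refine add_le_add (hφnorm _) ?_
          rw [← dist_eq_norm]
          exact le_of_lt (lt_of_le_of_lt (ContinuousMap.dist_apply_le_dist _) (by rwa [dist_comm] at hQdist))
  · intro x hx
    have : φ (x : AddCircle (1:ℝ)) = Efn (-(s * Int.fract x)) := by
      rw [hφeval x, fapp, psi_id hδ0 hx]
    rw [← this, ← dist_eq_norm]
    exact le_of_lt (lt_of_le_of_lt (ContinuousMap.dist_apply_le_dist _) (by rwa [dist_comm] at hQdist))
  · intro x
    calc ‖Q (x:AddCircle (1:ℝ)) - Efn (-(s * Int.fract x))‖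
        ≤ ‖Q (x:AddCircle (1:ℝ))‖ + ‖Efn (-(s * Int.fract x))‖ := norm_sub_le _ _
      _ ≤ (1 + ε) + 1 := by
          refine add_le_add ?_ (le_of_eq (Efn_norm _))
          calc ‖Q (x:AddCircle (1:ℝ))‖ ≤ ‖φ (x : AddCircle (1:ℝ))‖ + ‖Q (x : AddCircle (1:ℝ)) - φ (x : AddCircle (1:ℝ))‖ := by
                have := norm_add_le (φ (x : AddCircle (1:ℝ))) (Q (x : AddCircle (1:ℝ)) - φ (x : AddCircle (1:ℝ)))
                simpa using this
            _ ≤ 1 + ε := by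
                refine add_le_add (hφnorm _) ?_
                rw [← dist_eq_norm]
                exact le_of_lt (lt_of_le_of_lt (ContinuousMap.dist_apply_le_dist _) (by rwa [dist_comm] at hQdist))
      _ = 2 + ε := by ring

lemma span_repr (Q : C(AddCircle (1:ℝ), ℂ)) (hQ : Q ∈ Submodule.span ℂ (Set.range (@fourier 1))) :
    ∃ c : ℤ →₀ ℂ, ∀ x : ℝ, Q x = ∑ m ∈ c.support, c m * Efn (m * x) := by
  obtain ⟨c, hc⟩ := Finsupp.mem_span_range_iff_exists_finsupp.mp hQ
  refine ⟨c, fun x => ?_⟩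
  rw [← hc]
  rw [Finsupp.sum]
  rw [ContinuousMap.coe_sum, Finset.sum_apply]
  apply Finset.sum_congr rfl
  intro m _
  rw [ContinuousMap.coe_smul, Pi.smul_apply, smul_eq_mul]
  congr 1
  rw [fourier_coe_apply, Efn]
  congr 1
  push_cast
  ring

lemma avgv {ℓ : ℕ} (a : Fin ℓ → ℝ → ℝ)
    (h : ∀ t : Fin ℓ → ℝ, t ≠ 0 →
      Tendsto (fun N : ℕ => (N : ℂ)⁻¹ * ∑ n ∈ Finset.Icc 1 N,
        Complex.exp (2 * ↑Real.pi * Complex.I * ↑(∑ j, a j (n : ℝ) * t j))) atTop (nhds 0))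
    (t : Fin ℓ → ℝ) (j₀ : Fin ℓ) (hj₀ : ∀ m : ℤ, t j₀ + (m:ℝ) ≠ 0)
    (c : Fin ℓ → (ℤ →₀ ℂ)) :
    AvgTo (fun n : ℕ => Efn (∑ j, a j (n:ℝ) * t j)
      * ∏ j, ∑ m ∈ (c j).support, (c j) m * Efn ((m:ℝ) * a j (n:ℝ))) 0 := by
  classical
  have expand : ∀ n : ℕ, Efn (∑ j, a j (n:ℝ) * t j)
      * ∏ j, ∑ m ∈ (c j).support, (c j) m * Efn ((m:ℝ) * a j (n:ℝ))
      = ∑ μ ∈ Fintype.piFinset (fun j => (c j).support),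
          (∏ j, (c j) (μ j)) * Efn (∑ j, a j (n:ℝ) * (t j + (μ j : ℝ))) := by
    intro n
    rw [Finset.prod_univ_sum]
    rw [Finset.mul_sum]
    apply Finset.sum_congr rfl
    intro μ _
    rw [Finset.prod_mul_distrib, ← Efn_sum]
    have : (∑ j, a j (n:ℝ) * (t j + (μ j : ℝ)))
        = (∑ j, a j (n:ℝ) * t j) + (∑ j, (μ j : ℝ) * a j (n:ℝ)) := by
      rw [← Finset.sum_add_distrib]
      apply Finset.sum_congr rfl
      intro j _
      ring
    rw [this, Efn_add]
    ring
  have : (fun n : ℕ => Efn (∑ j, a j (n:ℝ) * t j)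
      * ∏ j, ∑ m ∈ (c j).support, (c j) m * Efn ((m:ℝ) * a j (n:ℝ)))
      = fun n : ℕ => ∑ μ ∈ Fintype.piFinset (fun j => (c j).support),
          (∏ j, (c j) (μ j)) * Efn (∑ j, a j (n:ℝ) * (t j + (μ j : ℝ))) := funext expand
  rw [this]
  have hzero : (0:ℂ) = ∑ μ ∈ Fintype.piFinset (fun j => (c j).support), (0:ℂ) := by simp
  rw [hzero]
  apply AvgTo.finset_sum
  intro μ _
  have hmul : (∏ j, (c j) (μ j)) * (0:ℂ) = 0 := by ring
  rw [← hmul]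
  apply AvgTo.const_mul
  have ht' : (fun j => t j + (μ j : ℝ)) ≠ 0 := by
    intro hcon
    exact hj₀ (μ j₀) (congrFun hcon j₀)
  have := h (fun j => t j + (μ j : ℝ)) ht'
  unfold AvgTo avgC
  convert this using 3 with N
  apply Finset.sum_congr rfl
  intro n _
  rw [Efn_eq]

noncomputable def Dk (N : ℕ) (x : ℝ) : ℂ := ∑ k ∈ Finset.range N, Efn ((k:ℝ) * x)
noncomputable def Pfn (N : ℕ) (x : ℝ) : ℝ := 4/(N:ℝ)^2 * Complex.normSq (Dk N x)

lemma Pfn_nonneg (N : ℕ) (x : ℝ) : 0 ≤ Pfn N x := by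
  unfold Pfn
  exact mul_nonneg (by positivity) (Complex.normSq_nonneg _)

lemma Dk_shift (N : ℕ) (x y : ℝ) (m : ℤ) (hxy : x = y + m) : Dk N x = Dk N y := by
  unfold Dk
  apply Finset.sum_congr rfl
  intro k _
  rw [hxy, mul_add, Efn_add]
  have : (k:ℝ) * (m:ℝ) = ((k * m : ℤ) : ℝ) := by push_cast; ring
  rw [this, Efn_int, mul_one]

lemma Pfn_ge_one (N : ℕ) (hN : 1 ≤ N) (x y : ℝ) (m : ℤ) (hxy : x = y + m)
    (hy : |y| ≤ 1/(8*N)) : 1 ≤ Pfn N x := by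
  have hNR : (1:ℝ) ≤ (N:ℝ) := by exact_mod_cast hN
  have hNpos : (0:ℝ) < N := by linarith
  rw [Pfn, Dk_shift N x y m hxy]
  have hre : (N:ℝ)/2 ≤ (Dk N y).re := by
    unfold Dk
    rw [Complex.re_sum]
    have : ∀ k ∈ Finset.range N, (1:ℝ)/2 ≤ (Efn ((k:ℝ) * y)).re := by
      intro k hk
      rw [Efn_re]
      have hk' : (k:ℝ) ≤ (N:ℝ) := by
        have := Finset.mem_range.mp hk
        exact_mod_cast this.le
      have habs : |2 * Real.pi * ((k:ℝ) * y)| ≤ Real.pi/3 := by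
        rw [abs_mul, abs_mul]
        have h2pi : |(2:ℝ)| = 2 := by norm_num
        have hpi : |Real.pi| = Real.pi := abs_of_pos Real.pi_pos
        rw [h2pi, hpi, abs_mul, Nat.abs_cast]
        have h1 : (k:ℝ) * |y| ≤ (N:ℝ) * (1/(8*N)) := by
          apply mul_le_mul hk' hy (abs_nonneg y) hNpos.le
        have hNne : (N:ℝ) ≠ 0 := ne_of_gt hNpos
        calc 2 * Real.pi * ((k:ℝ) * |y|) ≤ 2 * Real.pi * ((N:ℝ) * (1/(8*N))) :=
              mul_le_mul_of_nonneg_left h1 (by positivity)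
          _ = Real.pi/4 := by field_simp; ring
          _ ≤ Real.pi/3 := by linarith [Real.pi_pos]
      calc (1:ℝ)/2 = Real.cos (Real.pi/3) := (Real.cos_pi_div_three).symm
        _ ≤ Real.cos |2 * Real.pi * ((k:ℝ) * y)| := by
            apply Real.cos_le_cos_of_nonneg_of_le_pi (abs_nonneg _) _ habs
            linarith [Real.pi_pos]
        _ = Real.cos (2 * Real.pi * ((k:ℝ) * y)) := Real.cos_abs _
    calc (N:ℝ)/2 = ∑ k ∈ Finset.range N, (1:ℝ)/2 := by
          rw [Finset.sum_const, Finset.card_range]; ring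
      _ ≤ ∑ k ∈ Finset.range N, (Efn ((k:ℝ) * y)).re := Finset.sum_le_sum this
  have hre0 : (0:ℝ) ≤ (Dk N y).re := le_trans (by positivity) hre
  have hnsq : ((N:ℝ)/2)^2 ≤ Complex.normSq (Dk N y) := by
    rw [Complex.normSq_apply]
    nlinarith [sq_nonneg (Dk N y).im]
  calc (1:ℝ) = 4/(N:ℝ)^2 * ((N:ℝ)/2)^2 := by field_simp; ring
    _ ≤ 4/(N:ℝ)^2 * Complex.normSq (Dk N y) := by
        apply mul_le_mul_of_nonneg_left hnsq (by positivity)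

lemma Pfn_ge_one_of_bad (N : ℕ) (hN : 1 ≤ N) (x : ℝ)
    (hx : ¬ (Int.fract x ∈ Set.Icc (1/(8*(N:ℝ))) (1 - 1/(8*(N:ℝ))))) : 1 ≤ Pfn N x := by
  set δ := 1/(8*(N:ℝ)) with hδ
  have hf0 : 0 ≤ Int.fract x := Int.fract_nonneg x
  have hf1 : Int.fract x < 1 := Int.fract_lt_one x
  rw [Set.mem_Icc, not_and_or, not_le, not_le] at hx
  rcases hx with hx | hx
  · apply Pfn_ge_one N hN x (Int.fract x) ⌊x⌋ (by rw [Int.fract]; ring)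
    rw [_root_.abs_of_nonneg hf0]
    exact hx.le
  · apply Pfn_ge_one N hN x (Int.fract x - 1) (⌊x⌋ + 1)
    · rw [Int.fract]; push_cast; ring
    · rw [_root_.abs_of_nonpos (by linarith)]
      linarith

lemma avg_Pfn {ℓ : ℕ} (a : Fin ℓ → ℝ → ℝ)
    (h : ∀ t : Fin ℓ → ℝ, t ≠ 0 →
      Tendsto (fun N : ℕ => (N : ℂ)⁻¹ * ∑ n ∈ Finset.Icc 1 N,
        Complex.exp (2 * ↑Real.pi * Complex.I * ↑(∑ j, a j (n : ℝ) * t j))) atTop (nhds 0))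
    (j : Fin ℓ) (N : ℕ) (hN : 1 ≤ N) :
    Tendsto (fun N' : ℕ => (N':ℝ)⁻¹ * ∑ n ∈ Finset.Icc 1 N', Pfn N (a j (n:ℝ)))
      atTop (nhds (4/(N:ℝ))) := by
  classical
  -- complex expansion
  have hexp : ∀ x : ℝ, (Complex.normSq (Dk N x) : ℝ)
      = (∑ k ∈ Finset.range N, ∑ k' ∈ Finset.range N, Efn (((k:ℝ) - (k':ℝ)) * x)).re := by
    intro x
    have h1 : (Complex.normSq (Dk N x) : ℂ) = Dk N x * (starRingEnd ℂ) (Dk N x) :=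
      (Complex.mul_conj (Dk N x)).symm
    have h2 : Dk N x * (starRingEnd ℂ) (Dk N x)
        = ∑ k ∈ Finset.range N, ∑ k' ∈ Finset.range N, Efn (((k:ℝ) - (k':ℝ)) * x) := by
      unfold Dk
      rw [map_sum, Finset.sum_mul_sum]
      apply Finset.sum_congr rfl
      intro k _
      apply Finset.sum_congr rfl
      intro k' _
      rw [Efn_conj, ← Efn_add]
      congr 1
      ring
    have := congrArg Complex.re (h1.trans h2)
    simpa using this
  -- complex average
  have hW : AvgTo (fun n : ℕ => ∑ k ∈ Finset.range N, ∑ k' ∈ Finset.range N,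
      Efn (((k:ℝ) - (k':ℝ)) * a j (n:ℝ))) (N:ℂ) := by
    have hL : ((N:ℂ)) = ∑ k ∈ Finset.range N, ∑ k' ∈ Finset.range N,
        (if k = k' then (1:ℂ) else 0) := by
      have hin : ∀ k ∈ Finset.range N, (∑ k' ∈ Finset.range N, if k = k' then (1:ℂ) else 0) = 1 := by
        intro k hk
        rw [Finset.sum_ite_eq]
        simp [Finset.mem_range.mp hk]
      rw [Finset.sum_congr rfl hin, Finset.sum_const, Finset.card_range]
      simp
    rw [hL]
    apply AvgTo.finset_sum
    intro k _
    apply AvgTo.finset_sum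
    intro k' hk'
    by_cases hkk : k = k'
    · subst hkk
      simp only [if_pos rfl]
      have : (fun n : ℕ => Efn (((k:ℝ) - (k:ℝ)) * a j (n:ℝ))) = fun _ : ℕ => (1:ℂ) := by
        funext n
        rw [sub_self, zero_mul, Efn_zero]
      rw [this]
      exact avgTo_const 1
    · simp only [if_neg hkk]
      have ht' : (fun i : Fin ℓ => if i = j then ((k:ℝ) - (k':ℝ)) else 0) ≠ 0 := by
        intro hcon
        have h1 := congrFun hcon j
        simp only [if_pos rfl, if_true, eq_self_iff_true, Pi.zero_apply] at h1
        have hkkr : ((k:ℝ)) ≠ (k':ℝ) := by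
          exact_mod_cast hkk
        exact hkkr (by linarith)
      have hlim := h _ ht'
      unfold AvgTo avgC
      refine hlim.congr fun N' => ?_
      congr 1
      apply Finset.sum_congr rfl
      intro n _
      rw [Efn_eq]
      congr 1
      rw [Finset.sum_eq_single j]
      · rw [if_pos rfl]
        ring
      · intro b _ hb
        simp [hb]
      · intro hj
        exact absurd (Finset.mem_univ j) hj
  -- take real parts
  have hre : Tendsto (fun N' : ℕ => (avgC (fun n : ℕ => ∑ k ∈ Finset.range N,
      ∑ k' ∈ Finset.range N, Efn (((k:ℝ) - (k':ℝ)) * a j (n:ℝ))) N').re) atTop (nhds ((N:ℂ).re)) :=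
    (Complex.continuous_re.tendsto _).comp hW
  have hre' : ∀ N' : ℕ, (avgC (fun n : ℕ => ∑ k ∈ Finset.range N,
      ∑ k' ∈ Finset.range N, Efn (((k:ℝ) - (k':ℝ)) * a j (n:ℝ))) N').re
      = (N':ℝ)⁻¹ * ∑ n ∈ Finset.Icc 1 N', Complex.normSq (Dk N (a j (n:ℝ))) := by
    intro N'
    unfold avgC
    have : ((N':ℂ))⁻¹ = (((N':ℝ)⁻¹ : ℝ) : ℂ) := by push_cast; ring
    rw [this, Complex.re_ofReal_mul, Complex.re_sum]
    congr 1
    apply Finset.sum_congr rfl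
    intro n _
    rw [hexp]
  simp only [hre', Complex.natCast_re] at hre
  have final := hre.const_mul (4/(N:ℝ)^2)
  have heq : ∀ N' : ℕ, 4/(N:ℝ)^2 * ((N':ℝ)⁻¹ * ∑ n ∈ Finset.Icc 1 N', Complex.normSq (Dk N (a j (n:ℝ))))
      = (N':ℝ)⁻¹ * ∑ n ∈ Finset.Icc 1 N', Pfn N (a j (n:ℝ)) := by
    intro N'
    rw [Finset.mul_sum, Finset.mul_sum, Finset.mul_sum]
    apply Finset.sum_congr rfl
    intro n _
    unfold Pfn
    ring
  have hNpos : (0:ℝ) < (N:ℝ) := by exact_mod_cast hN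
  have h44 : (4:ℝ)/(N:ℝ) = 4/(N:ℝ)^2 * (N:ℝ) := by
    field_simp
  rw [h44]
  exact (Tendsto.const_mul (4/(N:ℝ)^2) hre).congr heq

/-- If every nontrivial real linear combination of `a₁(n), …, a_ℓ(n)` is uniformly distributed
(in the sense that `(1/N) ∑_{n=1}^N e(a₁(n)t₁ + ⋯ + a_ℓ(n)t_ℓ) → 0` for all `(t₁,…,t_ℓ) ≠ 0`),
then the integer-part sequences `⌊a₁(n)⌋, …, ⌊a_ℓ(n)⌋` are good for equidistribution:
`(1/N) ∑_{n=1}^N e(⌊a₁(n)⌋t₁ + ⋯ + ⌊a_ℓ(n)⌋t_ℓ) → 0` for all `t₁,…,t_ℓ ∈ [0,1)` not all zero. -/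
theorem stmt14 (ℓ : ℕ) (c : ℝ) (a : Fin ℓ → ℝ → ℝ)
    (h : ∀ t : Fin ℓ → ℝ, t ≠ 0 →
      Tendsto (fun N : ℕ => (N : ℂ)⁻¹ * ∑ n ∈ Finset.Icc 1 N,
        Complex.exp (2 * ↑Real.pi * Complex.I * ↑(∑ j, a j (n : ℝ) * t j))) atTop (nhds 0)) :
    ∀ t : Fin ℓ → ℝ, (∀ j, t j ∈ Set.Ico (0 : ℝ) 1) → t ≠ 0 →
      Tendsto (fun N : ℕ => (N : ℂ)⁻¹ * ∑ n ∈ Finset.Icc 1 N,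
        Complex.exp (2 * ↑Real.pi * Complex.I * ↑(∑ j, (⌊a j (n : ℝ)⌋ : ℝ) * t j)))
        atTop (nhds 0) := by
  classical
  intro t ht01 ht0
  obtain ⟨j₀, hj₀⟩ : ∃ j₀, t j₀ ≠ 0 := by
    by_contra hcon
    push_neg at hcon
    exact ht0 (funext hcon)
  have hj₀' : ∀ m : ℤ, t j₀ + (m:ℝ) ≠ 0 := by
    intro m hm
    obtain ⟨h1, h2⟩ := ht01 j₀
    have hpos : 0 < t j₀ := lt_of_le_of_ne h1 (Ne.symm hj₀)
    have hmlt : (-m : ℝ) < 1 := by push_cast; linarith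
    have hmpos : (0:ℝ) < (-m : ℝ) := by push_cast; linarith
    have hm1 : (1:ℤ) ≤ -m := by exact_mod_cast hmpos
    have : (1:ℝ) ≤ ((-m : ℤ) : ℝ) := by exact_mod_cast hm1
    push_cast at this
    linarith
  -- reduce to AvgTo of Efn form
  suffices hu : AvgTo (fun n : ℕ => Efn (∑ j, (⌊a j (n:ℝ)⌋ : ℝ) * t j)) 0 by
    unfold AvgTo avgC at hu
    refine hu.congr fun N => ?_
    congr 1
    exact Finset.sum_congr rfl fun n _ => (Efn_eq _).symm
  -- factorization
  have hfact : ∀ n : ℕ, Efn (∑ j, (⌊a j (n:ℝ)⌋ : ℝ) * t j)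
      = Efn (∑ j, a j (n:ℝ) * t j) * ∏ j, Efn (-(t j * Int.fract (a j (n:ℝ)))) := by
    intro n
    rw [← Efn_sum Finset.univ (fun j => -(t j * Int.fract (a j (n:ℝ)))), ← Efn_add]
    congr 1
    rw [← Finset.sum_add_distrib]
    apply Finset.sum_congr rfl
    intro j _
    rw [Int.fract]
    ring
  unfold AvgTo
  rw [NormedAddCommGroup.tendsto_nhds_zero]
  intro ε₀ hε₀
  -- parameters
  set K : ℝ := (2:ℝ)^ℓ * ℓ with hK
  have hKnn : 0 ≤ K := by positivity
  set η : ℝ := min (1/2) (ε₀ / (2 * (1 + 7 * K))) with hη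
  have hηpos : 0 < η := lt_min (by norm_num) (by positivity)
  have hη2 : η ≤ 1/2 := min_le_left _ _
  have hηε : η * (1 + 7 * K) ≤ ε₀ / 2 := by
    have h2 : (0:ℝ) < 1 + 7 * K := by positivity
    calc η * (1 + 7*K) ≤ ε₀ / (2 * (1 + 7 * K)) * (1 + 7*K) :=
          mul_le_mul_of_nonneg_right (min_le_right _ _) h2.le
      _ = ε₀ / 2 := by field_simp
  -- choose N
  obtain ⟨N, hN1, hN4⟩ : ∃ N : ℕ, 1 ≤ N ∧ 4/(N:ℝ) ≤ η := by
    obtain ⟨N, hN⟩ := exists_nat_gt (4/η)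
    have hNpos : 0 < N := by
      by_contra hcon
      push_neg at hcon
      interval_cases N
      · simp at hN
        linarith [div_pos (by norm_num : (0:ℝ) < 4) hηpos]
    refine ⟨N, hNpos, ?_⟩
    have hNR : (0:ℝ) < (N:ℝ) := by exact_mod_cast hNpos
    rw [div_le_iff₀ hNR]
    rw [div_lt_iff₀ hηpos] at hN
    linarith
  have hNR1 : (1:ℝ) ≤ (N:ℝ) := by exact_mod_cast hN1
  set δ : ℝ := 1/(8*(N:ℝ)) with hδ
  have hδpos : 0 < δ := by positivity
  have hδhalf : δ ≤ 1/2 := by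
    rw [hδ]
    rw [div_le_div_iff₀ (by linarith) (by norm_num)]
    linarith
  -- choose the trig polynomials
  choose Q hQspan hQnorm hQgood hQall using
    fun j : Fin ℓ => exists_Q (t j) δ η hδpos hδhalf hηpos
  choose cf hcf using fun j : Fin ℓ => span_repr (Q j) (hQspan j)
  -- the approximating sequence and its average limit
  set v : ℕ → ℂ := fun n => Efn (∑ j, a j (n:ℝ) * t j)
      * ∏ j, Q j ((a j (n:ℝ) : ℝ) : AddCircle (1:ℝ)) with hv
  have hvlim : AvgTo v 0 := by
    have hbase := avgv a h t j₀ hj₀' cf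
    refine AvgTo.congr hbase fun n _ => ?_
    rw [hv]
    congr 1
    apply Finset.prod_congr rfl
    intro j _
    rw [hcf j]
  -- the target sequence
  set u : ℕ → ℂ := fun n => Efn (∑ j, (⌊a j (n:ℝ)⌋ : ℝ) * t j) with hu
  -- pointwise bound on the difference
  have hdiff : ∀ n : ℕ, ‖u n - v n‖ ≤ (2:ℝ)^ℓ * ∑ j, (η + 3 * Pfn N (a j (n:ℝ))) := by
    intro n
    have hform : u n - v n = Efn (∑ j, a j (n:ℝ) * t j) *
        ((∏ j, Efn (-(t j * Int.fract (a j (n:ℝ))))) - ∏ j, Q j ((a j (n:ℝ) : ℝ) : AddCircle (1:ℝ))) := by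
      rw [hu, hv]
      simp only []
      rw [hfact n]
      ring
    rw [hform, norm_mul, Efn_norm, one_mul]
    have hprod : ‖(∏ j, Efn (-(t j * Int.fract (a j (n:ℝ))))) - ∏ j, Q j ((a j (n:ℝ) : ℝ) : AddCircle (1:ℝ))‖
        ≤ (2:ℝ)^ℓ * ∑ j, ‖Efn (-(t j * Int.fract (a j (n:ℝ)))) - Q j ((a j (n:ℝ) : ℝ) : AddCircle (1:ℝ))‖ := by
      have := norm_prod_sub_prod_le Finset.univ
        (fun j => Efn (-(t j * Int.fract (a j (n:ℝ)))))
        (fun j => Q j ((a j (n:ℝ) : ℝ) : AddCircle (1:ℝ))) 2 (by norm_num)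
        (fun j _ => by rw [Efn_norm]; norm_num)
        (fun j _ => le_trans (hQnorm j (a j (n:ℝ))) (by linarith))
      simpa [Finset.card_univ] using this
    refine le_trans hprod ?_
    apply mul_le_mul_of_nonneg_left _ (by positivity)
    apply Finset.sum_le_sum
    intro j _
    by_cases hgood : Int.fract (a j (n:ℝ)) ∈ Set.Icc δ (1 - δ)
    · have h1 := hQgood j (a j (n:ℝ)) hgood
      have h2 := Pfn_nonneg N (a j (n:ℝ))
      rw [norm_sub_rev] at h1
      linarith
    · have h1 := hQall j (a j (n:ℝ))
      have h2 : 1 ≤ Pfn N (a j (n:ℝ)) := Pfn_ge_one_of_bad N hN1 _ (by rwa [← hδ])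
      rw [norm_sub_rev] at h1
      linarith
  -- eventual bounds
  have hvev : ∀ᶠ N' in atTop, ‖avgC v N'‖ < η := by
    have := NormedAddCommGroup.tendsto_nhds_zero.mp hvlim
    exact this η hηpos
  have hPev : ∀ᶠ N' : ℕ in atTop, ∀ j : Fin ℓ,
      (N':ℝ)⁻¹ * ∑ n ∈ Finset.Icc 1 N', Pfn N (a j (n:ℝ)) < 4/(N:ℝ) + η := by
    rw [eventually_all]
    intro j
    exact (avg_Pfn a h j N hN1).eventually_lt_const
      (show (4:ℝ)/(N:ℝ) < 4/(N:ℝ) + η by linarith)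
  filter_upwards [hvev, hPev, eventually_ge_atTop 1] with N' hvN hPN hN'1
  have hN'R : (0:ℝ) < (N':ℝ) := by exact_mod_cast hN'1
  -- norm of difference of averages
  have havgdiff : ‖avgC u N' - avgC v N'‖
      ≤ (N':ℝ)⁻¹ * ∑ n ∈ Finset.Icc 1 N', ‖u n - v n‖ := by
    unfold avgC
    rw [← mul_sub, ← Finset.sum_sub_distrib]
    rw [norm_mul, norm_inv, Complex.norm_natCast]
    apply mul_le_mul_of_nonneg_left (norm_sum_le _ _) (by positivity)
  -- bound the average of the difference
  have hsum : (N':ℝ)⁻¹ * ∑ n ∈ Finset.Icc 1 N', ‖u n - v n‖ ≤ K * (7 * η) := by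
    calc (N':ℝ)⁻¹ * ∑ n ∈ Finset.Icc 1 N', ‖u n - v n‖
        ≤ (N':ℝ)⁻¹ * ∑ n ∈ Finset.Icc 1 N', ((2:ℝ)^ℓ * ∑ j, (η + 3 * Pfn N (a j (n:ℝ)))) := by
          apply mul_le_mul_of_nonneg_left _ (by positivity)
          exact Finset.sum_le_sum fun n _ => hdiff n
      _ = (2:ℝ)^ℓ * ∑ j, ((N':ℝ)⁻¹ * ∑ n ∈ Finset.Icc 1 N', (η + 3 * Pfn N (a j (n:ℝ)))) := by
          simp only [Finset.mul_sum]
          rw [Finset.sum_comm]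
          apply Finset.sum_congr rfl
          intro j _
          apply Finset.sum_congr rfl
          intro n _
          ring
      _ ≤ (2:ℝ)^ℓ * ∑ j : Fin ℓ, (7 * η) := by
          apply mul_le_mul_of_nonneg_left _ (by positivity)
          apply Finset.sum_le_sum
          intro j _
          have hsplit : ∑ n ∈ Finset.Icc 1 N', (η + 3 * Pfn N (a j (n:ℝ)))
              = (N':ℝ) * η + 3 * ∑ n ∈ Finset.Icc 1 N', Pfn N (a j (n:ℝ)) := by
            rw [Finset.sum_add_distrib, Finset.sum_const, Nat.card_Icc, Nat.add_sub_cancel,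
              nsmul_eq_mul, ← Finset.mul_sum]
          rw [hsplit, mul_add]
          have hη' : (N':ℝ)⁻¹ * ((N':ℝ) * η) = η := by field_simp
          have hPj := (hPN j).le
          have h3 : (N':ℝ)⁻¹ * (3 * ∑ n ∈ Finset.Icc 1 N', Pfn N (a j (n:ℝ)))
              = 3 * ((N':ℝ)⁻¹ * ∑ n ∈ Finset.Icc 1 N', Pfn N (a j (n:ℝ))) := by ring
          rw [hη', h3]
          have : (N':ℝ)⁻¹ * ∑ n ∈ Finset.Icc 1 N', Pfn N (a j (n:ℝ)) ≤ 2 * η := by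
            calc (N':ℝ)⁻¹ * ∑ n ∈ Finset.Icc 1 N', Pfn N (a j (n:ℝ)) ≤ 4/(N:ℝ) + η := hPj
              _ ≤ 2 * η := by linarith
          linarith
      _ = K * (7 * η) := by
          rw [Finset.sum_const, Finset.card_univ, Fintype.card_fin, nsmul_eq_mul, hK]
          ring
  -- conclude
  have hfinal : ‖avgC u N'‖ ≤ ‖avgC v N'‖ + ‖avgC u N' - avgC v N'‖ := by
    have := norm_add_le (avgC v N') (avgC u N' - avgC v N')
    simpa using this
  have : ‖avgC u N'‖ < η + K * (7 * η) := by
    have := le_trans havgdiff hsum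
    linarith
  calc ‖avgC u N'‖ < η + K * (7 * η) := this
    _ = η * (1 + 7 * K) := by ring
    _ ≤ ε₀ / 2 := hηε
    _ < ε₀ := by linarith
end

section
/- Let b : ℝ₊ → ℝ₊ be nonnegative, differentiable for t ≥ t₀ with 0 ≤ b'(t) ≤ 1 and b' decreasing on [t₀, ∞), and b(t) ≤ t^{1−δ} for some δ > 0 and t ≥ t₀. Let (X, μ, T^t) be a measure-preserving flow and f ∈ L²(μ) a function whose spectral measure σ_f is supported on [−M, M]. Then with A_y(x) := (1/y) ∫_{t₀}^y |f(T^{b(t+c)}x) − f(T^{b(t)}x)|² dt for fixed c ≥ 0, we have ‖A_y‖_{L¹(μ)} ≤ C / y^δ for all y ≥ t₀, where C is a constant depending on M, c, ‖f‖_{L²} (but not y). In particular lim_{y→∞} A_y(x) = 0 for μ-almost every x. -/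
open MeasureTheory Filter
open scoped ENNReal NNReal

lemma aux_two_sub_two_re_exp (θ : ℝ) :
    2 - 2 * (Complex.exp ((θ : ℂ) * Complex.I)).re ≤ 4 * θ ^ 2 := by
  have habs : ‖Complex.exp ((θ : ℂ) * Complex.I)‖ = 1 :=
    Complex.norm_exp_ofReal_mul_I θ
  have hsq : ‖Complex.exp ((θ : ℂ) * Complex.I) - 1‖ ^ 2
      = 2 - 2 * (Complex.exp ((θ : ℂ) * Complex.I)).re := by
    rw [Complex.sq_norm, Complex.normSq_sub]
    simp [Complex.normSq_eq_norm_sq, habs]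
    ring
  have hnorm : ‖Complex.exp ((θ : ℂ) * Complex.I) - 1‖ ≤ 2 * |θ| := by
    by_cases h : |θ| ≤ 1
    · have h2 : ‖(θ : ℂ) * Complex.I‖ ≤ 1 := by
        simpa using h
      have := Complex.norm_exp_sub_one_le h2
      simpa using this
    · push_neg at h
      have h1 : ‖Complex.exp ((θ : ℂ) * Complex.I) - 1‖
          ≤ ‖Complex.exp ((θ : ℂ) * Complex.I)‖ + ‖(1 : ℂ)‖ := norm_sub_le _ _
      have h2 : ‖Complex.exp ((θ : ℂ) * Complex.I)‖ = 1 := by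
        rw [habs]
      rw [h2, norm_one] at h1
      linarith
  calc 2 - 2 * (Complex.exp ((θ : ℂ) * Complex.I)).re
      = ‖Complex.exp ((θ : ℂ) * Complex.I) - 1‖ ^ 2 := hsq.symm
    _ ≤ (2 * |θ|) ^ 2 := by
        apply pow_le_pow_left₀ (norm_nonneg _) hnorm
    _ = 4 * θ ^ 2 := by rw [mul_pow, sq_abs]; ring

lemma aux_integral_comp_mp {X : Type*} [MeasurableSpace X] {μ : Measure X} {φ : X → X}
    (hφm : Measurable φ) (h : MeasurePreserving φ μ μ) {E : Type*} [NormedAddCommGroup E]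
    [NormedSpace ℝ E] (g : X → E) (hg : AEStronglyMeasurable g μ) :
    ∫ x, g (φ x) ∂μ = ∫ x, g x ∂μ := by
  calc ∫ x, g (φ x) ∂μ = ∫ y, g y ∂(Measure.map φ μ) :=
        (integral_map hφm.aemeasurable (by rwa [h.map_eq])).symm
    _ = ∫ x, g x ∂μ := by rw [h.map_eq]

set_option maxHeartbeats 1000000 in
/-- Let `b` be nonnegative with `0 ≤ b' ≤ 1` and `b'` decreasing on `[t₀, ∞)`, and
`b(t) ≤ t^{1-δ}` there. If `f ∈ L²(μ)` has spectral measure supported on `[-M, M]`, then for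
fixed `c ≥ 0` the quantity `A_y(x) = (1/y) ∫_{t₀}^y |f(T^{b(t+c)}x) − f(T^{b(t)}x)|² dt`
satisfies `‖A_y‖_{L¹(μ)} ≤ C / y^δ` for all `y ≥ t₀` (with `C` independent of `y`), and in
particular `A_y(x) → 0` for `μ`-a.e. `x`. -/
theorem stmt16 {X : Type*} [MeasurableSpace X] (μ : Measure X) [IsProbabilityMeasure μ]
    (T : ℝ → X → X) (hT : ∀ t, MeasurePreserving (T t) μ μ)
    (hT0 : T 0 = id) (hTadd : ∀ s t, T (s + t) = T s ∘ T t)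
    (hTmeas : Measurable fun p : ℝ × X => T p.1 p.2)
    (b : ℝ → ℝ) (t₀ δ : ℝ) (ht₀ : 0 ≤ t₀) (hδ : 0 < δ)
    (hbpos : ∀ t ≥ (0 : ℝ), 0 ≤ b t)
    (hbdiff : ∀ t ≥ t₀, DifferentiableAt ℝ b t)
    (hb'01 : ∀ t ≥ t₀, 0 ≤ deriv b t ∧ deriv b t ≤ 1)
    (hb'dec : ∀ t₁ t₂, t₀ ≤ t₁ → t₁ ≤ t₂ → deriv b t₂ ≤ deriv b t₁)
    (hbgrow : ∀ t ≥ t₀, b t ≤ t ^ (1 - δ))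
    (f : X → ℂ) (hf : MemLp f 2 μ)
    (M : ℝ) (σ : Measure ℝ) (hσfin : IsFiniteMeasure σ)
    (hσsupp : σ (Set.Icc (-M) M)ᶜ = 0)
    (hσspec : ∀ t : ℝ, ∫ x, f (T t x) * (starRingEnd ℂ) (f x) ∂μ =
      ∫ s, Complex.exp (2 * ↑Real.pi * Complex.I * (t : ℂ) * (s : ℂ)) ∂σ)
    (c : ℝ) (hc : 0 ≤ c) :
    (∃ C : ℝ, ∀ y : ℝ, t₀ ≤ y → 0 < y →
      (∫ x, (y⁻¹ * ∫ t in Set.Ioc t₀ y, ‖f (T (b (t + c)) x) - f (T (b t) x)‖ ^ 2) ∂μ)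
        ≤ C / y ^ δ) ∧
    ∀ᵐ x ∂μ, Tendsto (fun y : ℝ =>
        y⁻¹ * ∫ t in Set.Ioc t₀ y, ‖f (T (b (t + c)) x) - f (T (b t) x)‖ ^ 2)
      atTop (nhds 0) := by
  classical
  -- measurable version `F` of `f`
  obtain ⟨F, hFsm, hfF⟩ : ∃ F : X → ℂ, StronglyMeasurable F ∧ f =ᵐ[μ] F :=
    ⟨hf.1.mk f, hf.1.stronglyMeasurable_mk, hf.1.ae_eq_mk⟩
  have hFm : Measurable F := hFsm.measurable
  have hFL2 : MemLp F 2 μ := hf.ae_eq hfF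
  have hTm : ∀ s : ℝ, Measurable (T s) := fun s =>
    hTmeas.comp (measurable_const.prodMk measurable_id)
  -- the "good" version `B` of `b`, globally continuous
  obtain ⟨B, hBcont, hBeq⟩ : ∃ B : ℝ → ℝ, Continuous B ∧ ∀ t, t₀ ≤ t → B t = b t := by
    refine ⟨fun t => b (max t t₀), ?_, fun t ht => by simp [max_eq_left ht]⟩
    have hb1 : ContinuousOn b (Set.Ici t₀) := fun t ht =>
      ((hbdiff t ht).continuousAt).continuousWithinAt
    have hb2 : Continuous fun t : ℝ => max t t₀ := continuous_id.max continuous_const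
    exact hb1.comp_continuous hb2 fun x => Set.mem_Ici.mpr (le_max_right _ _)
  have hBm : Measurable B := hBcont.measurable
  -- the squared increment function
  obtain ⟨G, hGdef⟩ : ∃ G : ℝ → X → ℝ,
      G = fun t x => ‖F (T (B (t + c)) x) - F (T (B t) x)‖ ^ 2 := ⟨_, rfl⟩
  have hGm : Measurable fun p : ℝ × X => G p.1 p.2 := by
    simp only [hGdef]
    have h1 : Measurable fun p : ℝ × X => F (T (B (p.1 + c)) p.2) :=
      hFm.comp (hTmeas.comp
        (((hBm.comp (measurable_add_const c)).comp measurable_fst).prodMk measurable_snd))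
    have h2 : Measurable fun p : ℝ × X => F (T (B p.1) p.2) :=
      hFm.comp (hTmeas.comp ((hBm.comp measurable_fst).prodMk measurable_snd))
    exact ((h1.sub h2).norm).pow_const 2
  have hGnonneg : ∀ t x, 0 ≤ G t x := fun t x => by simp only [hGdef]; positivity
  have hGtm : ∀ x, Measurable fun t => G t x := fun x =>
    hGm.comp (measurable_id.prodMk measurable_const)
  have hFcomp : ∀ s : ℝ, MemLp (fun x => F (T s x)) 2 μ := fun s =>
    hFL2.comp_measurePreserving (hT s)
  have hGint : ∀ t : ℝ, Integrable (fun x => G t x) μ := by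
    intro t
    have h2 : MemLp (fun x => F (T (B (t + c)) x) - F (T (B t) x)) 2 μ :=
      (hFcomp _).sub (hFcomp _)
    have h3 := (memLp_two_iff_integrable_sq_norm h2.aestronglyMeasurable).mp h2
    simp only [hGdef]
    exact h3
  -- the spectral identity for `F`
  have hTaeq : ∀ s : ℝ, (fun x => f (T s x)) =ᵐ[μ] fun x => F (T s x) := by
    intro s
    exact MeasureTheory.ae_eq_comp (hTm s).aemeasurable
      (by rwa [(hT s).map_eq] : f =ᵐ[Measure.map (T s) μ] F)
  have hspecF : ∀ t : ℝ, ∫ x, F (T t x) * (starRingEnd ℂ) (F x) ∂μ =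
      ∫ s, Complex.exp (2 * ↑Real.pi * Complex.I * (t : ℂ) * (s : ℂ)) ∂σ := by
    intro t
    rw [← hσspec t]
    apply integral_congr_ae
    filter_upwards [hTaeq t, hfF] with x h1 h2
    rw [← h1, ← h2]
  set σT : ℝ := (σ Set.univ).toReal with hσTdef
  have hσT0 : 0 ≤ σT := ENNReal.toReal_nonneg
  have hnormF : ∫ x, ‖F x‖ ^ 2 ∂μ = σT := by
    have h0 := hspecF 0
    simp only [hT0, id_eq, Complex.ofReal_zero, mul_zero, zero_mul, Complex.exp_zero] at h0
    have hL : ∫ x, F x * (starRingEnd ℂ) (F x) ∂μ = ((∫ x, ‖F x‖ ^ 2 ∂μ : ℝ) : ℂ) := by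
      have h1 : ∀ x : X, F x * (starRingEnd ℂ) (F x) = ((‖F x‖ ^ 2 : ℝ) : ℂ) := by
        intro x
        rw [Complex.mul_conj]
        norm_cast
        rw [Complex.normSq_eq_norm_sq]
      calc ∫ x, F x * (starRingEnd ℂ) (F x) ∂μ = ∫ x, ((‖F x‖ ^ 2 : ℝ) : ℂ) ∂μ := by
            simp only [h1]
        _ = ((∫ x, ‖F x‖ ^ 2 ∂μ : ℝ) : ℂ) := integral_ofReal
    have hR : ∫ _ : ℝ, (1 : ℂ) ∂σ = ((σT : ℝ) : ℂ) := by
      rw [integral_const]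
      simp [hσTdef, measureReal_def]
    rw [hL, hR] at h0
    exact_mod_cast h0
  -- Step A : the spectral bound for a single time shift
  have stepA : ∀ s : ℝ, ∫ x, ‖F (T s x) - F x‖ ^ 2 ∂μ
      ≤ σT * (16 * Real.pi ^ 2 * M ^ 2) * s ^ 2 := by
    intro s
    have hint1 : Integrable (fun x => ‖F (T s x)‖ ^ 2) μ :=
      (memLp_two_iff_integrable_sq_norm (hFcomp s).aestronglyMeasurable).mp (hFcomp s)
    have hint2 : Integrable (fun x => ‖F x‖ ^ 2) μ :=
      (memLp_two_iff_integrable_sq_norm hFL2.aestronglyMeasurable).mp hFL2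
    have hconj : MemLp (fun x => (starRingEnd ℂ) (F x)) 2 μ := by
      refine hFL2.of_le ?_ (Eventually.of_forall fun x => ?_)
      · exact Complex.continuous_conj.comp_aestronglyMeasurable hFL2.aestronglyMeasurable
      · simp
    have hprod : Integrable (fun x => F (T s x) * (starRingEnd ℂ) (F x)) μ := by
      have h12 : (1 : ℝ≥0∞) / 1 = 1 / 2 + 1 / 2 := by
        rw [one_div, one_div, inv_one, ENNReal.inv_two_add_inv_two]
      have := (hconj.smul (hFcomp s) : MemLp ((fun x => F (T s x)) • fun x =>
        (starRingEnd ℂ) (F x)) 1 μ)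
      rw [memLp_one_iff_integrable] at this
      simpa [Pi.smul_apply, smul_eq_mul, Pi.mul_def] using this
    have hre : Integrable (fun x => (F (T s x) * (starRingEnd ℂ) (F x)).re) μ := by
      have := hprod.re
      simpa [RCLike.re_to_complex] using this
    have key : ∀ z w : ℂ, ‖z - w‖ ^ 2 = ‖z‖ ^ 2 + ‖w‖ ^ 2 - 2 * (z * (starRingEnd ℂ) w).re := by
      intro z w
      rw [Complex.sq_norm,
        Complex.sq_norm, Complex.sq_norm, Complex.normSq_sub]
    have hexp : (fun x => ‖F (T s x) - F x‖ ^ 2)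
        = fun x => ‖F (T s x)‖ ^ 2 + ‖F x‖ ^ 2
            - 2 * (F (T s x) * (starRingEnd ℂ) (F x)).re := by
      funext x; exact key _ _
    have hint12 : Integrable (fun x => ‖F (T s x)‖ ^ 2 + ‖F x‖ ^ 2) μ := hint1.add hint2
    have hre2 : Integrable (fun x => 2 * (F (T s x) * (starRingEnd ℂ) (F x)).re) μ :=
      hre.const_mul 2
    rw [hexp, integral_sub hint12 hre2, integral_add hint1 hint2, integral_const_mul]
    have hcomp : ∫ x, ‖F (T s x)‖ ^ 2 ∂μ = σT := by
      rw [aux_integral_comp_mp (hTm s) (hT s) (fun x => ‖F x‖ ^ 2)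
        ((hFm.norm.pow_const 2).aestronglyMeasurable)]
      exact hnormF
    have hIre : ∫ x, (F (T s x) * (starRingEnd ℂ) (F x)).re ∂μ
        = (∫ u : ℝ, Complex.exp (2 * ↑Real.pi * Complex.I * (s : ℂ) * (u : ℂ)) ∂σ).re := by
      have h := integral_re hprod
      simp only [RCLike.re_to_complex] at h
      rw [h, hspecF s]
    rw [hcomp, hnormF, hIre]
    -- now work on the σ side
    have hform : ∀ u : ℝ, 2 * (Real.pi : ℂ) * Complex.I * (s : ℂ) * (u : ℂ)
        = ((2 * Real.pi * s * u : ℝ) : ℂ) * Complex.I := by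
      intro u; push_cast; ring
    have hcont : Continuous fun u : ℝ =>
        Complex.exp (2 * (Real.pi : ℂ) * Complex.I * (s : ℂ) * (u : ℂ)) := by
      apply Complex.continuous_exp.comp
      continuity
    have hnorm1 : ∀ u : ℝ,
        ‖Complex.exp (2 * (Real.pi : ℂ) * Complex.I * (s : ℂ) * (u : ℂ))‖ = 1 := by
      intro u
      rw [hform u, Complex.norm_exp_ofReal_mul_I]
    have hexpint : Integrable (fun u : ℝ =>
        Complex.exp (2 * (Real.pi : ℂ) * Complex.I * (s : ℂ) * (u : ℂ))) σ := by
      refine Integrable.mono' (integrable_const (1 : ℝ)) hcont.aestronglyMeasurable ?_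
      exact Eventually.of_forall fun u => le_of_eq (hnorm1 u)
    have hreint : Integrable (fun u : ℝ =>
        (Complex.exp (2 * (Real.pi : ℂ) * Complex.I * (s : ℂ) * (u : ℂ))).re) σ := by
      have := hexpint.re
      simpa [RCLike.re_to_complex] using this
    have hσae : ∀ᵐ u ∂σ, |u| ≤ M := by
      have h1 : ∀ᵐ u ∂σ, u ∈ Set.Icc (-M) M := by
        rw [ae_iff]
        have h2 : {u : ℝ | ¬ u ∈ Set.Icc (-M) M} = (Set.Icc (-M) M)ᶜ := rfl
        rw [h2]
        exact hσsupp
      filter_upwards [h1] with u hu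
      exact abs_le.mpr ⟨hu.1, hu.2⟩
    have hptbd : ∀ᵐ u : ℝ ∂σ, 2 - 2 * (Complex.exp (2 * (Real.pi : ℂ) * Complex.I
        * (s : ℂ) * (u : ℂ))).re ≤ 16 * Real.pi ^ 2 * M ^ 2 * s ^ 2 := by
      filter_upwards [hσae] with u hu
      have h1 := aux_two_sub_two_re_exp (2 * Real.pi * s * u)
      rw [← hform u] at h1
      have hu2 : u ^ 2 ≤ M ^ 2 := by
        have h3 := sq_abs u
        nlinarith [abs_nonneg u]
      nlinarith [sq_nonneg (Real.pi * s), sq_nonneg s, mul_le_mul_of_nonneg_left hu2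
        (by positivity : (0:ℝ) ≤ 16 * Real.pi ^ 2 * s ^ 2)]
    have hreint2 : Integrable (fun u : ℝ =>
        2 * (Complex.exp (2 * (Real.pi : ℂ) * Complex.I * (s : ℂ) * (u : ℂ))).re) σ :=
      hreint.const_mul 2
    have hsub_int : Integrable (fun u : ℝ => 2 - 2 * (Complex.exp (2 * (Real.pi : ℂ)
        * Complex.I * (s : ℂ) * (u : ℂ))).re) σ := (integrable_const 2).sub hreint2
    have hmono : ∫ u : ℝ, (2 - 2 * (Complex.exp (2 * (Real.pi : ℂ) * Complex.I * (s : ℂ)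
        * (u : ℂ))).re) ∂σ ≤ ∫ _u : ℝ, (16 * Real.pi ^ 2 * M ^ 2 * s ^ 2) ∂σ :=
      integral_mono_ae hsub_int (integrable_const _) hptbd
    have hIre2 : ∫ u : ℝ, (Complex.exp (2 * (Real.pi : ℂ) * Complex.I
        * (s : ℂ) * (u : ℂ))).re ∂σ
        = (∫ u : ℝ, Complex.exp (2 * (Real.pi : ℂ) * Complex.I * (s : ℂ)
          * (u : ℂ)) ∂σ).re := by
      have h := integral_re hexpint
      simp only [RCLike.re_to_complex] at h
      rw [h]
    have hsplit : ∫ u : ℝ, (2 - 2 * (Complex.exp (2 * (Real.pi : ℂ) * Complex.I * (s : ℂ)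
        * (u : ℂ))).re) ∂σ = 2 * σT - 2 * ∫ u : ℝ, (Complex.exp (2 * (Real.pi : ℂ)
        * Complex.I * (s : ℂ) * (u : ℂ))).re ∂σ := by
      rw [integral_sub (integrable_const 2) hreint2, integral_const, integral_const_mul,
        smul_eq_mul, measureReal_def, ← hσTdef]
      ring
    have hconstint : ∫ _u : ℝ, (16 * Real.pi ^ 2 * M ^ 2 * s ^ 2) ∂σ
        = σT * (16 * Real.pi ^ 2 * M ^ 2 * s ^ 2) := by
      rw [integral_const, smul_eq_mul, measureReal_def, ← hσTdef]
    rw [hsplit, hconstint, hIre2] at hmono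
    nlinarith [hmono]
  -- per-time bound via the mean value theorem
  set K1 : ℝ := σT * (16 * Real.pi ^ 2 * M ^ 2) * c ^ 2 with hK1def
  have hK1 : 0 ≤ K1 := by positivity
  have hIt : ∀ t, t₀ ≤ t → ∫ x, G t x ∂μ ≤ K1 * deriv b t := by
    intro t ht
    have htc : t₀ ≤ t + c := ht.trans (le_add_of_nonneg_right hc)
    set s : ℝ := b (t + c) - b t with hsdef
    have hs : 0 ≤ s ∧ s ≤ c * deriv b t := by
      rcases eq_or_lt_of_le hc with h0 | h0
      · constructor <;> simp [hsdef, ← h0]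
      · have hlt : t < t + c := lt_add_of_pos_right t h0
        obtain ⟨ξ, hξ, hξd⟩ := exists_deriv_eq_slope b hlt
          (fun z hz => ((hbdiff z (ht.trans hz.1)).continuousAt).continuousWithinAt)
          (fun z hz => (hbdiff z (ht.trans hz.1.le)).differentiableWithinAt)
        have hξt₀ : t₀ ≤ ξ := ht.trans hξ.1.le
        have h1 : s = c * deriv b ξ := by
          rw [hξd, add_sub_cancel_left, hsdef]
          field_simp
        constructor
        · rw [h1]; exact mul_nonneg hc (hb'01 ξ hξt₀).1
        · rw [h1]; exact mul_le_mul_of_nonneg_left (hb'dec t ξ ht hξ.1.le) hc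
    have hBt : B t = b t := hBeq t ht
    have hBtc : B (t + c) = b (t + c) := hBeq _ htc
    have hsplit : ∀ x : X, G t x = (fun z => ‖F (T s z) - F z‖ ^ 2) (T (b t) x) := by
      intro x
      simp only [hGdef, hBt, hBtc]
      have h2 : b (t + c) = s + b t := by rw [hsdef]; ring
      rw [h2, hTadd]
      rfl
    calc ∫ x, G t x ∂μ = ∫ x, (fun z => ‖F (T s z) - F z‖ ^ 2) (T (b t) x) ∂μ := by
          simp only [hsplit]
      _ = ∫ z, ‖F (T s z) - F z‖ ^ 2 ∂μ := aux_integral_comp_mp (hTm _) (hT _) _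
          (((hFm.comp (hTm s)).sub hFm).norm.pow_const 2).aestronglyMeasurable
      _ ≤ σT * (16 * Real.pi ^ 2 * M ^ 2) * s ^ 2 := stepA s
      _ ≤ K1 * deriv b t := by
          have h2 : s ^ 2 ≤ (c * deriv b t) ^ 2 := pow_le_pow_left₀ hs.1 hs.2 2
          have h3 : (deriv b t) ^ 2 ≤ deriv b t := by
            nlinarith [(hb'01 t ht).1, (hb'01 t ht).2]
          have h4 : (0:ℝ) ≤ σT * (16 * Real.pi ^ 2 * M ^ 2) := by positivity
          have e1 : σT * (16 * Real.pi ^ 2 * M ^ 2) * s ^ 2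
              ≤ σT * (16 * Real.pi ^ 2 * M ^ 2) * (c * deriv b t) ^ 2 :=
            mul_le_mul_of_nonneg_left h2 h4
          have e2 : σT * (16 * Real.pi ^ 2 * M ^ 2) * (c * deriv b t) ^ 2
              = K1 * (deriv b t) ^ 2 := by rw [hK1def]; ring
          have e3 : K1 * (deriv b t) ^ 2 ≤ K1 * deriv b t :=
            mul_le_mul_of_nonneg_left h3 hK1
          linarith
  -- lintegral machinery
  have hb'm : Measurable (deriv b) := measurable_deriv b
  set eg : ℝ → X → ℝ≥0∞ := fun t x => ENNReal.ofReal (G t x) with hegdef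
  have hegm : Measurable fun p : ℝ × X => eg p.1 p.2 := ENNReal.measurable_ofReal.comp hGm
  have hegm' : Measurable fun p : X × ℝ => eg p.2 p.1 := hegm.comp measurable_swap
  have keyJ : ∀ y : ℝ, t₀ ≤ y →
      ∫⁻ t in Set.Ioc t₀ y, ∫⁻ x, eg t x ∂μ ≤ ENNReal.ofReal (K1 * y ^ (1 - δ)) := by
    intro y hy
    have hb'intOn : IntegrableOn (deriv b) (Set.Ioc t₀ y) := by
      refine Integrable.mono' (integrable_const 1) hb'm.aestronglyMeasurable ?_
      rw [ae_restrict_iff' measurableSet_Ioc]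
      refine Eventually.of_forall fun t ht => ?_
      rw [Real.norm_eq_abs, abs_le]
      exact ⟨by linarith [(hb'01 t ht.1.le).1], (hb'01 t ht.1.le).2⟩
    have step1 : ∫⁻ t in Set.Ioc t₀ y, ∫⁻ x, eg t x ∂μ
        ≤ ∫⁻ t in Set.Ioc t₀ y, ENNReal.ofReal (K1 * deriv b t) := by
      refine lintegral_mono_ae ?_
      filter_upwards [ae_restrict_mem measurableSet_Ioc] with t ht
      have heq : ∫⁻ x, eg t x ∂μ = ENNReal.ofReal (∫ x, G t x ∂μ) :=
        (ofReal_integral_eq_lintegral_ofReal (hGint t)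
          (Eventually.of_forall fun x => hGnonneg t x)).symm
      rw [heq]
      exact ENNReal.ofReal_le_ofReal (hIt t ht.1.le)
    have hnn2 : 0 ≤ᵐ[volume.restrict (Set.Ioc t₀ y)] fun t => K1 * deriv b t := by
      filter_upwards [ae_restrict_mem measurableSet_Ioc] with t ht
      exact mul_nonneg hK1 (hb'01 t ht.1.le).1
    have step2 : ∫⁻ t in Set.Ioc t₀ y, ENNReal.ofReal (K1 * deriv b t)
        = ENNReal.ofReal (∫ t in Set.Ioc t₀ y, K1 * deriv b t) :=
      (ofReal_integral_eq_lintegral_ofReal (hb'intOn.const_mul K1) hnn2).symm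
    have step3 : ∫ t in Set.Ioc t₀ y, K1 * deriv b t ≤ K1 * y ^ (1 - δ) := by
      rw [integral_const_mul]
      have hftc : ∫ t in Set.Ioc t₀ y, deriv b t = b y - b t₀ := by
        rw [← intervalIntegral.integral_of_le hy]
        exact intervalIntegral.integral_deriv_eq_sub
          (fun z hz => hbdiff z (by rw [Set.uIcc_of_le hy] at hz; exact hz.1))
          ((intervalIntegrable_iff_integrableOn_Ioc_of_le hy).mpr hb'intOn)
      rw [hftc]
      have h5 : b y - b t₀ ≤ y ^ (1 - δ) := by
        have h6 := hbgrow y hy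
        have h7 := hbpos t₀ ht₀
        linarith
      exact mul_le_mul_of_nonneg_left h5 hK1
    calc ∫⁻ t in Set.Ioc t₀ y, ∫⁻ x, eg t x ∂μ
        ≤ ∫⁻ t in Set.Ioc t₀ y, ENNReal.ofReal (K1 * deriv b t) := step1
      _ = ENNReal.ofReal (∫ t in Set.Ioc t₀ y, K1 * deriv b t) := step2
      _ ≤ ENNReal.ofReal (K1 * y ^ (1 - δ)) := ENNReal.ofReal_le_ofReal step3
  have keyJ' : ∀ y : ℝ, t₀ ≤ y →
      ∫⁻ x, (∫⁻ t in Set.Ioc t₀ y, eg t x) ∂μ ≤ ENNReal.ofReal (K1 * y ^ (1 - δ)) := by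
    intro y hy
    rw [lintegral_lintegral_swap hegm'.aemeasurable]
    exact keyJ y hy
  have hA_sm : ∀ y : ℝ, StronglyMeasurable fun x => ∫ t in Set.Ioc t₀ y, G t x := by
    intro y
    have hsm : StronglyMeasurable (Function.uncurry fun (x : X) (t : ℝ) => G t x) :=
      (hGm.comp measurable_swap).stronglyMeasurable
    exact hsm.integral_prod_right
  have hegint_m : ∀ y : ℝ, Measurable fun x => ∫⁻ t in Set.Ioc t₀ y, eg t x := by
    intro y
    exact hegm'.lintegral_prod_right' (ν := volume.restrict (Set.Ioc t₀ y))
  -- the main L¹ bound at lintegral level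
  have lbound : ∀ y : ℝ, t₀ ≤ y → 0 < y →
      ∫⁻ x, ENNReal.ofReal (y⁻¹ * ∫ t in Set.Ioc t₀ y, G t x) ∂μ
        ≤ ENNReal.ofReal (K1 / y ^ δ) := by
    intro y hy hy0
    have h1 : ∀ x : X, ENNReal.ofReal (y⁻¹ * ∫ t in Set.Ioc t₀ y, G t x)
        ≤ ENNReal.ofReal y⁻¹ * ∫⁻ t in Set.Ioc t₀ y, eg t x := by
      intro x
      rw [ENNReal.ofReal_mul (by positivity)]
      refine mul_le_mul_right ?_ _
      by_cases hi : IntegrableOn (fun t => G t x) (Set.Ioc t₀ y) volume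
      · rw [ofReal_integral_eq_lintegral_ofReal hi (Eventually.of_forall fun t => hGnonneg t x)]
      · rw [integral_undef hi]; simp
    calc ∫⁻ x, ENNReal.ofReal (y⁻¹ * ∫ t in Set.Ioc t₀ y, G t x) ∂μ
        ≤ ∫⁻ x, (ENNReal.ofReal y⁻¹ * ∫⁻ t in Set.Ioc t₀ y, eg t x) ∂μ := lintegral_mono h1
      _ = ENNReal.ofReal y⁻¹ * ∫⁻ x, (∫⁻ t in Set.Ioc t₀ y, eg t x) ∂μ :=
          lintegral_const_mul _ (hegint_m y)
      _ ≤ ENNReal.ofReal y⁻¹ * ENNReal.ofReal (K1 * y ^ (1 - δ)) :=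
          mul_le_mul_right (keyJ' y hy) _
      _ = ENNReal.ofReal (y⁻¹ * (K1 * y ^ (1 - δ))) :=
          (ENNReal.ofReal_mul (by positivity)).symm
      _ = ENNReal.ofReal (K1 / y ^ δ) := by
          congr 1
          rw [Real.rpow_sub hy0, Real.rpow_one]
          have hyδ : (0:ℝ) < y ^ δ := Real.rpow_pos_of_pos hy0 δ
          field_simp
  -- a.e. identification of the statement's integrand with `G`
  have haeq : ∀ᵐ x ∂μ, ∀ y : ℝ,
      ∫ t in Set.Ioc t₀ y, ‖f (T (b (t + c)) x) - f (T (b t) x)‖ ^ 2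
        = ∫ t in Set.Ioc t₀ y, G t x := by
    obtain ⟨N, hsubN, hNmeas, hNnull⟩ := exists_measurable_superset_of_null (ae_iff.mp hfF)
    have hfFN : ∀ z, z ∉ N → f z = F z := by
      intro z hz
      by_contra hne
      exact hz (hsubN hne)
    set W : Set (X × ℝ) := {p | T (B (p.2 + c)) p.1 ∈ N ∨ T (B p.2) p.1 ∈ N} with hWdef
    have hφ1 : Measurable fun p : X × ℝ => T (B (p.2 + c)) p.1 :=
      hTmeas.comp (((hBm.comp (measurable_add_const c)).comp measurable_snd).prodMk
        measurable_fst)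
    have hφ2 : Measurable fun p : X × ℝ => T (B p.2) p.1 :=
      hTmeas.comp ((hBm.comp measurable_snd).prodMk measurable_fst)
    have hWmeas : MeasurableSet W := (hφ1 hNmeas).union (hφ2 hNmeas)
    have hWnull : (μ.prod (volume.restrict (Set.Ioi t₀))) W = 0 := by
      rw [Measure.prod_apply_symm hWmeas]
      have hslice : ∀ t : ℝ, μ ((fun x => (x, t)) ⁻¹' W) = 0 := by
        intro t
        have hsub : ((fun x : X => (x, t)) ⁻¹' W)
            ⊆ (T (B (t + c)) ⁻¹' N) ∪ (T (B t) ⁻¹' N) := fun x hx => hx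
        refine measure_mono_null hsub (measure_union_null ?_ ?_)
        · rw [(hT (B (t + c))).measure_preimage hNmeas.nullMeasurableSet]; exact hNnull
        · rw [(hT (B t)).measure_preimage hNmeas.nullMeasurableSet]; exact hNnull
      simp [hslice]
    have hae1 : ∀ᵐ x ∂μ, (volume.restrict (Set.Ioi t₀)) (Prod.mk x ⁻¹' W) = 0 := by
      have := (Measure.measure_prod_null hWmeas).mp hWnull
      filter_upwards [this] with x hx
      exact hx
    filter_upwards [hae1] with x hx
    intro y
    have hae2 : ∀ᵐ t ∂(volume.restrict (Set.Ioi t₀)), t ∉ Prod.mk x ⁻¹' W :=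
      measure_eq_zero_iff_ae_notMem.mp hx
    have hae3 : ∀ᵐ t ∂(volume.restrict (Set.Ioi t₀)),
        ‖f (T (b (t + c)) x) - f (T (b t) x)‖ ^ 2 = G t x := by
      filter_upwards [hae2, ae_restrict_mem measurableSet_Ioi] with t htW ht
      have ht' : t₀ ≤ t := le_of_lt ht
      have htc' : t₀ ≤ t + c := ht'.trans (le_add_of_nonneg_right hc)
      simp only [hWdef, Set.mem_preimage, Set.mem_setOf_eq] at htW
      push_neg at htW
      have h1 : T (B (t + c)) x ∉ N := htW.1
      have h2 : T (B t) x ∉ N := htW.2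
      simp only [hGdef]
      rw [← hBeq _ htc', ← hBeq _ ht', hfFN _ h1, hfFN _ h2]
    exact integral_congr_ae (ae_restrict_of_ae_restrict_of_subset Set.Ioc_subset_Ioi_self hae3)
  -- Part 1
  refine ⟨⟨K1, ?_⟩, ?_⟩
  · intro y hy hy0
    have hcongr : ∫ x, (y⁻¹ * ∫ t in Set.Ioc t₀ y, ‖f (T (b (t + c)) x) - f (T (b t) x)‖ ^ 2) ∂μ
        = ∫ x, (y⁻¹ * ∫ t in Set.Ioc t₀ y, G t x) ∂μ := by
      apply integral_congr_ae
      filter_upwards [haeq] with x hx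
      rw [hx y]
    rw [hcongr]
    have hnn : 0 ≤ᵐ[μ] fun x => y⁻¹ * ∫ t in Set.Ioc t₀ y, G t x :=
      Eventually.of_forall fun x =>
        mul_nonneg (by positivity) (integral_nonneg fun t => hGnonneg t x)
    rw [integral_eq_lintegral_of_nonneg_ae hnn ((hA_sm y).const_mul y⁻¹).aestronglyMeasurable]
    have hb2 := lbound y hy hy0
    have h3 := ENNReal.toReal_mono ENNReal.ofReal_ne_top hb2
    rw [ENNReal.toReal_ofReal (by positivity)] at h3
    exact h3
  -- Part 2
  · set a : ℝ := (⌈δ⁻¹⌉₊ : ℝ) + 1 with hadef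
    have ha0 : 0 ≤ (⌈δ⁻¹⌉₊ : ℝ) := Nat.cast_nonneg _
    have ha1 : 1 ≤ a := by rw [hadef]; linarith
    have haδ : 1 < a * δ := by
      have h1 : δ⁻¹ < a := lt_of_le_of_lt (Nat.le_ceil δ⁻¹) (by rw [hadef]; linarith)
      calc 1 = δ⁻¹ * δ := (inv_mul_cancel₀ (ne_of_gt hδ)).symm
        _ < a * δ := mul_lt_mul_of_pos_right h1 hδ
    set u : ℕ → ℝ := fun N => t₀ + ((N : ℝ) + 1) ^ a with hudef
    have hcast : ∀ N : ℕ, (0:ℝ) ≤ (N : ℝ) := fun N => Nat.cast_nonneg N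
    have hu1 : ∀ N : ℕ, 1 ≤ ((N : ℝ) + 1) ^ a := fun N =>
      Real.one_le_rpow (by linarith [hcast N]) (by linarith)
    have hut₀ : ∀ N : ℕ, t₀ ≤ u N := fun N => le_add_of_nonneg_right (by linarith [hu1 N])
    have hu0 : ∀ N : ℕ, 0 < u N := fun N => by
      have := hu1 N; simp only [hudef]; linarith
    have huN : ∀ N : ℕ, (N : ℝ) ≤ u N := by
      intro N
      have h2 : (N : ℝ) + 1 ≤ ((N : ℝ) + 1) ^ a := by
        calc (N : ℝ) + 1 = ((N : ℝ) + 1) ^ (1 : ℝ) := (Real.rpow_one _).symm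
          _ ≤ _ := Real.rpow_le_rpow_of_exponent_le (by linarith [hcast N]) ha1
      simp only [hudef]; linarith
    have hugrow : ∀ N : ℕ, u (N + 1) ≤ (2:ℝ) ^ a * u N := by
      intro N
      have hc1 : ((N : ℝ) + 1) + 1 ≤ 2 * ((N : ℝ) + 1) := by linarith [hcast N]
      have hc2 : (((N : ℝ) + 1) + 1) ^ a ≤ (2 * ((N : ℝ) + 1)) ^ a :=
        Real.rpow_le_rpow (by linarith [hcast N]) hc1 (by linarith)
      have hc3 : (2 * ((N : ℝ) + 1)) ^ a = 2 ^ a * ((N : ℝ) + 1) ^ a :=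
        Real.mul_rpow (by norm_num) (by linarith [hcast N])
      have hc4 : (1:ℝ) ≤ 2 ^ a := Real.one_le_rpow (by norm_num) (by linarith)
      have he : u (N + 1) = t₀ + (((N : ℝ) + 1) + 1) ^ a := by
        simp only [hudef]; push_cast; ring_nf
      rw [he]
      simp only [hudef]
      nlinarith [Real.rpow_nonneg (by linarith [hcast N] : (0:ℝ) ≤ (N : ℝ) + 1) a]
    -- summability
    have hsummable : Summable fun N : ℕ => K1 / u N ^ δ := by
      have h := Real.summable_one_div_nat_rpow.mpr haδ
      have h2 : Summable fun n : ℕ => 1 / ((n : ℝ) + 1) ^ (a * δ) := by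
        have h3 := (summable_nat_add_iff 1).mpr h
        refine h3.congr fun n => ?_
        push_cast
        ring_nf
      have hmaj : Summable fun N : ℕ => K1 * (1 / ((N : ℝ) + 1) ^ (a * δ)) := h2.mul_left K1
      refine Summable.of_nonneg_of_le (fun N => by positivity) (fun N => ?_) hmaj
      have h1 : ((N : ℝ) + 1) ^ (a * δ) ≤ u N ^ δ := by
        rw [Real.rpow_mul (by linarith [hcast N])]
        exact Real.rpow_le_rpow (Real.rpow_nonneg (by linarith [hcast N]) a)
          (le_add_of_nonneg_left ht₀) hδ.le
      rw [div_eq_mul_one_div]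
      refine mul_le_mul_of_nonneg_left ?_ hK1
      exact one_div_le_one_div_of_le (Real.rpow_pos_of_pos (by linarith [hcast N]) _) h1
    set AG : ℝ → X → ℝ := fun y x => y⁻¹ * ∫ t in Set.Ioc t₀ y, G t x with hAGdef
    have hAGnonneg : ∀ y x, 0 < y → 0 ≤ AG y x := fun y x hy =>
      mul_nonneg (inv_nonneg.mpr hy.le) (integral_nonneg fun t => hGnonneg t x)
    have hAGm : ∀ y : ℝ, Measurable fun x => ENNReal.ofReal (AG y x) := fun y =>
      ENNReal.measurable_ofReal.comp ((hA_sm y).const_mul y⁻¹).measurable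
    have htsum : ∑' N : ℕ, ∫⁻ x, ENNReal.ofReal (AG (u N) x) ∂μ ≠ ⊤ := by
      have hle : ∀ N : ℕ, ∫⁻ x, ENNReal.ofReal (AG (u N) x) ∂μ
          ≤ ENNReal.ofReal (K1 / u N ^ δ) := fun N => lbound (u N) (hut₀ N) (hu0 N)
      refine ne_top_of_le_ne_top ?_ (ENNReal.tsum_le_tsum hle)
      rw [← ENNReal.ofReal_tsum_of_nonneg (fun N => by positivity) hsummable]
      exact ENNReal.ofReal_ne_top
    have hBC : ∀ᵐ x ∂μ, Tendsto (fun N : ℕ => AG (u N) x) atTop (nhds 0) := by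
      have h1 : ∫⁻ x, (∑' N : ℕ, ENNReal.ofReal (AG (u N) x)) ∂μ ≠ ⊤ := by
        rw [lintegral_tsum fun N : ℕ => (hAGm (u N)).aemeasurable]
        exact htsum
      filter_upwards [ae_lt_top' (Measurable.ennreal_tsum fun N : ℕ => hAGm (u N)).aemeasurable h1]
        with x hx
      have h2 : Tendsto (fun N : ℕ => ENNReal.ofReal (AG (u N) x)) atTop (nhds 0) :=
        ENNReal.tendsto_atTop_zero_of_tsum_ne_top hx.ne
      have h3 : (fun N : ℕ => AG (u N) x)
          = fun N => (ENNReal.ofReal (AG (u N) x)).toReal :=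
        funext fun N => (ENNReal.toReal_ofReal (hAGnonneg _ x (hu0 N))).symm
      rw [h3]
      have h4 := (ENNReal.tendsto_toReal (by simp : (0 : ℝ≥0∞) ≠ ⊤)).comp h2
      exact h4
    have hfin : ∀ᵐ x ∂μ, ∀ N : ℕ, (∫⁻ t in Set.Ioc t₀ (u N), eg t x) < ⊤ := by
      rw [ae_all_iff]
      intro N
      exact ae_lt_top' (hegint_m (u N)).aemeasurable
        (lt_of_le_of_lt (keyJ' (u N) (hut₀ N)) ENNReal.ofReal_lt_top).ne
    have hIntOn : ∀ᵐ x ∂μ, ∀ N : ℕ,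
        IntegrableOn (fun t => G t x) (Set.Ioc t₀ (u N)) volume := by
      filter_upwards [hfin] with x hx N
      refine ⟨(hGtm x).aestronglyMeasurable, ?_⟩
      rw [hasFiniteIntegral_iff_norm]
      refine lt_of_le_of_lt (lintegral_mono fun t => ?_) (hx N)
      rw [Real.norm_eq_abs, abs_of_nonneg (hGnonneg t x)]
    -- final assembly
    filter_upwards [haeq, hBC, hIntOn] with x hxeq hxBC hxInt
    have hfun : (fun y : ℝ =>
        y⁻¹ * ∫ t in Set.Ioc t₀ y, ‖f (T (b (t + c)) x) - f (T (b t) x)‖ ^ 2)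
        = fun y => AG y x := funext fun y => by rw [hxeq y]
    rw [hfun, NormedAddCommGroup.tendsto_nhds_zero]
    intro ε hε
    set R : ℝ := (2:ℝ) ^ a with hRdef
    have hR1 : 1 ≤ R := Real.one_le_rpow (by norm_num) (by linarith)
    have hR0 : 0 < R := lt_of_lt_of_le one_pos hR1
    have hεR : 0 < ε / R := div_pos hε hR0
    obtain ⟨N₀, hN₀⟩ := eventually_atTop.mp (hxBC.eventually_lt_const hεR)
    rw [eventually_atTop]
    refine ⟨u N₀, fun y hyY => ?_⟩
    have hy0 : 0 < y := lt_of_lt_of_le (hu0 N₀) hyY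
    set P : ℕ → Prop := fun N => u N ≤ y with hPdef
    have hN₀y : P N₀ := hyY
    have hN₀M : N₀ ≤ ⌈y⌉₊ := by
      have h5 : (N₀ : ℝ) ≤ (⌈y⌉₊ : ℝ) := le_trans (le_trans (huN N₀) hyY) (Nat.le_ceil y)
      exact_mod_cast h5
    set K := Nat.findGreatest P ⌈y⌉₊ with hKdef
    have hKy : u K ≤ y := Nat.findGreatest_spec hN₀M hN₀y
    have hN₀K : N₀ ≤ K := Nat.le_findGreatest hN₀M hN₀y
    have hyK1 : y < u (K + 1) := by
      by_contra hcon
      push_neg at hcon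
      have hle : K + 1 ≤ ⌈y⌉₊ := by
        have h6 : ((K + 1 : ℕ) : ℝ) ≤ (⌈y⌉₊ : ℝ) :=
          le_trans (le_trans (huN (K + 1)) hcon) (Nat.le_ceil y)
        exact_mod_cast h6
      exact Nat.findGreatest_is_greatest (Nat.lt_succ_self K) hle hcon
    have hK1pos : 0 < u (K + 1) := hu0 _
    have hΦnn : 0 ≤ ∫ t in Set.Ioc t₀ (u (K + 1)), G t x :=
      integral_nonneg fun t => hGnonneg t x
    have hmono : ∫ t in Set.Ioc t₀ y, G t x ≤ ∫ t in Set.Ioc t₀ (u (K + 1)), G t x :=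
      setIntegral_mono_set (hxInt (K + 1)) (Eventually.of_forall fun t => hGnonneg t x)
        (HasSubset.Subset.eventuallyLE (Set.Ioc_subset_Ioc_right hyK1.le))
    have hstep : AG y x ≤ R * AG (u (K + 1)) x := by
      have e1 : AG y x ≤ y⁻¹ * ∫ t in Set.Ioc t₀ (u (K + 1)), G t x :=
        mul_le_mul_of_nonneg_left hmono (inv_nonneg.mpr hy0.le)
      have e2 : y⁻¹ ≤ (u K)⁻¹ := inv_anti₀ (hu0 K) hKy
      have e3 : y⁻¹ * (∫ t in Set.Ioc t₀ (u (K + 1)), G t x)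
          ≤ (u K)⁻¹ * ∫ t in Set.Ioc t₀ (u (K + 1)), G t x :=
        mul_le_mul_of_nonneg_right e2 hΦnn
      have e4 : (u K)⁻¹ ≤ R * (u (K + 1))⁻¹ := by
        have h7 : (1:ℝ) / u K ≤ R / u (K + 1) := by
          rw [div_le_div_iff₀ (hu0 K) hK1pos]
          linarith [hugrow K]
        simpa [one_div, div_eq_mul_inv] using h7
      have e5 : (u K)⁻¹ * (∫ t in Set.Ioc t₀ (u (K + 1)), G t x)
          ≤ (R * (u (K + 1))⁻¹) * ∫ t in Set.Ioc t₀ (u (K + 1)), G t x :=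
        mul_le_mul_of_nonneg_right e4 hΦnn
      have e6 : R * AG (u (K + 1)) x
          = (R * (u (K + 1))⁻¹) * ∫ t in Set.Ioc t₀ (u (K + 1)), G t x := by
        simp only [hAGdef]; ring
      linarith
    have hlast : AG (u (K + 1)) x < ε / R := hN₀ (K + 1) (by omega)
    have hfinal : AG y x < ε := by
      calc AG y x ≤ R * AG (u (K + 1)) x := hstep
        _ < R * (ε / R) := mul_lt_mul_of_pos_left hlast hR0
        _ = ε := by field_simp
    rwa [Real.norm_eq_abs, abs_of_nonneg (hAGnonneg y x hy0)]
end

section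
/- Let (X, μ, T) be an ergodic system, let f_{n,k} ∈ L^∞(μ) be bounded by 1, let N_k → ∞, and suppose f := weak-lim_{k→∞} Avg_{n ∈ [N_k]} f_{n,k} exists in L²(μ). If there exist a > 0, a set Λ ⊂ ℕ with positive lower density, and unimodular eigenfunctions χ_m (m ∈ ℕ) such that Re(∫ (T^m f · conj f) · χ_m dμ) > a for all m ∈ Λ, then liminf_{N→∞} Avg over m, m' ∈ Λ∩[N] of limsup_{k→∞} Avg over n ∈ [N_k] of Re(∫ conj(f_{n,k}) · T^{m−m'} f_{n,k} · T^{−m'}(χ_m · conj(χ_{m'})) dμ) > 0. -/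
open MeasureTheory Filter

private lemma limsup_sum_le_aux {ι : Type*} (s : Finset ι) (u : ι → ℕ → ℝ)
    (hb : ∀ i ∈ s, ∀ k, |u i k| ≤ 1) :
    limsup (fun k => ∑ i ∈ s, u i k) atTop ≤ ∑ i ∈ s, limsup (fun k => u i k) atTop := by
  classical
  induction s using Finset.induction_on with
  | empty => simp
  | @insert a s ha ih =>
    have hba : ∀ k, |u a k| ≤ 1 := fun k => hb a (Finset.mem_insert_self a s) k
    have hbs : ∀ i ∈ s, ∀ k, |u i k| ≤ 1 := fun i hi k => hb i (Finset.mem_insert_of_mem hi) k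
    have h1 : IsBoundedUnder (· ≥ ·) atTop (fun k => u a k) :=
      isBoundedUnder_of ⟨-1, fun k => neg_le_of_abs_le (hba k)⟩
    have h2 : IsBoundedUnder (· ≤ ·) atTop (fun k => u a k) :=
      isBoundedUnder_of ⟨1, fun k => le_of_abs_le (hba k)⟩
    have h4 : IsBoundedUnder (· ≤ ·) atTop (fun k => ∑ i ∈ s, u i k) :=
      isBoundedUnder_of ⟨(s.card : ℝ), fun k => by
        calc ∑ i ∈ s, u i k ≤ ∑ i ∈ s, (1 : ℝ) :=
              Finset.sum_le_sum fun i hi => le_of_abs_le (hbs i hi k)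
          _ = (s.card : ℝ) := by simp⟩
    have h3 : IsCoboundedUnder (· ≤ ·) atTop (fun k => ∑ i ∈ s, u i k) := by
      refine IsBoundedUnder.isCoboundedUnder_le (isBoundedUnder_of ⟨-(s.card : ℝ), fun k => ?_⟩)
      calc ∑ i ∈ s, u i k ≥ ∑ i ∈ s, (-1 : ℝ) :=
            Finset.sum_le_sum fun i hi => neg_le_of_abs_le (hbs i hi k)
        _ = -(s.card : ℝ) := by simp
    calc limsup (fun k => ∑ i ∈ insert a s, u i k) atTop
        = limsup ((fun k => u a k) + fun k => ∑ i ∈ s, u i k) atTop := by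
          congr 1; funext k; simp [Finset.sum_insert ha]
      _ ≤ limsup (fun k => u a k) atTop + limsup (fun k => ∑ i ∈ s, u i k) atTop :=
          limsup_add_le h1 h2 h3 h4
      _ ≤ ∑ i ∈ insert a s, limsup (fun k => u i k) atTop := by
          rw [Finset.sum_insert ha]; exact add_le_add le_rfl (ih hbs)

set_option maxHeartbeats 1000000 in
/-- Let `(X, μ, T)` be an ergodic system, `f_{n,k}` bounded by 1, `N_k → ∞`, and
`f = weak-lim_k 𝔼_{n ∈ [N_k]} f_{n,k}` in `L²(μ)`. If there are `a > 0`, a set `Λ ⊆ ℕ` of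
positive lower density, and unimodular eigenfunctions `χ_m` with
`Re ∫ (T^m f ⋅ conj f) ⋅ χ_m dμ > a` for all `m ∈ Λ`, then
`liminf_N 𝔼_{m, m' ∈ Λ ∩ [N]} limsup_k 𝔼_{n ∈ [N_k]}
  Re ∫ conj(f_{n,k}) ⋅ T^{m−m'} f_{n,k} ⋅ T^{−m'}(χ_m conj χ_{m'}) dμ > 0`. -/
theorem stmt17 {X : Type*} [MeasurableSpace X] (μ : Measure X) [IsProbabilityMeasure μ]
    (T : ℤ → X → X) (hT : ∀ n, MeasurePreserving (T n) μ μ)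
    (hT0 : T 0 = id) (hTadd : ∀ m n, T (m + n) = T m ∘ T n)
    (hErg : Ergodic (T 1) μ)
    (fnk : ℕ → ℕ → X → ℂ) (hfnkL : ∀ n k, MemLp (fnk n k) ⊤ μ)
    (hfnk1 : ∀ n k, ∀ᵐ x ∂μ, ‖fnk n k x‖ ≤ 1)
    (Nk : ℕ → ℕ) (hNk : Tendsto Nk atTop atTop)
    (f : X → ℂ) (hfL : MemLp f ⊤ μ)
    (hweak : ∀ h : X → ℂ, MemLp h 2 μ →
      Tendsto (fun k : ℕ => ∫ x, ((Nk k : ℂ)⁻¹ * ∑ n ∈ Finset.Icc 1 (Nk k), fnk n k x) *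
          (starRingEnd ℂ) (h x) ∂μ) atTop
        (nhds (∫ x, f x * (starRingEnd ℂ) (h x) ∂μ)))
    (a : ℝ) (ha : 0 < a)
    (Λ : Set ℕ) [DecidablePred (· ∈ Λ)]
    (hΛ : 0 < Filter.liminf (fun N : ℕ =>
      (((Finset.Icc 1 N).filter (· ∈ Λ)).card : ℝ) / (N : ℝ)) Filter.atTop)
    (χ : ℕ → X → ℂ)
    (hχ : ∀ m, MemLp (χ m) ⊤ μ ∧ (∀ᵐ x ∂μ, ‖χ m x‖ = 1) ∧
      ∃ t : ℝ, (fun x => χ m (T 1 x)) =ᵐ[μ]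
        fun x => Complex.exp (2 * ↑Real.pi * Complex.I * (t : ℂ)) * χ m x)
    (hpos : ∀ m ∈ Λ, a < (∫ x, (f (T (m : ℤ) x) * (starRingEnd ℂ) (f x)) * χ m x ∂μ).re) :
    0 < Filter.liminf (fun N : ℕ =>
      ((((Finset.Icc 1 N).filter (· ∈ Λ)).card : ℝ))⁻¹ ^ 2 *
      ∑ m ∈ (Finset.Icc 1 N).filter (· ∈ Λ), ∑ m' ∈ (Finset.Icc 1 N).filter (· ∈ Λ),
        Filter.limsup (fun k : ℕ => (Nk k : ℝ)⁻¹ * ∑ n ∈ Finset.Icc 1 (Nk k),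
          (∫ x, (starRingEnd ℂ) (fnk n k x) * fnk n k (T ((m : ℤ) - (m' : ℤ)) x) *
            (χ m (T (-(m' : ℤ)) x) * (starRingEnd ℂ) (χ m' (T (-(m' : ℤ)) x))) ∂μ).re)
          Filter.atTop) Filter.atTop := by
  classical
  -- pointwise group laws
  have hTcomp : ∀ (p q : ℤ) (x : X), T p (T q x) = T (p + q) x :=
    fun p q x => (congrFun (hTadd p q) x).symm
  have hTzero : ∀ x, T 0 x = x := fun x => by rw [hT0]; rfl
  -- change of variables
  have hCoV : ∀ (m : ℤ) (g : X → ℂ), ∫ x, g (T m x) ∂μ = ∫ x, g x ∂μ := by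
    intro m g
    have li : Function.LeftInverse (T (-m)) (T m) := fun x => by
      rw [hTcomp]; simp only [neg_add_cancel]; exact hTzero x
    have ri : Function.RightInverse (T (-m)) (T m) := fun x => by
      rw [hTcomp]; simp only [add_neg_cancel]; exact hTzero x
    exact (hT m).integral_comp (MeasurableEquiv.measurableEmbedding
      ⟨⟨T m, T (-m), li, ri⟩, (hT m).measurable, (hT (-m)).measurable⟩) g
  -- a.e. transfer
  have hae : ∀ (m : ℤ) {p : X → Prop}, (∀ᵐ x ∂μ, p x) → ∀ᵐ x ∂μ, p (T m x) :=
    fun m p hp => (hT m).quasiMeasurePreserving.ae hp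
  -- measurability
  have hmconj : ∀ (g : X → ℂ), AEStronglyMeasurable g μ →
      AEStronglyMeasurable (fun x => (starRingEnd ℂ) (g x)) μ := by
    intro g hg
    have h2 := continuous_star.comp_aestronglyMeasurable (g := star) hg
    exact h2
  have hmT : ∀ (m : ℤ) (g : X → ℂ), AEStronglyMeasurable g μ →
      AEStronglyMeasurable (fun x => g (T m x)) μ :=
    fun m g hg => hg.comp_measurePreserving (hT m)
  have hmf : AEStronglyMeasurable f μ := hfL.1
  have hmfnk : ∀ n k, AEStronglyMeasurable (fnk n k) μ := fun n k => (hfnkL n k).1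
  have hmχ : ∀ m, AEStronglyMeasurable (χ m) μ := fun m => (hχ m).1.1
  have hχ1 : ∀ m, ∀ᵐ x ∂μ, ‖χ m x‖ = 1 := fun m => (hχ m).2.1
  -- bound for f
  obtain ⟨C, hC1, hfC⟩ : ∃ C : ℝ, 1 ≤ C ∧ ∀ᵐ x ∂μ, ‖f x‖ ≤ C := by
    refine ⟨max 1 (eLpNormEssSup f μ).toReal, le_max_left _ _, ?_⟩
    have hne : eLpNormEssSup f μ ≠ ⊤ := by
      rw [← eLpNorm_exponent_top]; exact hfL.2.ne
    filter_upwards [ae_le_eLpNormEssSup (f := f) (μ := μ)] with x hx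
    refine le_max_of_le_right ?_
    simpa using ENNReal.toReal_mono hne hx
  have hC0 : (0:ℝ) < C := lt_of_lt_of_le one_pos hC1
  -- integrability helper
  have hInt : ∀ (g : X → ℂ) (c : ℝ), AEStronglyMeasurable g μ → (∀ᵐ x ∂μ, ‖g x‖ ≤ c) →
      Integrable g μ := fun g c hg hb => (integrable_const c).mono' hg hb
  -- the auxiliary functions h m and u0
  set h : ℕ → X → ℂ := fun m x => f (T (-(m:ℤ)) x) * (starRingEnd ℂ) (χ m (T (-(m:ℤ)) x)) with hhdef
  set u0 : ℕ → ℕ → ℕ → X → ℂ := fun n k m x => fnk n k (T (m:ℤ) x) * χ m x with hu0def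
  have hmh : ∀ m, AEStronglyMeasurable (h m) μ :=
    fun m => (hmT _ _ hmf).mul (hmconj _ (hmT _ _ (hmχ m)))
  have hbh : ∀ m, ∀ᵐ x ∂μ, ‖h m x‖ ≤ C := by
    intro m
    filter_upwards [hae (-(m:ℤ)) hfC, hae (-(m:ℤ)) (hχ1 m)] with x h1 h2
    have : ‖h m x‖ = ‖f (T (-(m:ℤ)) x)‖ * ‖χ m (T (-(m:ℤ)) x)‖ := by
      simp [hhdef, norm_mul]
    rw [this, h2, mul_one]; exact h1
  have hmu0 : ∀ n k m, AEStronglyMeasurable (u0 n k m) μ :=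
    fun n k m => (hmT _ _ (hmfnk n k)).mul (hmχ m)
  have hbu0 : ∀ n k m, ∀ᵐ x ∂μ, ‖u0 n k m x‖ ≤ 1 := by
    intro n k m
    filter_upwards [hae ((m:ℤ)) (hfnk1 n k), hχ1 m] with x h1 h2
    have : ‖u0 n k m x‖ = ‖fnk n k (T (m:ℤ) x)‖ * ‖χ m x‖ := by simp [hu0def, norm_mul]
    rw [this, h2, mul_one]; exact h1
  -- Step A: weak convergence toward L m
  have hA : ∀ m : ℕ, Tendsto (fun k : ℕ => ∫ x, ((Nk k : ℂ)⁻¹ *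
        ∑ n ∈ Finset.Icc 1 (Nk k), fnk n k x) * (starRingEnd ℂ) (h m x) ∂μ) atTop
      (nhds (∫ x, (f (T (m:ℤ) x) * (starRingEnd ℂ) (f x)) * χ m x ∂μ)) := by
    intro m
    have hL2 : MemLp (h m) 2 μ := MemLp.of_bound (hmh m) C (hbh m)
    have key : ∫ x, f x * (starRingEnd ℂ) (h m x) ∂μ
        = ∫ x, (f (T (m:ℤ) x) * (starRingEnd ℂ) (f x)) * χ m x ∂μ := by
      rw [← hCoV (-(m:ℤ)) (fun x => (f (T (m:ℤ) x) * (starRingEnd ℂ) (f x)) * χ m x)]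
      refine integral_congr_ae (Eventually.of_forall fun x => ?_)
      dsimp only
      simp only [hhdef]
      rw [hTcomp (m:ℤ) (-(m:ℤ)) x, add_neg_cancel, hTzero x, map_mul, Complex.conj_conj]
      ring
    have := hweak (h m) hL2
    rwa [key] at this
  -- expand the weak-convergence integral as an average
  have hexp : ∀ (m k : ℕ), ∫ x, ((Nk k : ℂ)⁻¹ * ∑ n ∈ Finset.Icc 1 (Nk k), fnk n k x) *
        (starRingEnd ℂ) (h m x) ∂μ
      = (Nk k : ℂ)⁻¹ * ∑ n ∈ Finset.Icc 1 (Nk k), ∫ x, u0 n k m x * (starRingEnd ℂ) (f x) ∂μ := by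
    intro m k
    have hIfh : ∀ n, Integrable (fun x => fnk n k x * (starRingEnd ℂ) (h m x)) μ := by
      intro n
      refine hInt _ C ((hmfnk n k).mul (hmconj _ (hmh m))) ?_
      filter_upwards [hfnk1 n k, hbh m] with x h1 h2
      rw [norm_mul, RCLike.norm_conj]
      calc ‖fnk n k x‖ * ‖h m x‖ ≤ 1 * C := by
            exact mul_le_mul h1 h2 (norm_nonneg _) zero_le_one
        _ = C := one_mul C
    calc ∫ x, ((Nk k : ℂ)⁻¹ * ∑ n ∈ Finset.Icc 1 (Nk k), fnk n k x) *
          (starRingEnd ℂ) (h m x) ∂μ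
        = ∫ x, (Nk k : ℂ)⁻¹ * ∑ n ∈ Finset.Icc 1 (Nk k),
            (fnk n k x * (starRingEnd ℂ) (h m x)) ∂μ := by
          refine integral_congr_ae (Eventually.of_forall fun x => ?_)
          dsimp only
          rw [mul_assoc, Finset.sum_mul]
      _ = (Nk k : ℂ)⁻¹ * ∑ n ∈ Finset.Icc 1 (Nk k),
            ∫ x, fnk n k x * (starRingEnd ℂ) (h m x) ∂μ := by
          rw [integral_const_mul, integral_finset_sum _ (fun n _ => hIfh n)]
      _ = (Nk k : ℂ)⁻¹ * ∑ n ∈ Finset.Icc 1 (Nk k),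
            ∫ x, u0 n k m x * (starRingEnd ℂ) (f x) ∂μ := by
          congr 1
          refine Finset.sum_congr rfl fun n _ => ?_
          rw [← hCoV (m:ℤ) (fun x => fnk n k x * (starRingEnd ℂ) (h m x))]
          refine integral_congr_ae (Eventually.of_forall fun x => ?_)
          dsimp only
          simp only [hhdef, hu0def]
          rw [hTcomp (-(m:ℤ)) (m:ℤ) x, neg_add_cancel, hTzero x, map_mul, Complex.conj_conj]
          ring
  -- |t| ≤ 1
  have ht1 : ∀ (n k m m' : ℕ), |(∫ x, (starRingEnd ℂ) (fnk n k x) * fnk n k (T ((m:ℤ) - (m':ℤ)) x) *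
      (χ m (T (-(m':ℤ)) x) * (starRingEnd ℂ) (χ m' (T (-(m':ℤ)) x))) ∂μ).re| ≤ 1 := by
    intro n k m m'
    have hb : ∀ᵐ x ∂μ, ‖(starRingEnd ℂ) (fnk n k x) * fnk n k (T ((m:ℤ) - (m':ℤ)) x) *
        (χ m (T (-(m':ℤ)) x) * (starRingEnd ℂ) (χ m' (T (-(m':ℤ)) x)))‖ ≤ 1 := by
      filter_upwards [hfnk1 n k, hae ((m:ℤ)-(m':ℤ)) (hfnk1 n k),
        hae (-(m':ℤ)) (hχ1 m), hae (-(m':ℤ)) (hχ1 m')] with x h1 h2 h3 h4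
      rw [norm_mul, norm_mul, norm_mul, RCLike.norm_conj, RCLike.norm_conj, h3, h4]
      calc ‖fnk n k x‖ * ‖fnk n k (T ((m:ℤ) - (m':ℤ)) x)‖ * (1 * 1)
          ≤ 1 * 1 * (1 * 1) := by
            refine mul_le_mul ?_ le_rfl (by norm_num) (by norm_num)
            exact mul_le_mul h1 h2 (norm_nonneg _) zero_le_one
        _ = 1 := by norm_num
    have h5 := norm_integral_le_of_norm_le_const hb
    calc |(∫ x, (starRingEnd ℂ) (fnk n k x) * fnk n k (T ((m:ℤ) - (m':ℤ)) x) *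
          (χ m (T (-(m':ℤ)) x) * (starRingEnd ℂ) (χ m' (T (-(m':ℤ)) x))) ∂μ).re|
        ≤ ‖∫ x, (starRingEnd ℂ) (fnk n k x) * fnk n k (T ((m:ℤ) - (m':ℤ)) x) *
          (χ m (T (-(m':ℤ)) x) * (starRingEnd ℂ) (χ m' (T (-(m':ℤ)) x))) ∂μ‖ := by
          exact Complex.abs_re_le_norm _
      _ ≤ 1 * (μ Set.univ).toReal := h5
      _ = 1 := by simp
  -- |s| ≤ 1
  have hs1 : ∀ (k m m' : ℕ), |(Nk k : ℝ)⁻¹ * ∑ n ∈ Finset.Icc 1 (Nk k),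
      (∫ x, (starRingEnd ℂ) (fnk n k x) * fnk n k (T ((m:ℤ) - (m':ℤ)) x) *
      (χ m (T (-(m':ℤ)) x) * (starRingEnd ℂ) (χ m' (T (-(m':ℤ)) x))) ∂μ).re| ≤ 1 := by
    intro k m m'
    rw [abs_mul, abs_inv, Nat.abs_cast]
    calc ((Nk k : ℝ))⁻¹ * |∑ n ∈ Finset.Icc 1 (Nk k), _| ≤ ((Nk k : ℝ))⁻¹ * (Nk k : ℝ) := by
          gcongr ?_ * ?_
          · calc |∑ n ∈ Finset.Icc 1 (Nk k), _| ≤ ∑ n ∈ Finset.Icc 1 (Nk k), (1:ℝ) := by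
                  refine (Finset.abs_sum_le_sum_abs _ _).trans
                    (Finset.sum_le_sum fun n _ => ht1 n k m m')
              _ = (Nk k : ℝ) := by simp [Nat.card_Icc]
      _ ≤ 1 := by
          rcases Nat.eq_zero_or_pos (Nk k) with h0 | h0
          · simp [h0]
          · have : (0:ℝ) < (Nk k : ℝ) := by exact_mod_cast h0
            rw [inv_mul_cancel₀ this.ne']
  -- main estimate for fixed N with nonempty Λ∩[N]
  have main : ∀ N : ℕ, 0 < ((Finset.Icc 1 N).filter (· ∈ Λ)).card →
      a^2/C^2 ≤ ((((Finset.Icc 1 N).filter (· ∈ Λ)).card : ℝ))⁻¹ ^ 2 *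
      ∑ m ∈ (Finset.Icc 1 N).filter (· ∈ Λ), ∑ m' ∈ (Finset.Icc 1 N).filter (· ∈ Λ),
        Filter.limsup (fun k : ℕ => (Nk k : ℝ)⁻¹ * ∑ n ∈ Finset.Icc 1 (Nk k),
          (∫ x, (starRingEnd ℂ) (fnk n k x) * fnk n k (T ((m : ℤ) - (m' : ℤ)) x) *
            (χ m (T (-(m' : ℤ)) x) * (starRingEnd ℂ) (χ m' (T (-(m' : ℤ)) x))) ∂μ).re)
          Filter.atTop := by
    intro N hD
    set Λs := (Finset.Icc 1 N).filter (· ∈ Λ) with hΛsdef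
    set D : ℝ := (Λs.card : ℝ) with hDdef
    have hD0 : (0:ℝ) < D := by rw [hDdef]; exact_mod_cast hD
    set tv : ℕ → ℕ → ℕ → ℕ → ℝ := fun n k m m' =>
      (∫ x, (starRingEnd ℂ) (fnk n k x) * fnk n k (T ((m:ℤ) - (m':ℤ)) x) *
        (χ m (T (-(m':ℤ)) x) * (starRingEnd ℂ) (χ m' (T (-(m':ℤ)) x))) ∂μ).re with htv
    set sv : ℕ → ℕ → ℕ → ℝ := fun k m m' =>
      (Nk k : ℝ)⁻¹ * ∑ n ∈ Finset.Icc 1 (Nk k), tv n k m m' with hsv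
    suffices hgoal : a^2/C^2 ≤ D⁻¹ ^ 2 *
        ∑ m ∈ Λs, ∑ m' ∈ Λs, limsup (fun k => sv k m m') atTop by
      exact hgoal
    set G : ℕ → ℕ → X → ℂ := fun n k x => ((D:ℂ))⁻¹ * ∑ m ∈ Λs, u0 n k m x with hGdef
    set y : ℕ → ℕ → ℝ := fun n k => ∫ x, ‖G n k x‖^2 ∂μ with hydef
    have hy0 : ∀ n k, 0 ≤ y n k := fun n k => integral_nonneg fun x => sq_nonneg _
    have hmG : ∀ n k, AEStronglyMeasurable (G n k) μ := fun n k =>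
      aestronglyMeasurable_const.mul (Finset.aestronglyMeasurable_fun_sum _ fun m _ => hmu0 n k m)
    have hbG : ∀ n k, ∀ᵐ x ∂μ, ‖G n k x‖ ≤ 1 := by
      intro n k
      have hall : ∀ᵐ x ∂μ, ∀ m ∈ Λs, ‖u0 n k m x‖ ≤ 1 :=
        (eventually_all_finset Λs).2 fun m _ => hbu0 n k m
      filter_upwards [hall] with x hx
      have h1 : ‖G n k x‖ = D⁻¹ * ‖∑ m ∈ Λs, u0 n k m x‖ := by
        rw [hGdef]; dsimp only
        rw [norm_mul, norm_inv, Complex.norm_real, Real.norm_eq_abs, abs_of_pos hD0]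
      rw [h1]
      calc D⁻¹ * ‖∑ m ∈ Λs, u0 n k m x‖ ≤ D⁻¹ * D := by
            refine mul_le_mul_of_nonneg_left ?_ (by positivity)
            refine (norm_sum_le _ _).trans ?_
            calc ∑ m ∈ Λs, ‖u0 n k m x‖ ≤ ∑ m ∈ Λs, (1:ℝ) :=
                  Finset.sum_le_sum fun m hm => hx m hm
              _ = D := by rw [hDdef]; simp
        _ = 1 := inv_mul_cancel₀ hD0.ne'
    have hIu0u0 : ∀ n k m m',
        Integrable (fun x => u0 n k m x * (starRingEnd ℂ) (u0 n k m' x)) μ := by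
      intro n k m m'
      refine hInt _ 1 ((hmu0 n k m).mul (hmconj _ (hmu0 n k m'))) ?_
      filter_upwards [hbu0 n k m, hbu0 n k m'] with x h1 h2
      rw [norm_mul, RCLike.norm_conj]
      calc ‖u0 n k m x‖ * ‖u0 n k m' x‖ ≤ 1*1 := mul_le_mul h1 h2 (norm_nonneg _) zero_le_one
        _ = 1 := by norm_num
    have hIu0f : ∀ n k m, Integrable (fun x => u0 n k m x * (starRingEnd ℂ) (f x)) μ := by
      intro n k m
      refine hInt _ C ((hmu0 n k m).mul (hmconj _ hmf)) ?_
      filter_upwards [hbu0 n k m, hfC] with x h1 h2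
      rw [norm_mul, RCLike.norm_conj]
      calc ‖u0 n k m x‖ * ‖f x‖ ≤ 1*C := mul_le_mul h1 h2 (norm_nonneg _) zero_le_one
        _ = C := one_mul C
    have step2 : ∀ n k, (∫ x, G n k x * (starRingEnd ℂ) (f x) ∂μ).re
        ≤ C * Real.sqrt (y n k) := by
      intro n k
      have hIGnorm : Integrable (fun x => ‖G n k x * (starRingEnd ℂ) (f x)‖) μ := by
        refine (hInt _ C ((hmG n k).mul (hmconj _ hmf)) ?_).norm
        filter_upwards [hbG n k, hfC] with x h1 h2
        show ‖G n k x * (starRingEnd ℂ) (f x)‖ ≤ C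
        rw [norm_mul, RCLike.norm_conj]
        calc ‖G n k x‖ * ‖f x‖ ≤ 1 * C := mul_le_mul h1 h2 (norm_nonneg _) zero_le_one
          _ = C := one_mul C
      have hIGn : Integrable (fun x => ‖G n k x‖) μ := (hInt _ 1 (hmG n k) (hbG n k)).norm
      have h3 : ∫ x, ‖G n k x * (starRingEnd ℂ) (f x)‖ ∂μ ≤ ∫ x, C * ‖G n k x‖ ∂μ := by
        refine integral_mono_ae hIGnorm (hIGn.const_mul C) ?_
        filter_upwards [hfC] with x h2
        rw [norm_mul, RCLike.norm_conj]
        calc ‖G n k x‖ * ‖f x‖ ≤ ‖G n k x‖ * C :=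
              mul_le_mul_of_nonneg_left h2 (norm_nonneg _)
          _ = C * ‖G n k x‖ := mul_comm _ _
      have h5 : ∫ x, ‖G n k x‖ ∂μ ≤ Real.sqrt (y n k) := by
        have hmem : MemLp (fun x => ‖G n k x‖) 2 μ :=
          MemLp.of_bound (hmG n k).norm 1
            (by filter_upwards [hbG n k] with x hx; simpa using hx)
        have hvar := ProbabilityTheory.variance_nonneg (fun x => ‖G n k x‖) μ
        rw [ProbabilityTheory.variance_eq_sub hmem] at hvar
        have heq : ∫ x, ((fun x => ‖G n k x‖)^2) x ∂μ = y n k := by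
          rw [hydef]; dsimp only
          exact integral_congr_ae (Eventually.of_forall fun x => by simp [Pi.pow_apply])
        rw [heq] at hvar
        refine (Real.le_sqrt (integral_nonneg fun x => norm_nonneg _) (hy0 n k)).2 ?_
        linarith
      calc (∫ x, G n k x * (starRingEnd ℂ) (f x) ∂μ).re
          ≤ ‖∫ x, G n k x * (starRingEnd ℂ) (f x) ∂μ‖ := by
            exact Complex.re_le_norm _
        _ ≤ ∫ x, ‖G n k x * (starRingEnd ℂ) (f x)‖ ∂μ := norm_integral_le_integral_norm _
        _ ≤ ∫ x, C * ‖G n k x‖ ∂μ := h3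
        _ = C * ∫ x, ‖G n k x‖ ∂μ := integral_const_mul C _
        _ ≤ C * Real.sqrt (y n k) := mul_le_mul_of_nonneg_left h5 hC0.le
    have hpair : ∀ n k m m',
        (∫ x, u0 n k m x * (starRingEnd ℂ) (u0 n k m' x) ∂μ).re = tv n k m m' := by
      intro n k m m'
      have hi : ∫ x, u0 n k m x * (starRingEnd ℂ) (u0 n k m' x) ∂μ
          = ∫ x, (starRingEnd ℂ) (fnk n k x) * fnk n k (T ((m:ℤ) - (m':ℤ)) x) *
              (χ m (T (-(m':ℤ)) x) * (starRingEnd ℂ) (χ m' (T (-(m':ℤ)) x))) ∂μ := by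
        rw [← hCoV ((m':ℤ)) (fun x => (starRingEnd ℂ) (fnk n k x) *
              fnk n k (T ((m:ℤ) - (m':ℤ)) x) *
              (χ m (T (-(m':ℤ)) x) * (starRingEnd ℂ) (χ m' (T (-(m':ℤ)) x))))]
        refine integral_congr_ae (Eventually.of_forall fun x => ?_)
        dsimp only
        simp only [hu0def]
        have e1 : (m:ℤ) - (m':ℤ) + (m':ℤ) = (m:ℤ) := by ring
        have e2 : -(m':ℤ) + (m':ℤ) = 0 := by ring
        rw [hTcomp ((m:ℤ) - (m':ℤ)) ((m':ℤ)) x, e1, hTcomp (-(m':ℤ)) ((m':ℤ)) x, e2,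
          hTzero x, map_mul]
        ring
      rw [htv]; dsimp only; rw [hi]
    have step5 : ∀ n k, y n k = D⁻¹^2 * ∑ m ∈ Λs, ∑ m' ∈ Λs, tv n k m m' := by
      intro n k
      have hzsq : ∀ z : ℂ, z * (starRingEnd ℂ) z = ((‖z‖^2 : ℝ) : ℂ) := fun z => by
        rw [Complex.mul_conj, Complex.normSq_eq_norm_sq]
      have hpt : ∀ x, ((‖G n k x‖^2 : ℝ) : ℂ)
          = ((D⁻¹^2 : ℝ) : ℂ) * ∑ m ∈ Λs, ∑ m' ∈ Λs,
              u0 n k m x * (starRingEnd ℂ) (u0 n k m' x) := by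
        intro x
        rw [← hzsq (G n k x), hGdef]
        dsimp only
        rw [map_mul, map_sum, map_inv₀, Complex.conj_ofReal, mul_mul_mul_comm,
          Finset.sum_mul_sum]
        push_cast
        ring
      have h2 : y n k = (∫ x, ((‖G n k x‖^2 : ℝ):ℂ) ∂μ).re := by
        have h2' : ∫ x, ((‖G n k x‖^2 : ℝ):ℂ) ∂μ = ((∫ x, ‖G n k x‖^2 ∂μ : ℝ) : ℂ) :=
          integral_ofReal
        rw [h2', Complex.ofReal_re, hydef]
      rw [h2]
      have h3 : ∫ x, ((‖G n k x‖^2 : ℝ):ℂ) ∂μ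
          = ((D⁻¹^2 : ℝ):ℂ) * ∑ m ∈ Λs, ∑ m' ∈ Λs,
              ∫ x, u0 n k m x * (starRingEnd ℂ) (u0 n k m' x) ∂μ := by
        calc ∫ x, ((‖G n k x‖^2 : ℝ):ℂ) ∂μ
            = ∫ x, ((D⁻¹^2 : ℝ):ℂ) * ∑ m ∈ Λs, ∑ m' ∈ Λs,
                u0 n k m x * (starRingEnd ℂ) (u0 n k m' x) ∂μ :=
              integral_congr_ae (Eventually.of_forall fun x => hpt x)
          _ = ((D⁻¹^2 : ℝ):ℂ) * ∫ x, ∑ m ∈ Λs, ∑ m' ∈ Λs,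
                u0 n k m x * (starRingEnd ℂ) (u0 n k m' x) ∂μ := integral_const_mul _ _
          _ = ((D⁻¹^2 : ℝ):ℂ) * ∑ m ∈ Λs, ∫ x, ∑ m' ∈ Λs,
                u0 n k m x * (starRingEnd ℂ) (u0 n k m' x) ∂μ := by
              rw [integral_finset_sum _
                (fun m _ => integrable_finset_sum _ (fun m' _ => hIu0u0 n k m m'))]
          _ = ((D⁻¹^2 : ℝ):ℂ) * ∑ m ∈ Λs, ∑ m' ∈ Λs,
                ∫ x, u0 n k m x * (starRingEnd ℂ) (u0 n k m' x) ∂μ := by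
              congr 1
              exact Finset.sum_congr rfl fun m _ =>
                integral_finset_sum _ (fun m' _ => hIu0u0 n k m m')
      rw [h3, Complex.re_ofReal_mul, Complex.re_sum]
      congr 1
      refine Finset.sum_congr rfl fun m _ => ?_
      rw [Complex.re_sum]
      exact Finset.sum_congr rfl fun m' _ => hpair n k m m'
    -- the average P and its limit
    set P : ℕ → ℝ := fun k => D⁻¹ * ∑ m ∈ Λs, (∫ x, ((Nk k : ℂ)⁻¹ *
        ∑ n ∈ Finset.Icc 1 (Nk k), fnk n k x) * (starRingEnd ℂ) (h m x) ∂μ).re with hP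
    have hPlim : Tendsto P atTop (nhds (D⁻¹ * ∑ m ∈ Λs,
        (∫ x, (f (T (m:ℤ) x) * (starRingEnd ℂ) (f x)) * χ m x ∂μ).re)) := by
      refine Tendsto.const_mul _ (tendsto_finset_sum _ fun m _ => ?_)
      exact (Complex.continuous_re.tendsto _).comp (hA m)
    have hgt : a < D⁻¹ * ∑ m ∈ Λs,
        (∫ x, (f (T (m:ℤ) x) * (starRingEnd ℂ) (f x)) * χ m x ∂μ).re := by
      have hne : Λs.Nonempty := Finset.card_pos.1 hD
      have hsum : a * D < ∑ m ∈ Λs,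
          (∫ x, (f (T (m:ℤ) x) * (starRingEnd ℂ) (f x)) * χ m x ∂μ).re := by
        have h1 := Finset.sum_lt_sum_of_nonempty hne
          (f := fun _ => a) (fun m hm => hpos m (Finset.mem_filter.1 hm).2)
        calc a * D = ∑ _m ∈ Λs, a := by
              rw [Finset.sum_const, nsmul_eq_mul, hDdef, mul_comm]
          _ < _ := h1
      calc a = D⁻¹ * (a * D) := by
              rw [mul_comm a D, ← mul_assoc, inv_mul_cancel₀ hD0.ne', one_mul]
        _ < _ := mul_lt_mul_of_pos_left hsum (inv_pos.2 hD0)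
    have hevP : ∀ᶠ k in atTop, a < P k := hPlim.eventually (eventually_gt_nhds hgt)
    -- rewrite P k
    have hcast : ∀ (k : ℕ) (z : ℂ), ((Nk k : ℂ)⁻¹ * z).re = (Nk k : ℝ)⁻¹ * z.re := by
      intro k z
      have h1 : ((Nk k : ℕ) : ℂ) = (((Nk k : ℕ) : ℝ) : ℂ) := by push_cast; ring
      rw [h1, ← Complex.ofReal_inv, Complex.re_ofReal_mul]
    have hcastD : ∀ z : ℂ, (((D:ℝ):ℂ)⁻¹ * z).re = D⁻¹ * z.re := by
      intro z
      rw [← Complex.ofReal_inv, Complex.re_ofReal_mul]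
    have hGf : ∀ n k, ∫ x, G n k x * (starRingEnd ℂ) (f x) ∂μ
        = ((D:ℂ))⁻¹ * ∑ m ∈ Λs, ∫ x, u0 n k m x * (starRingEnd ℂ) (f x) ∂μ := by
      intro n k
      calc ∫ x, G n k x * (starRingEnd ℂ) (f x) ∂μ
          = ∫ x, ((D:ℂ))⁻¹ * ∑ m ∈ Λs, (u0 n k m x * (starRingEnd ℂ) (f x)) ∂μ := by
            refine integral_congr_ae (Eventually.of_forall fun x => ?_)
            dsimp only
            rw [hGdef]; dsimp only; rw [mul_assoc, Finset.sum_mul]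
        _ = ((D:ℂ))⁻¹ * ∑ m ∈ Λs, ∫ x, u0 n k m x * (starRingEnd ℂ) (f x) ∂μ := by
            rw [integral_const_mul, integral_finset_sum _ (fun m _ => hIu0f n k m)]
    have hPeq : ∀ k, P k = (Nk k : ℝ)⁻¹ * ∑ n ∈ Finset.Icc 1 (Nk k),
        (∫ x, G n k x * (starRingEnd ℂ) (f x) ∂μ).re := by
      intro k
      rw [hP]; dsimp only
      calc D⁻¹ * ∑ m ∈ Λs, (∫ x, ((Nk k : ℂ)⁻¹ *
              ∑ n ∈ Finset.Icc 1 (Nk k), fnk n k x) * (starRingEnd ℂ) (h m x) ∂μ).re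
          = D⁻¹ * ∑ m ∈ Λs, ((Nk k:ℝ)⁻¹ * ∑ n ∈ Finset.Icc 1 (Nk k),
              (∫ x, u0 n k m x * (starRingEnd ℂ) (f x) ∂μ).re) := by
            congr 1
            refine Finset.sum_congr rfl fun m _ => ?_
            rw [hexp m k, hcast, Complex.re_sum]
        _ = ∑ m ∈ Λs, ∑ n ∈ Finset.Icc 1 (Nk k), (D⁻¹ * ((Nk k:ℝ)⁻¹ *
              (∫ x, u0 n k m x * (starRingEnd ℂ) (f x) ∂μ).re)) := by
            simp only [Finset.mul_sum]
        _ = ∑ n ∈ Finset.Icc 1 (Nk k), ∑ m ∈ Λs, (D⁻¹ * ((Nk k:ℝ)⁻¹ *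
              (∫ x, u0 n k m x * (starRingEnd ℂ) (f x) ∂μ).re)) := Finset.sum_comm
        _ = (Nk k:ℝ)⁻¹ * ∑ n ∈ Finset.Icc 1 (Nk k), (D⁻¹ * ∑ m ∈ Λs,
              (∫ x, u0 n k m x * (starRingEnd ℂ) (f x) ∂μ).re) := by
            simp only [Finset.mul_sum]
            refine Finset.sum_congr rfl fun n _ => Finset.sum_congr rfl fun m _ => by ring
        _ = (Nk k:ℝ)⁻¹ * ∑ n ∈ Finset.Icc 1 (Nk k),
              (∫ x, G n k x * (starRingEnd ℂ) (f x) ∂μ).re := by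
            congr 1
            refine Finset.sum_congr rfl fun n _ => ?_
            rw [hGf n k, hcastD, Complex.re_sum]
    -- key eventual bound
    have hkey : ∀ᶠ k in atTop, a^2/C^2 ≤ D⁻¹^2 * ∑ m ∈ Λs, ∑ m' ∈ Λs, sv k m m' := by
      filter_upwards [hevP, hNk.eventually_ge_atTop 1] with k hk hk1
      have hNk0 : (0:ℝ) < (Nk k : ℝ) := by exact_mod_cast hk1
      have hc0 : (0:ℝ) ≤ (Nk k : ℝ)⁻¹ := by positivity
      have hstep3 : P k ≤ C * ((Nk k : ℝ)⁻¹ *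
          ∑ n ∈ Finset.Icc 1 (Nk k), Real.sqrt (y n k)) := by
        rw [hPeq k]
        calc (Nk k : ℝ)⁻¹ * ∑ n ∈ Finset.Icc 1 (Nk k),
              (∫ x, G n k x * (starRingEnd ℂ) (f x) ∂μ).re
            ≤ (Nk k : ℝ)⁻¹ * ∑ n ∈ Finset.Icc 1 (Nk k), (C * Real.sqrt (y n k)) :=
              mul_le_mul_of_nonneg_left (Finset.sum_le_sum fun n _ => step2 n k) hc0
          _ = C * ((Nk k : ℝ)⁻¹ * ∑ n ∈ Finset.Icc 1 (Nk k), Real.sqrt (y n k)) := by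
              rw [← Finset.mul_sum]; ring
      have hsq : ((Nk k : ℝ)⁻¹ * ∑ n ∈ Finset.Icc 1 (Nk k), Real.sqrt (y n k))^2
          ≤ (Nk k : ℝ)⁻¹ * ∑ n ∈ Finset.Icc 1 (Nk k), y n k := by
        have h1 : (∑ n ∈ Finset.Icc 1 (Nk k), Real.sqrt (y n k))^2
            ≤ (Nk k : ℝ) * ∑ n ∈ Finset.Icc 1 (Nk k), y n k := by
          have h2 := sq_sum_le_card_mul_sum_sq (s := Finset.Icc 1 (Nk k))
            (f := fun n => Real.sqrt (y n k))
          have h3 : ∑ n ∈ Finset.Icc 1 (Nk k), (Real.sqrt (y n k))^2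
              = ∑ n ∈ Finset.Icc 1 (Nk k), y n k :=
            Finset.sum_congr rfl fun n _ => Real.sq_sqrt (hy0 n k)
          have h4 : ((Finset.Icc 1 (Nk k)).card : ℝ) = (Nk k : ℝ) := by
            simp [Nat.card_Icc]
          calc (∑ n ∈ Finset.Icc 1 (Nk k), Real.sqrt (y n k))^2
              ≤ ((Finset.Icc 1 (Nk k)).card : ℝ) *
                ∑ n ∈ Finset.Icc 1 (Nk k), (Real.sqrt (y n k))^2 := h2
            _ = (Nk k : ℝ) * ∑ n ∈ Finset.Icc 1 (Nk k), y n k := by rw [h4, h3]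
        calc ((Nk k : ℝ)⁻¹ * ∑ n ∈ Finset.Icc 1 (Nk k), Real.sqrt (y n k))^2
            = ((Nk k : ℝ)⁻¹)^2 * (∑ n ∈ Finset.Icc 1 (Nk k), Real.sqrt (y n k))^2 := by ring
          _ ≤ ((Nk k : ℝ)⁻¹)^2 * ((Nk k : ℝ) * ∑ n ∈ Finset.Icc 1 (Nk k), y n k) :=
              mul_le_mul_of_nonneg_left h1 (sq_nonneg _)
          _ = ((Nk k : ℝ)⁻¹ * (Nk k : ℝ)) * ((Nk k : ℝ)⁻¹ *
              ∑ n ∈ Finset.Icc 1 (Nk k), y n k) := by ring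
          _ = (Nk k : ℝ)⁻¹ * ∑ n ∈ Finset.Icc 1 (Nk k), y n k := by
              rw [inv_mul_cancel₀ hNk0.ne', one_mul]
      have hy_s : (Nk k : ℝ)⁻¹ * ∑ n ∈ Finset.Icc 1 (Nk k), y n k
          = D⁻¹^2 * ∑ m ∈ Λs, ∑ m' ∈ Λs, sv k m m' := by
        calc (Nk k : ℝ)⁻¹ * ∑ n ∈ Finset.Icc 1 (Nk k), y n k
            = (Nk k : ℝ)⁻¹ * ∑ n ∈ Finset.Icc 1 (Nk k),
                (D⁻¹^2 * ∑ m ∈ Λs, ∑ m' ∈ Λs, tv n k m m') := by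
              rw [Finset.sum_congr rfl fun n _ => step5 n k]
          _ = ∑ n ∈ Finset.Icc 1 (Nk k), ∑ m ∈ Λs, ∑ m' ∈ Λs,
                ((Nk k : ℝ)⁻¹ * (D⁻¹^2 * tv n k m m')) := by
              simp only [Finset.mul_sum]
          _ = ∑ m ∈ Λs, ∑ n ∈ Finset.Icc 1 (Nk k), ∑ m' ∈ Λs,
                ((Nk k : ℝ)⁻¹ * (D⁻¹^2 * tv n k m m')) := Finset.sum_comm
          _ = ∑ m ∈ Λs, ∑ m' ∈ Λs, ∑ n ∈ Finset.Icc 1 (Nk k),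
                ((Nk k : ℝ)⁻¹ * (D⁻¹^2 * tv n k m m')) :=
              Finset.sum_congr rfl fun m _ => Finset.sum_comm
          _ = D⁻¹^2 * ∑ m ∈ Λs, ∑ m' ∈ Λs,
                ((Nk k : ℝ)⁻¹ * ∑ n ∈ Finset.Icc 1 (Nk k), tv n k m m') := by
              simp only [Finset.mul_sum]
              refine Finset.sum_congr rfl fun m _ => Finset.sum_congr rfl fun m' _ =>
                Finset.sum_congr rfl fun n _ => by ring
          _ = D⁻¹^2 * ∑ m ∈ Λs, ∑ m' ∈ Λs, sv k m m' := by rw [hsv]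
      have hApos : (0:ℝ) ≤ (Nk k : ℝ)⁻¹ * ∑ n ∈ Finset.Icc 1 (Nk k), Real.sqrt (y n k) := by
        refine mul_nonneg hc0 (Finset.sum_nonneg fun n _ => Real.sqrt_nonneg _)
      have h6 : a^2 ≤ (C * ((Nk k : ℝ)⁻¹ * ∑ n ∈ Finset.Icc 1 (Nk k), Real.sqrt (y n k)))^2 :=
        pow_le_pow_left₀ ha.le (hk.le.trans hstep3) 2
      have h9 : a^2 ≤ C^2 * (D⁻¹^2 * ∑ m ∈ Λs, ∑ m' ∈ Λs, sv k m m') := by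
        calc a^2 ≤ (C * ((Nk k : ℝ)⁻¹ * ∑ n ∈ Finset.Icc 1 (Nk k), Real.sqrt (y n k)))^2 := h6
          _ = C^2 * ((Nk k : ℝ)⁻¹ * ∑ n ∈ Finset.Icc 1 (Nk k), Real.sqrt (y n k))^2 := by ring
          _ ≤ C^2 * ((Nk k : ℝ)⁻¹ * ∑ n ∈ Finset.Icc 1 (Nk k), y n k) :=
              mul_le_mul_of_nonneg_left hsq (sq_nonneg C)
          _ = C^2 * (D⁻¹^2 * ∑ m ∈ Λs, ∑ m' ∈ Λs, sv k m m') := by rw [hy_s]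
      rw [div_le_iff₀ (by positivity : (0:ℝ) < C^2)]
      calc a^2 ≤ C^2 * (D⁻¹^2 * ∑ m ∈ Λs, ∑ m' ∈ Λs, sv k m m') := h9
        _ = (D⁻¹^2 * ∑ m ∈ Λs, ∑ m' ∈ Λs, sv k m m') * C^2 := by ring
    -- pass to the limsup
    have hsb : ∀ k m m', |sv k m m'| ≤ 1 := fun k m m' => hs1 k m m'
    have hprod : ∀ k, ∑ m ∈ Λs, ∑ m' ∈ Λs, sv k m m' = ∑ p ∈ Λs ×ˢ Λs, sv k p.1 p.2 :=
      fun k => (Finset.sum_product Λs Λs (fun p => sv k p.1 p.2)).symm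
    have h10 : limsup (fun k => ∑ p ∈ Λs ×ˢ Λs, sv k p.1 p.2) atTop
        ≤ ∑ p ∈ Λs ×ˢ Λs, limsup (fun k => sv k p.1 p.2) atTop :=
      limsup_sum_le_aux _ _ (fun p _ k => hsb k p.1 p.2)
    have h11 : a^2/C^2 * D^2 ≤ limsup (fun k => ∑ p ∈ Λs ×ˢ Λs, sv k p.1 p.2) atTop := by
      refine le_limsup_of_frequently_le ?_ ?_
      · refine (hkey.mono fun k hk => ?_).frequently
        rw [← hprod k]
        have h13 := mul_le_mul_of_nonneg_right hk (sq_nonneg D)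
        calc a^2/C^2 * D^2
            ≤ (D⁻¹^2 * ∑ m ∈ Λs, ∑ m' ∈ Λs, sv k m m') * D^2 := h13
          _ = (D⁻¹*D)^2 * ∑ m ∈ Λs, ∑ m' ∈ Λs, sv k m m' := by ring
          _ = ∑ m ∈ Λs, ∑ m' ∈ Λs, sv k m m' := by
              rw [inv_mul_cancel₀ hD0.ne']; ring
      · refine isBoundedUnder_of ⟨((Λs ×ˢ Λs).card : ℝ), fun k => ?_⟩
        calc ∑ p ∈ Λs ×ˢ Λs, sv k p.1 p.2 ≤ ∑ _p ∈ Λs ×ˢ Λs, (1:ℝ) :=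
              Finset.sum_le_sum fun p _ => le_of_abs_le (hsb k p.1 p.2)
          _ = ((Λs ×ˢ Λs).card : ℝ) := by simp
    have h12 : ∑ m ∈ Λs, ∑ m' ∈ Λs, limsup (fun k => sv k m m') atTop
        = ∑ p ∈ Λs ×ˢ Λs, limsup (fun k => sv k p.1 p.2) atTop :=
      (Finset.sum_product Λs Λs (fun p => limsup (fun k => sv k p.1 p.2) atTop)).symm
    calc a^2/C^2 = D⁻¹^2 * (a^2/C^2 * D^2) := by
          rw [show D⁻¹^2 * (a^2/C^2 * D^2) = (a^2/C^2)*(D⁻¹*D)^2 by ring,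
            inv_mul_cancel₀ hD0.ne']
          ring
      _ ≤ D⁻¹^2 * limsup (fun k => ∑ p ∈ Λs ×ˢ Λs, sv k p.1 p.2) atTop :=
          mul_le_mul_of_nonneg_left h11 (by positivity)
      _ ≤ D⁻¹^2 * ∑ p ∈ Λs ×ˢ Λs, limsup (fun k => sv k p.1 p.2) atTop :=
          mul_le_mul_of_nonneg_left h10 (by positivity)
      _ = D⁻¹^2 * ∑ m ∈ Λs, ∑ m' ∈ Λs, limsup (fun k => sv k m m') atTop := by rw [← h12]
  -- conclusion
  have hDev : ∀ᶠ N in atTop, 0 < ((Finset.Icc 1 N).filter (· ∈ Λ)).card := by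
    have hcb : IsBoundedUnder (· ≥ ·) atTop
        (fun N : ℕ => (((Finset.Icc 1 N).filter (· ∈ Λ)).card : ℝ) / (N:ℝ)) :=
      isBoundedUnder_of ⟨0, fun N => by positivity⟩
    filter_upwards [eventually_lt_of_lt_liminf hΛ hcb] with N hN
    by_contra h0
    push_neg at h0
    have h1 : ((Finset.Icc 1 N).filter (· ∈ Λ)).card = 0 := Nat.le_zero.1 h0
    rw [h1] at hN
    simp at hN
  have hEle : ∀ N : ℕ, ((((Finset.Icc 1 N).filter (· ∈ Λ)).card : ℝ))⁻¹ ^ 2 *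
      ∑ m ∈ (Finset.Icc 1 N).filter (· ∈ Λ), ∑ m' ∈ (Finset.Icc 1 N).filter (· ∈ Λ),
        Filter.limsup (fun k : ℕ => (Nk k : ℝ)⁻¹ * ∑ n ∈ Finset.Icc 1 (Nk k),
          (∫ x, (starRingEnd ℂ) (fnk n k x) * fnk n k (T ((m : ℤ) - (m' : ℤ)) x) *
            (χ m (T (-(m' : ℤ)) x) * (starRingEnd ℂ) (χ m' (T (-(m' : ℤ)) x))) ∂μ).re)
          Filter.atTop ≤ 1 := by
    intro N
    set Λs := (Finset.Icc 1 N).filter (· ∈ Λ) with hΛsdef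
    set D : ℝ := (Λs.card : ℝ) with hDdef
    have hD0 : (0:ℝ) ≤ D := by rw [hDdef]; positivity
    have hls : ∀ m m' : ℕ, limsup (fun k : ℕ => (Nk k : ℝ)⁻¹ * ∑ n ∈ Finset.Icc 1 (Nk k),
        (∫ x, (starRingEnd ℂ) (fnk n k x) * fnk n k (T ((m : ℤ) - (m' : ℤ)) x) *
          (χ m (T (-(m' : ℤ)) x) * (starRingEnd ℂ) (χ m' (T (-(m' : ℤ)) x))) ∂μ).re)
        Filter.atTop ≤ 1 := by
      intro m m'
      have hcbd : ∀ u : ℕ → ℝ, (∀ k, |u k| ≤ 1) → limsup u atTop ≤ 1 := by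
        intro u hu
        refine limsup_le_of_le ?_ (Eventually.of_forall fun k => le_of_abs_le (hu k))
        exact IsBoundedUnder.isCoboundedUnder_le
          (isBoundedUnder_of ⟨-1, fun k => neg_le_of_abs_le (hu k)⟩)
      exact hcbd _ (fun k => hs1 k m m')
    calc D⁻¹ ^ 2 * ∑ m ∈ Λs, ∑ m' ∈ Λs,
          Filter.limsup (fun k : ℕ => (Nk k : ℝ)⁻¹ * ∑ n ∈ Finset.Icc 1 (Nk k),
            (∫ x, (starRingEnd ℂ) (fnk n k x) * fnk n k (T ((m : ℤ) - (m' : ℤ)) x) *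
              (χ m (T (-(m' : ℤ)) x) * (starRingEnd ℂ) (χ m' (T (-(m' : ℤ)) x))) ∂μ).re)
            Filter.atTop
        ≤ D⁻¹ ^ 2 * (D * D) := by
          refine mul_le_mul_of_nonneg_left ?_ (by positivity)
          calc ∑ m ∈ Λs, ∑ m' ∈ Λs, Filter.limsup _ Filter.atTop
              ≤ ∑ _m ∈ Λs, ∑ _m' ∈ Λs, (1:ℝ) :=
                Finset.sum_le_sum fun m _ => Finset.sum_le_sum fun m' _ => hls m m'
            _ = D * D := by rw [hDdef]; simp [Finset.sum_const, nsmul_eq_mul]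
      _ ≤ 1 := by
          rcases eq_or_lt_of_le hD0 with h0 | h0
          · rw [← h0]; norm_num
          · have he : D⁻¹^2 * (D*D) = (D⁻¹*D)^2 := by ring
            rw [he, inv_mul_cancel₀ h0.ne']; norm_num
  have hfinal : ∀ᶠ N in atTop, a^2/C^2 ≤
      ((((Finset.Icc 1 N).filter (· ∈ Λ)).card : ℝ))⁻¹ ^ 2 *
      ∑ m ∈ (Finset.Icc 1 N).filter (· ∈ Λ), ∑ m' ∈ (Finset.Icc 1 N).filter (· ∈ Λ),
        Filter.limsup (fun k : ℕ => (Nk k : ℝ)⁻¹ * ∑ n ∈ Finset.Icc 1 (Nk k),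
          (∫ x, (starRingEnd ℂ) (fnk n k x) * fnk n k (T ((m : ℤ) - (m' : ℤ)) x) *
            (χ m (T (-(m' : ℤ)) x) * (starRingEnd ℂ) (χ m' (T (-(m' : ℤ)) x))) ∂μ).re)
          Filter.atTop := hDev.mono fun N hN => main N hN
  have hcb2 : IsCoboundedUnder (· ≥ ·) atTop (fun N : ℕ =>
      ((((Finset.Icc 1 N).filter (· ∈ Λ)).card : ℝ))⁻¹ ^ 2 *
      ∑ m ∈ (Finset.Icc 1 N).filter (· ∈ Λ), ∑ m' ∈ (Finset.Icc 1 N).filter (· ∈ Λ),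
        Filter.limsup (fun k : ℕ => (Nk k : ℝ)⁻¹ * ∑ n ∈ Finset.Icc 1 (Nk k),
          (∫ x, (starRingEnd ℂ) (fnk n k x) * fnk n k (T ((m : ℤ) - (m' : ℤ)) x) *
            (χ m (T (-(m' : ℤ)) x) * (starRingEnd ℂ) (χ m' (T (-(m' : ℤ)) x))) ∂μ).re)
          Filter.atTop) :=
    (isBoundedUnder_of ⟨1, hEle⟩).isCoboundedUnder_ge
  have hpos2 : (0:ℝ) < a^2/C^2 := div_pos (pow_pos ha 2) (pow_pos hC0 2)
  exact lt_of_lt_of_le hpos2 (le_liminf_of_le hcb2 hfinal)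
end

section
/- Let (X, μ, T) be a measure-preserving system and a_1, ..., a_ℓ : ℕ → ℤ sequences and f_1, ..., f_ℓ ∈ L^∞(μ) bounded by 1 such that limsup_{N→∞} ‖Avg_{n∈[N]} ∏_{j=1}^ℓ T^{a_j(n)} f_j‖_{L²(μ)} > 0. Then for every m ∈ {1,...,ℓ} there exist N_k → ∞ and functions g_k ∈ L^∞(μ) with ‖g_k‖_∞ ≤ 1 such that the weak limit f̃_m := lim_k Avg_{n∈[N_k]} T^{−a_m(n)} g_k · ∏_{j≠m} T^{a_j(n)−a_m(n)} conj(f_j) exists in L²(μ), f̃_m ∈ L^∞(μ), and limsup_{N→∞} ‖Avg_{n∈[N]} T^{a_m(n)} f̃_m · ∏_{j≠m} T^{a_j(n)} f_j‖_{L²(μ)} > 0. -/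
open MeasureTheory Filter ComplexConjugate
open scoped InnerProductSpace ENNReal

lemma weak_cluster {H : Type*} [NormedAddCommGroup H] [InnerProductSpace ℂ H] [CompleteSpace H]
    (d : ℕ → H) (hd : ∀ k, ‖d k‖ ≤ 1) :
    ∃ (ψ : ℕ → ℕ) (F : H), StrictMono ψ ∧
      ∀ h : H, Tendsto (fun k => ⟪d (ψ k), h⟫_ℂ) atTop (nhds ⟪F, h⟫_ℂ) := by
  -- diagonal extraction via compactness of product of closed balls
  set Z : ℕ → (ℕ → ℂ) := fun k j => ⟪d j, d k⟫_ℂ with hZ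
  have hS : IsCompact (Set.univ.pi fun _ : ℕ => Metric.closedBall (0:ℂ) 1) :=
    isCompact_univ_pi fun _ => isCompact_closedBall _ _
  have hmem : ∀ k, Z k ∈ Set.univ.pi fun _ : ℕ => Metric.closedBall (0:ℂ) 1 := by
    intro k j _
    simp only [Metric.mem_closedBall, dist_zero_right]
    calc ‖⟪d j, d k⟫_ℂ‖ ≤ ‖d j‖ * ‖d k‖ := norm_inner_le_norm _ _
      _ ≤ 1 * 1 := mul_le_mul (hd j) (hd k) (norm_nonneg _) zero_le_one
      _ = 1 := one_mul 1
  obtain ⟨L, -, ψ, hψ, hL⟩ := hS.isSeqCompact fun k => hmem k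
  have hLpt : ∀ j, Tendsto (fun k => ⟪d j, d (ψ k)⟫_ℂ) atTop (nhds (L j)) := by
    intro j
    exact (tendsto_pi_nhds.1 hL) j
  -- convergence on the span of the range
  have hspan : ∀ s ∈ Submodule.span ℂ (Set.range d),
      ∃ c : ℂ, Tendsto (fun k => ⟪d (ψ k), s⟫_ℂ) atTop (nhds c) := by
    intro s hs
    induction hs using Submodule.span_induction with
    | mem x hx =>
      obtain ⟨j, rfl⟩ := hx
      refine ⟨starRingEnd ℂ (L j), ?_⟩
      have h2 := (Complex.continuous_conj.tendsto _).comp (hLpt j)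
      have : (⇑(starRingEnd ℂ) ∘ fun k => ⟪d j, d (ψ k)⟫_ℂ) = fun k => ⟪d (ψ k), d j⟫_ℂ := by
        funext k; simp [Function.comp, inner_conj_symm]
      rwa [this] at h2
    | zero => exact ⟨0, by simpa using tendsto_const_nhds⟩
    | add x y _ _ hx hy =>
      obtain ⟨cx, hcx⟩ := hx; obtain ⟨cy, hcy⟩ := hy
      exact ⟨cx + cy, by simpa [inner_add_right] using hcx.add hcy⟩
    | smul c x _ hx =>
      obtain ⟨cx, hcx⟩ := hx
      exact ⟨c * cx, by simpa [inner_smul_right] using hcx.const_mul c⟩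
  -- convergence for every h
  have hconv : ∀ h : H, ∃ c : ℂ, Tendsto (fun k => ⟪d (ψ k), h⟫_ℂ) atTop (nhds c) := by
    intro h
    set K := (Submodule.span ℂ (Set.range d)).topologicalClosure with hK
    haveI : CompleteSpace K :=
      (Submodule.span ℂ (Set.range d)).isClosed_topologicalClosure.completeSpace_coe
    obtain ⟨y, hy, z, hz, rfl⟩ := K.exists_add_mem_mem_orthogonal h
    have hzero : ∀ k, ⟪d k, z⟫_ℂ = 0 := by
      intro k
      exact (Submodule.mem_orthogonal K z).1 hz (d k)
        (Submodule.le_topologicalClosure _ (Submodule.subset_span ⟨k, rfl⟩))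
    have hyc : CauchySeq (fun k => ⟪d (ψ k), y⟫_ℂ) := by
      rw [Metric.cauchySeq_iff]
      intro ε hε
      obtain ⟨s, hsK, hsy⟩ : ∃ s ∈ Submodule.span ℂ (Set.range d), ‖y - s‖ < ε / 4 := by
        have : y ∈ closure ((Submodule.span ℂ (Set.range d)) : Set H) := hy
        obtain ⟨s, hs1, hs2⟩ := Metric.mem_closure_iff.1 this (ε/4) (by linarith)
        exact ⟨s, hs1, by rwa [dist_eq_norm] at hs2⟩
      obtain ⟨c, hc⟩ := hspan s hsK
      have hcc := hc.cauchySeq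
      rw [Metric.cauchySeq_iff] at hcc
      obtain ⟨N, hN⟩ := hcc (ε/4) (by linarith)
      refine ⟨N, fun k hk k' hk' => ?_⟩
      have key : ∀ j, ‖⟪d (ψ j), y⟫_ℂ - ⟪d (ψ j), s⟫_ℂ‖ ≤ ε/4 := by
        intro j
        rw [← inner_sub_right]
        calc ‖⟪d (ψ j), y - s⟫_ℂ‖ ≤ ‖d (ψ j)‖ * ‖y - s‖ := norm_inner_le_norm _ _
          _ ≤ 1 * (ε/4) := mul_le_mul (hd _) hsy.le (norm_nonneg _) zero_le_one
          _ = ε/4 := one_mul _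
      have h1 := key k
      have h2 := key k'
      have h3 := hN k hk k' hk'
      rw [dist_eq_norm] at h3 ⊢
      calc ‖⟪d (ψ k), y⟫_ℂ - ⟪d (ψ k'), y⟫_ℂ‖
          = ‖(⟪d (ψ k), y⟫_ℂ - ⟪d (ψ k), s⟫_ℂ) + (⟪d (ψ k), s⟫_ℂ - ⟪d (ψ k'), s⟫_ℂ)
              + (⟪d (ψ k'), s⟫_ℂ - ⟪d (ψ k'), y⟫_ℂ)‖ := by ring_nf
        _ ≤ ‖⟪d (ψ k), y⟫_ℂ - ⟪d (ψ k), s⟫_ℂ‖ + ‖⟪d (ψ k), s⟫_ℂ - ⟪d (ψ k'), s⟫_ℂ‖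
              + ‖⟪d (ψ k'), s⟫_ℂ - ⟪d (ψ k'), y⟫_ℂ‖ := norm_add₃_le
        _ ≤ ε/4 + ε/4 + ε/4 :=
            add_le_add (add_le_add h1 h3.le) (by simpa [norm_sub_rev] using h2)
        _ < ε := by linarith
    obtain ⟨c, hc⟩ := cauchySeq_tendsto_of_complete hyc
    refine ⟨c, ?_⟩
    have : (fun k => ⟪d (ψ k), y + z⟫_ℂ) = fun k => ⟪d (ψ k), y⟫_ℂ := by
      funext k; rw [inner_add_right, hzero, add_zero]
    rw [this]; exact hc
  -- build the limit functional and use Riesz representation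
  choose c hc using hconv
  have hlin : ∃ Φ : H →L[ℂ] ℂ, ∀ h, Φ h = c h := by
    have hadd : ∀ h h', c (h + h') = c h + c h' := by
      intro h h'
      refine tendsto_nhds_unique ?_ ((hc h).add (hc h'))
      simpa [inner_add_right] using hc (h + h')
    have hsmul : ∀ (r : ℂ) h, c (r • h) = r * c h := by
      intro r h
      refine tendsto_nhds_unique ?_ ((hc h).const_mul r)
      simpa [inner_smul_right] using hc (r • h)
    refine ⟨LinearMap.mkContinuous
      { toFun := c, map_add' := hadd, map_smul' := hsmul } 1 (fun h => ?_), fun h => rfl⟩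
    simp only [LinearMap.coe_mk, AddHom.coe_mk, one_mul]
    refine le_of_tendsto ((hc h).norm) (Eventually.of_forall fun k => ?_)
    calc ‖⟪d (ψ k), h⟫_ℂ‖ ≤ ‖d (ψ k)‖ * ‖h‖ := norm_inner_le_norm _ _
      _ ≤ 1 * ‖h‖ := by gcongr; exact hd _
      _ = ‖h‖ := one_mul _
  obtain ⟨Φ, hΦ⟩ := hlin
  obtain ⟨F, hF⟩ := (InnerProductSpace.toDual ℂ H).surjective Φ
  refine ⟨ψ, F, hψ, fun h => ?_⟩
  have : ⟪F, h⟫_ℂ = c h := by rw [← InnerProductSpace.toDual_apply_apply, hF, hΦ]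
  rw [this]; exact hc h


set_option maxHeartbeats 2000000 in
/-- **Passing to characteristic factors (Proposition on dual functions).** If
`limsup_N ‖𝔼_{n ∈ [N]} ∏_j T^{a_j(n)} f_j‖_{L²(μ)} > 0` with all `f_j` bounded by 1, then for
every `m` there exist `N_k → ∞` and `g_k` bounded by 1 such that the weak limit
`f̃_m = lim_k 𝔼_{n ∈ [N_k]} T^{−a_m(n)} g_k ⋅ ∏_{j ≠ m} T^{a_j(n) − a_m(n)} conj(f_j)` exists
in `L²(μ)`, lies in `L^∞(μ)`, and
`limsup_N ‖𝔼_{n ∈ [N]} T^{a_m(n)} f̃_m ⋅ ∏_{j ≠ m} T^{a_j(n)} f_j‖_{L²(μ)} > 0`. -/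
theorem stmt18 {X : Type*} [MeasurableSpace X] (μ : Measure X) [IsProbabilityMeasure μ]
    (T : ℤ → X → X) (hT : ∀ n, MeasurePreserving (T n) μ μ)
    (hT0 : T 0 = id) (hTadd : ∀ m n, T (m + n) = T m ∘ T n)
    (ℓ : ℕ) (a : Fin ℓ → ℕ → ℤ)
    (f : Fin ℓ → X → ℂ) (hfL : ∀ j, MemLp (f j) ⊤ μ)
    (hf1 : ∀ j, ∀ᵐ x ∂μ, ‖f j x‖ ≤ 1)
    (hbig : 0 < Filter.limsup (fun N : ℕ =>
      ∫ x, ‖(N : ℂ)⁻¹ * ∑ n ∈ Finset.Icc 1 N, ∏ j, f j (T (a j n) x)‖ ^ 2 ∂μ) Filter.atTop)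
    (m : Fin ℓ) :
    ∃ (Nk : ℕ → ℕ) (g : ℕ → X → ℂ) (ft : X → ℂ),
      Tendsto Nk atTop atTop ∧
      (∀ k, MemLp (g k) ⊤ μ ∧ ∀ᵐ x ∂μ, ‖g k x‖ ≤ 1) ∧
      MemLp ft ⊤ μ ∧
      (∀ h : X → ℂ, MemLp h 2 μ →
        Tendsto (fun k : ℕ => ∫ x, ((Nk k : ℂ)⁻¹ * ∑ n ∈ Finset.Icc 1 (Nk k),
            g k (T (-(a m n)) x) *
              ∏ j ∈ Finset.univ.erase m, (starRingEnd ℂ) (f j (T (a j n - a m n) x))) *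
          (starRingEnd ℂ) (h x) ∂μ) atTop
          (nhds (∫ x, ft x * (starRingEnd ℂ) (h x) ∂μ))) ∧
      0 < Filter.limsup (fun N : ℕ =>
        ∫ x, ‖(N : ℂ)⁻¹ * ∑ n ∈ Finset.Icc 1 N,
          ft (T (a m n) x) * ∏ j ∈ Finset.univ.erase m, f j (T (a j n) x)‖ ^ 2 ∂μ)
        Filter.atTop := by
  classical
  -- composition law for T
  have hTT : ∀ (b c : ℤ) (x : X), T b (T c x) = T (b + c) x := fun b c x =>
    (congrFun (hTadd b c) x).symm
  -- change of variables
  have hcov : ∀ (c : ℤ) (F : X → ℂ), ∫ x, F (T c x) ∂μ = ∫ x, F x ∂μ := by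
    intro c F
    let e : X ≃ᵐ X :=
      { toFun := T c
        invFun := T (-c)
        left_inv := fun x => by rw [hTT, neg_add_cancel, hT0, id_eq]
        right_inv := fun x => by rw [hTT, add_neg_cancel, hT0, id_eq]
        measurable_toFun := (hT c).measurable
        measurable_invFun := (hT (-c)).measurable }
    exact (hT c).integral_comp e.measurableEmbedding F
  -- basic boundedness/measurability toolkit
  have hfmc : ∀ (j : Fin ℓ) (c : ℤ), AEStronglyMeasurable (fun x => f j (T c x)) μ :=
    fun j c => (hfL j).1.comp_quasiMeasurePreserving (hT c).quasiMeasurePreserving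
  have hfbc : ∀ (j : Fin ℓ) (c : ℤ), ∀ᵐ x ∂μ, ‖f j (T c x)‖ ≤ 1 :=
    fun j c => (hT c).quasiMeasurePreserving.ae (hf1 j)
  have hcomp : ∀ (w : X → ℂ) (c : ℤ), AEStronglyMeasurable w μ →
      AEStronglyMeasurable (fun x => w (T c x)) μ :=
    fun w c hw => hw.comp_quasiMeasurePreserving (hT c).quasiMeasurePreserving
  have hcompb : ∀ (w : X → ℂ) (c : ℤ), (∀ᵐ x ∂μ, ‖w x‖ ≤ 1) →
      (∀ᵐ x ∂μ, ‖w (T c x)‖ ≤ 1) :=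
    fun w c hw => (hT c).quasiMeasurePreserving.ae hw
  have hintb : ∀ (w : X → ℂ), AEStronglyMeasurable w μ → (∀ᵐ x ∂μ, ‖w x‖ ≤ 1) →
      Integrable w μ :=
    fun w hw hb => (memLp_top_of_bound hw 1 hb).integrable le_top
  -- averages: measurability and bound
  have havg : ∀ (N : ℕ) (w : ℕ → X → ℂ),
      (∀ n, AEStronglyMeasurable (w n) μ) → (∀ n, ∀ᵐ x ∂μ, ‖w n x‖ ≤ 1) →
      (AEStronglyMeasurable (fun x => (N : ℂ)⁻¹ * ∑ n ∈ Finset.Icc 1 N, w n x) μ ∧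
       (∀ᵐ x ∂μ, ‖(N : ℂ)⁻¹ * ∑ n ∈ Finset.Icc 1 N, w n x‖ ≤ 1)) := by
    intro N w hm hb
    constructor
    · exact (Finset.aestronglyMeasurable_fun_sum _ (fun n _ => hm n)).const_mul _
    · have hball : ∀ᵐ x ∂μ, ∀ n, ‖w n x‖ ≤ 1 := ae_all_iff.2 hb
      filter_upwards [hball] with x hx
      calc ‖(N : ℂ)⁻¹ * ∑ n ∈ Finset.Icc 1 N, w n x‖
          = (N : ℝ)⁻¹ * ‖∑ n ∈ Finset.Icc 1 N, w n x‖ := by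
            rw [norm_mul, norm_inv, Complex.norm_natCast]
        _ ≤ (N : ℝ)⁻¹ * ∑ n ∈ Finset.Icc 1 N, ‖w n x‖ :=
            mul_le_mul_of_nonneg_left (norm_sum_le _ _) (by positivity)
        _ ≤ (N : ℝ)⁻¹ * ∑ n ∈ Finset.Icc 1 N, (1 : ℝ) :=
            mul_le_mul_of_nonneg_left
              (Finset.sum_le_sum (fun n _ => hx n)) (by positivity)
        _ ≤ 1 := by
            rcases Nat.eq_zero_or_pos N with h | h
            · simp [h]
            · rw [Finset.sum_const, Nat.card_Icc]
              simp only [nsmul_eq_mul, mul_one, Nat.add_sub_cancel]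
              rw [inv_mul_cancel₀ (by exact_mod_cast h.ne')]
  -- the three averaging operators
  set A : ℕ → X → ℂ := fun N x =>
    (N : ℂ)⁻¹ * ∑ n ∈ Finset.Icc 1 N, ∏ j, f j (T (a j n) x) with hAdef
  set D : ℕ → (X → ℂ) → X → ℂ := fun N g x =>
    (N : ℂ)⁻¹ * ∑ n ∈ Finset.Icc 1 N, g (T (-(a m n)) x) *
      ∏ j ∈ Finset.univ.erase m, conj (f j (T (a j n - a m n) x)) with hDdef
  set Bb : ℕ → (X → ℂ) → X → ℂ := fun N φ x =>
    (N : ℂ)⁻¹ * ∑ n ∈ Finset.Icc 1 N, φ (T (a m n) x) *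
      ∏ j ∈ Finset.univ.erase m, f j (T (a j n) x) with hBdef
  -- properties of A
  have hAprop : ∀ N, AEStronglyMeasurable (A N) μ ∧ (∀ᵐ x ∂μ, ‖A N x‖ ≤ 1) := by
    intro N
    refine havg N _ (fun n => Finset.aestronglyMeasurable_fun_prod _ (fun j _ => hfmc j _)) ?_
    intro n
    have hj : ∀ᵐ x ∂μ, ∀ j : Fin ℓ, ‖f j (T (a j n) x)‖ ≤ 1 :=
      ae_all_iff.2 (fun j => hfbc j (a j n))
    filter_upwards [hj] with x hx
    rw [norm_prod]
    exact Finset.prod_le_one (fun j _ => norm_nonneg _) (fun j _ => hx j)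
  -- properties of D N g
  have hDprop : ∀ (N : ℕ) (g : X → ℂ), AEStronglyMeasurable g μ → (∀ᵐ x ∂μ, ‖g x‖ ≤ 1) →
      AEStronglyMeasurable (D N g) μ ∧ (∀ᵐ x ∂μ, ‖D N g x‖ ≤ 1) := by
    intro N g hgm hgb
    refine havg N _ (fun n => ?_) (fun n => ?_)
    · exact (hcomp g _ hgm).mul
        (Finset.aestronglyMeasurable_fun_prod _
          (fun j _ => Complex.continuous_conj.comp_aestronglyMeasurable (hfmc j _)))
    · have h1 := hcompb g (-(a m n)) hgb
      have h2 : ∀ᵐ x ∂μ, ∀ j : Fin ℓ, ‖f j (T (a j n - a m n) x)‖ ≤ 1 :=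
        ae_all_iff.2 (fun j => hfbc j _)
      filter_upwards [h1, h2] with x hx1 hx2
      rw [norm_mul, norm_prod]
      refine mul_le_one₀ hx1 (by positivity) ?_
      refine Finset.prod_le_one (fun j _ => norm_nonneg _) (fun j _ => ?_)
      rw [RCLike.norm_conj]
      exact hx2 j
  -- properties of Bb N φ
  have hBprop : ∀ (N : ℕ) (φ : X → ℂ), AEStronglyMeasurable φ μ → (∀ᵐ x ∂μ, ‖φ x‖ ≤ 1) →
      AEStronglyMeasurable (Bb N φ) μ ∧ (∀ᵐ x ∂μ, ‖Bb N φ x‖ ≤ 1) := by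
    intro N φ hφm hφb
    refine havg N _ (fun n => ?_) (fun n => ?_)
    · exact (hcomp φ _ hφm).mul
        (Finset.aestronglyMeasurable_fun_prod _ (fun j _ => hfmc j _))
    · have h1 := hcompb φ (a m n) hφb
      have h2 : ∀ᵐ x ∂μ, ∀ j : Fin ℓ, ‖f j (T (a j n) x)‖ ≤ 1 :=
        ae_all_iff.2 (fun j => hfbc j _)
      filter_upwards [h1, h2] with x hx1 hx2
      rw [norm_mul, norm_prod]
      refine mul_le_one₀ hx1 (by positivity) ?_
      exact Finset.prod_le_one (fun j _ => norm_nonneg _) (fun j _ => hx2 j)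
  -- the adjoint identity
  have key : ∀ (N : ℕ) (φ g : X → ℂ), AEStronglyMeasurable φ μ → (∀ᵐ x ∂μ, ‖φ x‖ ≤ 1) →
      AEStronglyMeasurable g μ → (∀ᵐ x ∂μ, ‖g x‖ ≤ 1) →
      ∫ x, Bb N φ x * conj (g x) ∂μ = ∫ x, φ x * conj (D N g x) ∂μ := by
    intro N φ g hφm hφb hgm hgb
    have hterm : ∀ n ∈ Finset.Icc 1 N,
        ∫ x, (φ (T (a m n) x) * ∏ j ∈ Finset.univ.erase m, f j (T (a j n) x)) * conj (g x) ∂μ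
          = ∫ x, φ x * conj (g (T (-(a m n)) x) *
              ∏ j ∈ Finset.univ.erase m, conj (f j (T (a j n - a m n) x))) ∂μ := by
      intro n _
      rw [← hcov (-(a m n)) (fun y => (φ (T (a m n) y) *
        ∏ j ∈ Finset.univ.erase m, f j (T (a j n) y)) * conj (g y))]
      refine integral_congr_ae (Eventually.of_forall (fun x => ?_))
      simp only [map_mul, map_prod, Complex.conj_conj, sub_eq_add_neg, hTT,
        add_neg_cancel, hT0, id_eq]
      ring
    have hintL : ∀ n ∈ Finset.Icc 1 N, Integrable (fun x =>
        (φ (T (a m n) x) * ∏ j ∈ Finset.univ.erase m, f j (T (a j n) x)) * conj (g x)) μ := by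
      intro n _
      refine hintb _ ?_ ?_
      · exact (((hcomp φ _ hφm).mul
          (Finset.aestronglyMeasurable_fun_prod _ (fun j _ => hfmc j _))).mul
          (Complex.continuous_conj.comp_aestronglyMeasurable hgm))
      · have h1 := hcompb φ (a m n) hφb
        have h2 : ∀ᵐ x ∂μ, ∀ j : Fin ℓ, ‖f j (T (a j n) x)‖ ≤ 1 :=
          ae_all_iff.2 (fun j => hfbc j _)
        filter_upwards [h1, h2, hgb] with x hx1 hx2 hx3
        rw [norm_mul, norm_mul, norm_prod, RCLike.norm_conj]
        refine mul_le_one₀ (mul_le_one₀ hx1 (by positivity) ?_) (by positivity) hx3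
        exact Finset.prod_le_one (fun j _ => norm_nonneg _) (fun j _ => hx2 j)
    have hintR : ∀ n ∈ Finset.Icc 1 N, Integrable (fun x =>
        φ x * conj (g (T (-(a m n)) x) *
          ∏ j ∈ Finset.univ.erase m, conj (f j (T (a j n - a m n) x)))) μ := by
      intro n _
      refine hintb _ ?_ ?_
      · refine hφm.mul (Complex.continuous_conj.comp_aestronglyMeasurable ?_)
        exact (hcomp g _ hgm).mul
          (Finset.aestronglyMeasurable_fun_prod _
            (fun j _ => Complex.continuous_conj.comp_aestronglyMeasurable (hfmc j _)))
      · have h1 := hcompb g (-(a m n)) hgb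
        have h2 : ∀ᵐ x ∂μ, ∀ j : Fin ℓ, ‖f j (T (a j n - a m n) x)‖ ≤ 1 :=
          ae_all_iff.2 (fun j => hfbc j _)
        filter_upwards [h1, h2, hφb] with x hx1 hx2 hx3
        rw [norm_mul, RCLike.norm_conj, norm_mul, norm_prod]
        refine mul_le_one₀ hx3 (by positivity) ?_
        refine mul_le_one₀ hx1 (by positivity) ?_
        refine Finset.prod_le_one (fun j _ => norm_nonneg _) (fun j _ => ?_)
        rw [RCLike.norm_conj]; exact hx2 j
    have hL : ∫ x, Bb N φ x * conj (g x) ∂μ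
        = (N : ℂ)⁻¹ * ∑ n ∈ Finset.Icc 1 N,
            ∫ x, (φ (T (a m n) x) * ∏ j ∈ Finset.univ.erase m, f j (T (a j n) x))
              * conj (g x) ∂μ := by
      rw [integral_congr_ae (Eventually.of_forall (fun x => show Bb N φ x * conj (g x)
          = (N : ℂ)⁻¹ * ∑ n ∈ Finset.Icc 1 N,
            (φ (T (a m n) x) * ∏ j ∈ Finset.univ.erase m, f j (T (a j n) x)) * conj (g x) by
        simp only [hBdef]
        rw [mul_assoc, Finset.sum_mul]))]
      rw [integral_const_mul, integral_finset_sum _ hintL]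
    have hR : ∫ x, φ x * conj (D N g x) ∂μ
        = (N : ℂ)⁻¹ * ∑ n ∈ Finset.Icc 1 N,
            ∫ x, φ x * conj (g (T (-(a m n)) x) *
              ∏ j ∈ Finset.univ.erase m, conj (f j (T (a j n - a m n) x))) ∂μ := by
      rw [integral_congr_ae (Eventually.of_forall (fun x => show φ x * conj (D N g x)
          = (N : ℂ)⁻¹ * ∑ n ∈ Finset.Icc 1 N,
            φ x * conj (g (T (-(a m n)) x) *
              ∏ j ∈ Finset.univ.erase m, conj (f j (T (a j n - a m n) x))) by
        simp only [hDdef]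
        rw [map_mul, map_sum, map_inv₀, map_natCast, mul_left_comm, Finset.mul_sum]))]
      rw [integral_const_mul, integral_finset_sum _ hintR]
    rw [hL, hR]
    congr 1
    exact Finset.sum_congr rfl hterm
  -- bridge between integrals and L² inner products
  have hbridge : ∀ (p q : X → ℂ) (hp : MemLp p 2 μ) (hq : MemLp q 2 μ),
      ∫ x, p x * conj (q x) ∂μ = ⟪hq.toLp q, hp.toLp p⟫_ℂ := by
    intro p q hp hq
    rw [L2.inner_def]
    refine integral_congr_ae ?_
    filter_upwards [MemLp.coeFn_toLp hp, MemLp.coeFn_toLp hq] with x h1 h2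
    rw [RCLike.inner_apply, h1, h2, mul_comm]
  have hofReal : ∀ (w : X → ℝ), ∫ x, ((w x : ℝ) : ℂ) ∂μ = ((∫ x, w x ∂μ : ℝ) : ℂ) :=
    fun w => integral_ofReal
  have hmem2 : ∀ (w : X → ℂ), AEStronglyMeasurable w μ → (∀ᵐ x ∂μ, ‖w x‖ ≤ 1) →
      MemLp w 2 μ :=
    fun w hw hb => (memLp_top_of_bound hw 1 hb).mono_exponent le_top
  have hnorm_le : ∀ (w : X → ℂ) (hw : MemLp w 2 μ), (∀ᵐ x ∂μ, ‖w x‖ ≤ 1) →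
      ‖hw.toLp w‖ ≤ 1 := by
    intro w hw hb
    rw [Lp.norm_toLp]
    have h1 : eLpNorm w 2 μ ≤ 1 := by
      have h2 := eLpNorm_le_of_ae_bound (p := (2 : ℝ≥0∞)) (μ := μ) hb
      simpa [measure_univ] using h2
    exact le_trans (ENNReal.toReal_mono ENNReal.one_ne_top h1) (by simp)
  have hL2norm : ∀ (p : X → ℂ) (hp : MemLp p 2 μ),
      ‖hp.toLp p‖ ^ 2 = ∫ x, ‖p x‖ ^ 2 ∂μ := by
    intro p hp
    have h1 : ⟪hp.toLp p, hp.toLp p⟫_ℂ = ∫ x, p x * conj (p x) ∂μ := (hbridge p p hp hp).symm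
    have h2 : ∫ x, p x * conj (p x) ∂μ = ((∫ x, ‖p x‖ ^ 2 ∂μ : ℝ) : ℂ) := by
      rw [← hofReal]
      refine integral_congr_ae (Eventually.of_forall (fun x => ?_))
      show p x * conj (p x) = ((‖p x‖ ^ 2 : ℝ) : ℂ)
      rw [Complex.mul_conj']
      norm_cast
    have h3 : RCLike.re ⟪hp.toLp p, hp.toLp p⟫_ℂ = ‖hp.toLp p‖ ^ 2 :=
      inner_self_eq_norm_sq _
    rw [← h3, h1, h2, RCLike.re_to_complex, Complex.ofReal_re]
  -- extraction of the subsequence on which the averages are large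
  have hbig' : 0 < limsup (fun N => ∫ x, ‖A N x‖ ^ 2 ∂μ) atTop := hbig
  have hbddge : IsBoundedUnder (· ≥ ·) atTop (fun N => ∫ x, ‖A N x‖ ^ 2 ∂μ) :=
    isBoundedUnder_of ⟨0, fun N => integral_nonneg (fun x => by positivity)⟩
  set c0 : ℝ := limsup (fun N => ∫ x, ‖A N x‖ ^ 2 ∂μ) atTop / 2 with hc0def
  have hc0pos : 0 < c0 := half_pos hbig'
  have hfreq : ∃ᶠ N in atTop, c0 < ∫ x, ‖A N x‖ ^ 2 ∂μ :=
    frequently_lt_of_lt_limsup hbddge.isCoboundedUnder_le (half_lt_self hbig')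
  obtain ⟨Nk, hNkm, hNkc⟩ := extraction_of_frequently_atTop hfreq
  -- the dual sequence in L²
  have hA2 : ∀ N, MemLp (A N) 2 μ := fun N => hmem2 _ (hAprop N).1 (hAprop N).2
  have hfm2 : MemLp (f m) 2 μ := (hfL m).mono_exponent le_top
  have hDm : ∀ k, AEStronglyMeasurable (D (Nk k) (A (Nk k))) μ :=
    fun k => (hDprop _ _ (hAprop _).1 (hAprop _).2).1
  have hDb : ∀ k, ∀ᵐ x ∂μ, ‖D (Nk k) (A (Nk k)) x‖ ≤ 1 :=
    fun k => (hDprop _ _ (hAprop _).1 (hAprop _).2).2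
  have hD2 : ∀ k, MemLp (D (Nk k) (A (Nk k))) 2 μ := fun k => hmem2 _ (hDm k) (hDb k)
  obtain ⟨ψ, FT, hψ, hconv⟩ := weak_cluster (fun k => (hD2 k).toLp _)
    (fun k => hnorm_le _ (hD2 k) (hDb k))
  -- the inner products with f m are exactly the large averages
  have hinner_fm : ∀ k, ((∫ x, ‖A (Nk k) x‖ ^ 2 ∂μ : ℝ) : ℂ)
      = ⟪(hD2 k).toLp _, hfm2.toLp (f m)⟫_ℂ := by
    intro k
    have h1 : ((∫ x, ‖A (Nk k) x‖ ^ 2 ∂μ : ℝ) : ℂ)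
        = ∫ x, A (Nk k) x * conj (A (Nk k) x) ∂μ := by
      rw [← hofReal]
      refine integral_congr_ae (Eventually.of_forall (fun x => ?_))
      show ((‖A (Nk k) x‖ ^ 2 : ℝ) : ℂ) = A (Nk k) x * conj (A (Nk k) x)
      rw [Complex.mul_conj']
      norm_cast
    have h2 : ∫ x, A (Nk k) x * conj (A (Nk k) x) ∂μ
        = ∫ x, Bb (Nk k) (f m) x * conj (A (Nk k) x) ∂μ := by
      refine integral_congr_ae (Eventually.of_forall (fun x => ?_))
      have h2a : A (Nk k) x = Bb (Nk k) (f m) x := by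
        simp only [hAdef, hBdef]
        congr 1
        refine Finset.sum_congr rfl (fun n _ => ?_)
        exact (Finset.mul_prod_erase Finset.univ (fun j => f j (T (a j n) x))
          (Finset.mem_univ m)).symm
      exact congrArg (fun z => z * conj (A (Nk k) x)) h2a
    have h3 := key (Nk k) (f m) (A (Nk k)) (hfL m).1 (hf1 m) (hAprop _).1 (hAprop _).2
    have h4 := hbridge (f m) (D (Nk k) (A (Nk k))) hfm2 (hD2 k)
    rw [h1, h2, h3, h4]
  -- positivity of the weak limit against f m
  have hre : c0 ≤ (⟪FT, hfm2.toLp (f m)⟫_ℂ).re := by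
    have h5 := hconv (hfm2.toLp (f m))
    have h6 : Tendsto (fun k => (⟪(hD2 (ψ k)).toLp _, hfm2.toLp (f m)⟫_ℂ).re) atTop
        (nhds (⟪FT, hfm2.toLp (f m)⟫_ℂ).re) := (Complex.continuous_re.tendsto _).comp h5
    refine ge_of_tendsto h6 (Eventually.of_forall (fun k => ?_))
    rw [← hinner_fm (ψ k), Complex.ofReal_re]
    exact (hNkc (ψ k)).le
  have hFTpos : 0 < ‖FT‖ := by
    rcases eq_or_ne FT 0 with h | h
    · exfalso
      rw [h] at hre
      simp only [inner_zero_left, Complex.zero_re] at hre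
      linarith
    · exact norm_pos_iff.2 h
  -- the weak limit is a.e. bounded by 1
  have hFTsm : StronglyMeasurable (⇑FT) := Lp.stronglyMeasurable FT
  set As : Set X := {x | 1 < ‖FT x‖} with hAsdef
  have hAsm : MeasurableSet As := measurableSet_lt measurable_const hFTsm.measurable.norm
  set q : X → ℂ := As.indicator (fun x => FT x / (‖FT x‖ : ℂ)) with hqdef
  have hqm : AEStronglyMeasurable q μ := by
    refine StronglyMeasurable.aestronglyMeasurable ?_
    refine StronglyMeasurable.indicator ?_ hAsm
    exact (hFTsm.measurable.div
      (Complex.measurable_ofReal.comp hFTsm.measurable.norm)).stronglyMeasurable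
  have hqb : ∀ x, ‖q x‖ ≤ 1 := by
    intro x
    rw [hqdef]
    by_cases hx : x ∈ As
    · rw [Set.indicator_of_mem hx, norm_div, Complex.norm_real, norm_norm]
      exact div_self_le_one _
    · rw [Set.indicator_of_notMem hx]; simp
  have hq2 : MemLp q 2 μ := hmem2 q hqm (Eventually.of_forall hqb)
  have hub : ∀ k, ‖⟪(hD2 k).toLp _, hq2.toLp q⟫_ℂ‖ ≤ (μ As).toReal := by
    intro k
    rw [← hbridge q _ hq2 (hD2 k)]
    refine le_trans (norm_integral_le_of_norm_le
      ((integrable_const (1 : ℝ)).indicator hAsm) ?_) ?_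
    · filter_upwards [hDb k] with x hx
      by_cases hxA : x ∈ As
      · simp only [Set.indicator_of_mem hxA, norm_mul, RCLike.norm_conj]
        exact mul_le_one₀ (hqb x) (norm_nonneg _) hx
      · simp [hqdef, Set.indicator_of_notMem hxA]
    · rw [integral_indicator_const (1 : ℝ) hAsm]
      simp [measureReal_def]
  have hubFT : ‖⟪FT, hq2.toLp q⟫_ℂ‖ ≤ (μ As).toReal :=
    le_of_tendsto (hconv (hq2.toLp q)).norm (Eventually.of_forall (fun k => hub (ψ k)))
  have hval : ⟪FT, hq2.toLp q⟫_ℂ = ((∫ x, As.indicator (fun x => ‖FT x‖) x ∂μ : ℝ) : ℂ) := by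
    calc ⟪FT, hq2.toLp q⟫_ℂ = ⟪(Lp.memLp FT).toLp ⇑FT, hq2.toLp q⟫_ℂ := by
          rw [Lp.toLp_coeFn]
      _ = ∫ x, q x * conj (FT x) ∂μ := (hbridge q ⇑FT hq2 (Lp.memLp FT)).symm
      _ = ∫ x, ((As.indicator (fun x => ‖FT x‖) x : ℝ) : ℂ) ∂μ := by
          refine integral_congr_ae (Eventually.of_forall (fun x => ?_))
          show As.indicator (fun y => FT y / ((‖FT y‖ : ℝ) : ℂ)) x * conj (FT x)
            = ((As.indicator (fun y => ‖FT y‖) x : ℝ) : ℂ)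
          by_cases hxA : x ∈ As
          · rw [Set.indicator_of_mem hxA, Set.indicator_of_mem hxA]
            have h1x : (1 : ℝ) < ‖FT x‖ := hxA
            have hne : ((‖FT x‖ : ℝ) : ℂ) ≠ 0 := by
              simp only [ne_eq, Complex.ofReal_eq_zero]
              nlinarith
            rw [div_mul_eq_mul_div, Complex.mul_conj']
            rw [sq, mul_div_assoc, div_self hne, mul_one]
          · rw [Set.indicator_of_notMem hxA, Set.indicator_of_notMem hxA]
            simp
      _ = ((∫ x, As.indicator (fun x => ‖FT x‖) x ∂μ : ℝ) : ℂ) := hofReal _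
  have hind_int : Integrable (As.indicator (fun x => ‖FT x‖)) μ := by
    have h1 : Integrable (⇑FT) μ :=
      memLp_one_iff_integrable.1
        ((Lp.memLp FT).mono_exponent (by norm_num : (1 : ℝ≥0∞) ≤ 2))
    exact h1.norm.indicator hAsm
  have hkey2 : ∫ x, As.indicator (fun x => ‖FT x‖) x ∂μ ≤ (μ As).toReal := by
    have h1 := hubFT
    rw [hval, Complex.norm_real, Real.norm_eq_abs,
      abs_of_nonneg (integral_nonneg (fun x => by
        by_cases hxA : x ∈ As
        · simp only [Pi.zero_apply, Set.indicator_of_mem hxA]; positivity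
        · simp [Set.indicator_of_notMem hxA]))] at h1
    exact h1
  have hzero : ∀ᵐ x ∂μ, As.indicator (fun y => ‖FT y‖ - 1) x = 0 := by
    have hsub : ∀ x, As.indicator (fun y => ‖FT y‖ - 1) x
        = As.indicator (fun y => ‖FT y‖) x - As.indicator (fun _ => (1 : ℝ)) x := by
      intro x
      by_cases hxA : x ∈ As <;>
        simp [Set.indicator_of_mem, Set.indicator_of_notMem, hxA]
    have hint2 : Integrable (As.indicator (fun y => ‖FT y‖ - 1)) μ := by
      rw [show As.indicator (fun y => ‖FT y‖ - 1)
        = fun x => As.indicator (fun y => ‖FT y‖) x - As.indicator (fun _ => (1 : ℝ)) x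
        from funext hsub]
      exact hind_int.sub ((integrable_const 1).indicator hAsm)
    have hnn : 0 ≤ᵐ[μ] As.indicator (fun y => ‖FT y‖ - 1) := by
      refine Eventually.of_forall (fun x => ?_)
      by_cases hxA : x ∈ As
      · simp only [Pi.zero_apply, Set.indicator_of_mem hxA]
        have h1x : (1 : ℝ) < ‖FT x‖ := hxA
        linarith
      · simp [Set.indicator_of_notMem hxA]
    have hint3 : ∫ x, As.indicator (fun y => ‖FT y‖ - 1) x ∂μ ≤ 0 := by
      rw [integral_congr_ae (Eventually.of_forall hsub),
        integral_sub hind_int ((integrable_const 1).indicator hAsm),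
        integral_indicator_const (1 : ℝ) hAsm]
      simp only [smul_eq_mul, mul_one, measureReal_def]
      linarith [hkey2]
    have h0 : ∫ x, As.indicator (fun y => ‖FT y‖ - 1) x ∂μ = 0 :=
      le_antisymm hint3 (integral_nonneg_of_ae hnn)
    exact (integral_eq_zero_iff_of_nonneg_ae hnn hint2).1 h0
  have hft1 : ∀ᵐ x ∂μ, ‖FT x‖ ≤ 1 := by
    filter_upwards [hzero] with x hx
    by_contra hcon
    push_neg at hcon
    have hxA : x ∈ As := hcon
    rw [Set.indicator_of_mem hxA] at hx
    have h1x : (1 : ℝ) < ‖FT x‖ := hxA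
    linarith [hx.le, hx.ge]
  have hfttop : MemLp (⇑FT) ⊤ μ := memLp_top_of_bound (Lp.aestronglyMeasurable FT) 1 hft1
  -- final assembly
  refine ⟨Nk ∘ ψ, fun k => A (Nk (ψ k)), ⇑FT, ?_, ?_, hfttop, ?_, ?_⟩
  · exact hNkm.tendsto_atTop.comp hψ.tendsto_atTop
  · intro k
    exact ⟨memLp_top_of_bound (hAprop _).1 1 (hAprop _).2, (hAprop _).2⟩
  · -- weak convergence statement
    intro h hh
    have e1 : ∀ k, ∫ x, D (Nk (ψ k)) (A (Nk (ψ k))) x * conj (h x) ∂μ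
        = ⟪hh.toLp h, (hD2 (ψ k)).toLp _⟫_ℂ := fun k => hbridge _ h (hD2 (ψ k)) hh
    have e2 : ∫ x, FT x * conj (h x) ∂μ = ⟪hh.toLp h, FT⟫_ℂ := by
      have h9 := hbridge (⇑FT) h (Lp.memLp FT) hh
      rwa [Lp.toLp_coeFn] at h9
    have e3 : Tendsto (fun k => ⟪hh.toLp h, (hD2 (ψ k)).toLp _⟫_ℂ) atTop
        (nhds ⟪hh.toLp h, FT⟫_ℂ) := by
      have h4 := (Complex.continuous_conj.tendsto _).comp (hconv (hh.toLp h))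
      have h5 : (⇑(starRingEnd ℂ) ∘ fun k => ⟪(hD2 (ψ k)).toLp _, hh.toLp h⟫_ℂ)
          = fun k => ⟪hh.toLp h, (hD2 (ψ k)).toLp _⟫_ℂ := by
        funext k
        simp [Function.comp, inner_conj_symm]
      rw [h5, inner_conj_symm] at h4
      exact h4
    have egoal : Tendsto (fun k => ∫ x, D (Nk (ψ k)) (A (Nk (ψ k))) x * conj (h x) ∂μ)
        atTop (nhds (∫ x, FT x * conj (h x) ∂μ)) := by
      rw [funext e1, e2]
      exact e3
    exact egoal
  · -- positivity of the limsup for the modified averages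
    have hBm : ∀ N, AEStronglyMeasurable (Bb N ⇑FT) μ :=
      fun N => (hBprop N _ (Lp.aestronglyMeasurable FT) hft1).1
    have hBbd : ∀ N, ∀ᵐ x ∂μ, ‖Bb N ⇑FT x‖ ≤ 1 :=
      fun N => (hBprop N _ (Lp.aestronglyMeasurable FT) hft1).2
    have hB2 : ∀ N, MemLp (Bb N ⇑FT) 2 μ := fun N => hmem2 _ (hBm N) (hBbd N)
    have hvb : ∀ N, ∫ x, ‖Bb N ⇑FT x‖ ^ 2 ∂μ ≤ 1 := by
      intro N
      rw [← hL2norm _ (hB2 N)]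
      have h1 := hnorm_le _ (hB2 N) (hBbd N)
      nlinarith [norm_nonneg ((hB2 N).toLp (Bb N ⇑FT))]
    have hCS : ∀ k, ‖⟪(hD2 k).toLp _, FT⟫_ℂ‖ ^ 2 ≤ ∫ x, ‖Bb (Nk k) ⇑FT x‖ ^ 2 ∂μ := by
      intro k
      have h10 := hbridge (Bb (Nk k) ⇑FT) (A (Nk k)) (hB2 (Nk k)) (hA2 (Nk k))
      have h11 := key (Nk k) (⇑FT) (A (Nk k)) (Lp.aestronglyMeasurable FT) hft1
        (hAprop _).1 (hAprop _).2
      have h12 := hbridge (⇑FT) (D (Nk k) (A (Nk k))) (Lp.memLp FT) (hD2 k)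
      rw [Lp.toLp_coeFn] at h12
      have h13 : ‖⟪(hD2 k).toLp _, FT⟫_ℂ‖ ≤ ‖(hB2 (Nk k)).toLp (Bb (Nk k) ⇑FT)‖ := by
        rw [← h12, ← h11, h10]
        calc ‖⟪(hA2 (Nk k)).toLp _, (hB2 (Nk k)).toLp _⟫_ℂ‖
            ≤ ‖(hA2 (Nk k)).toLp (A (Nk k))‖ * ‖(hB2 (Nk k)).toLp (Bb (Nk k) ⇑FT)‖ :=
              norm_inner_le_norm _ _
          _ ≤ 1 * ‖(hB2 (Nk k)).toLp (Bb (Nk k) ⇑FT)‖ := by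
              have := hnorm_le _ (hA2 (Nk k)) (hAprop (Nk k)).2
              gcongr
          _ = ‖(hB2 (Nk k)).toLp (Bb (Nk k) ⇑FT)‖ := one_mul _
      calc ‖⟪(hD2 k).toLp _, FT⟫_ℂ‖ ^ 2
          ≤ ‖(hB2 (Nk k)).toLp (Bb (Nk k) ⇑FT)‖ ^ 2 :=
            pow_le_pow_left₀ (norm_nonneg _) h13 2
        _ = ∫ x, ‖Bb (Nk k) ⇑FT x‖ ^ 2 ∂μ := hL2norm _ (hB2 (Nk k))
    have h14 := hconv FT
    have hsq : (⟪FT, FT⟫_ℂ).re = ‖FT‖ ^ 2 := by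
      have h22 := inner_self_eq_norm_sq (𝕜 := ℂ) FT
      rwa [RCLike.re_to_complex] at h22
    have h17 : ‖FT‖ ^ 2 / 2 < ‖⟪FT, FT⟫_ℂ‖ := by
      have h17a : ‖FT‖ ^ 2 ≤ ‖⟪FT, FT⟫_ℂ‖ := by
        rw [← hsq]
        exact (le_abs_self _).trans (Complex.abs_re_le_norm _)
      have h17b : (0 : ℝ) < ‖FT‖ ^ 2 := by positivity
      linarith [half_lt_self h17b]
    have h18 : ∀ᶠ k in atTop, ‖FT‖ ^ 2 / 2 < ‖⟪(hD2 (ψ k)).toLp _, FT⟫_ℂ‖ :=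
      h14.norm.eventually (eventually_gt_nhds h17)
    have h19 : ∀ᶠ k in atTop,
        (‖FT‖ ^ 2 / 2) ^ 2 ≤ ∫ x, ‖Bb (Nk (ψ k)) ⇑FT x‖ ^ 2 ∂μ := by
      filter_upwards [h18] with k hk
      calc (‖FT‖ ^ 2 / 2) ^ 2 ≤ ‖⟪(hD2 (ψ k)).toLp _, FT⟫_ℂ‖ ^ 2 :=
            pow_le_pow_left₀ (by positivity) hk.le 2
        _ ≤ ∫ x, ‖Bb (Nk (ψ k)) ⇑FT x‖ ^ 2 ∂μ := hCS (ψ k)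
    have h20 : ∃ᶠ N in atTop, (‖FT‖ ^ 2 / 2) ^ 2 ≤ ∫ x, ‖Bb N ⇑FT x‖ ^ 2 ∂μ :=
      (hNkm.tendsto_atTop.comp hψ.tendsto_atTop).frequently h19.frequently
    have h21 : (‖FT‖ ^ 2 / 2) ^ 2
        ≤ limsup (fun N => ∫ x, ‖Bb N ⇑FT x‖ ^ 2 ∂μ) atTop :=
      le_limsup_of_frequently_le h20 (isBoundedUnder_of ⟨1, fun N => hvb N⟩)
    have hfin : (0 : ℝ) < limsup (fun N => ∫ x, ‖Bb N ⇑FT x‖ ^ 2 ∂μ) atTop :=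
      lt_of_lt_of_le (by positivity) h21
    exact hfin
end
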